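/- arXiv:1701.08188 — 9 statements merged into one kernel-verified Lean document; each statement's English description precedes it below -/
import Mathlib

section
/- Let x, y ∈ ℂ with y ≠ 1 and 1 − y + xy ≠ 0. Then T_m(T_e(x,y)) and T_e(T_{e+m}(T_m(x,y))) are both defined and equal, with common value (x/(1 − y + xy), y(1 − x)). This is the point-map form of the Kontsevich–Soibelman pentagon wall-crossing identity K_{γ_e} K_{γ_m} = K_{γ_m} K_{γ_e+γ_m} K_{γ_e} used at the wall of marginal stability (wall-crossing of type I). -/
open Complex

/-- Kontsevich–Soibelman point map `T_e(x,y) = (x, y(1-x))`. -/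
noncomputable def Te (p : ℂ × ℂ) : ℂ × ℂ := (p.1, p.2 * (1 - p.1))

/-- Kontsevich–Soibelman point map `T_m(x,y) = (x(1-y)⁻¹, y)`. -/
noncomputable def Tm (p : ℂ × ℂ) : ℂ × ℂ := (p.1 / (1 - p.2), p.2)

/-- Kontsevich–Soibelman point map `T_{e+m}(x,y) = (x(1+xy)⁻¹, y(1+xy))`. -/
noncomputable def Tem (p : ℂ × ℂ) : ℂ × ℂ := (p.1 / (1 + p.1 * p.2), p.2 * (1 + p.1 * p.2))

/-- Point-map form of the pentagon wall-crossing identity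
`K_{γ_e} K_{γ_m} = K_{γ_m} K_{γ_e+γ_m} K_{γ_e}` (type I): for `y ≠ 1` and `1 - y + xy ≠ 0`,
both `T_m(T_e(x,y))` and `T_e(T_{e+m}(T_m(x,y)))` are defined (all intermediate denominators
are nonzero) and equal, with common value `(x/(1 - y + xy), y(1-x))`. -/
theorem pentagon_wall_crossing_type_I (x y : ℂ) (hy : y ≠ 1) (h : 1 - y + x * y ≠ 0) :
    (1 - (Te (x, y)).2 ≠ 0) ∧
    (1 + (Tm (x, y)).1 * (Tm (x, y)).2 ≠ 0) ∧
    Tm (Te (x, y)) = (x / (1 - y + x * y), y * (1 - x)) ∧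
    Te (Tem (Tm (x, y))) = (x / (1 - y + x * y), y * (1 - x)) := by
  have h1 : (1 : ℂ) - y ≠ 0 := sub_ne_zero.mpr fun e => hy e.symm
  have h2 : (1 : ℂ) - y * (1 - x) ≠ 0 := by
    intro e; apply h; rw [← e]; ring
  have h3 : (1 : ℂ) + x / (1 - y) * y ≠ 0 := by
    have : (1 : ℂ) + x / (1 - y) * y = (1 - y + x * y) / (1 - y) := by
      field_simp
    rw [this]
    exact div_ne_zero h h1
  refine ⟨by simpa [Te] using h2, by simpa [Tm] using h3, ?_, ?_⟩
  · simp only [Te, Tm, Prod.mk.injEq]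
    refine ⟨?_, trivial⟩
    rw [div_eq_div_iff h2 h]; ring
  · simp only [Tm, Tem, Te, Prod.mk.injEq]
    constructor <;> · field_simp [show (1 : ℂ) - y + y * x ≠ 0 by rwa [mul_comm y x]]; try ring
end

section
/- Let x, y ∈ ℂ with x ≠ 0, x ≠ 1, y ≠ 1 and x + y ≠ 1. Then T_{−e}(T_m(x,y)) and T_m(T_{−e+m}(T_{−e}(x,y))) are both defined and equal, with common value (x/(1 − y), xy/(x + y − 1)). This is the point-map form of the second Kontsevich–Soibelman pentagon identity K_{−γ_e} K_{γ_m} = K_{γ_m} K_{−γ_e+γ_m} K_{−γ_e} (wall-crossing of type II). -/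
open Complex

/-- Kontsevich–Soibelman point map `T_{-e}(x,y) = (x, xy/(x-1))`. -/
noncomputable def Tme (p : ℂ × ℂ) : ℂ × ℂ := (p.1, p.1 * p.2 / (p.1 - 1))

/-- Kontsevich–Soibelman point map `T_{-e+m}(x,y) = (x²/(x+y), xy/(x+y))`. -/
noncomputable def Tmem (p : ℂ × ℂ) : ℂ × ℂ := (p.1 ^ 2 / (p.1 + p.2), p.1 * p.2 / (p.1 + p.2))

/-- Point-map form of the second pentagon identity
`K_{-γ_e} K_{γ_m} = K_{γ_m} K_{-γ_e+γ_m} K_{-γ_e}` (wall-crossing of type II): for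
`x ≠ 0`, `x ≠ 1`, `y ≠ 1` and `x + y ≠ 1`, both `T_{-e}(T_m(x,y))` and
`T_m(T_{-e+m}(T_{-e}(x,y)))` are defined (all intermediate denominators are nonzero)
and equal, with common value `(x/(1-y), xy/(x+y-1))`. -/
theorem pentagon_wall_crossing_type_II (x y : ℂ) (hx0 : x ≠ 0) (hx1 : x ≠ 1) (hy : y ≠ 1)
    (hxy : x + y ≠ 1) :
    ((Tm (x, y)).1 - 1 ≠ 0) ∧
    ((Tme (x, y)).1 + (Tme (x, y)).2 ≠ 0) ∧
    (1 - (Tmem (Tme (x, y))).2 ≠ 0) ∧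
    Tme (Tm (x, y)) = (x / (1 - y), x * y / (x + y - 1)) ∧
    Tm (Tmem (Tme (x, y))) = (x / (1 - y), x * y / (x + y - 1)) := by
  have h1y : (1:ℂ) - y ≠ 0 := sub_ne_zero.mpr (Ne.symm hy)
  have hx1' : x - 1 ≠ 0 := sub_ne_zero.mpr hx1
  have hs : x + y - 1 ≠ 0 := sub_ne_zero.mpr hxy
  have h1 : (Tm (x, y)).1 - 1 ≠ 0 := by
    simp only [Tm]
    field_simp
    intro h; exact hs (by linear_combination (div_eq_zero_iff.mp h).resolve_right h1y)
  have h2 : (Tme (x, y)).1 + (Tme (x, y)).2 ≠ 0 := by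
    simp only [Tme]
    field_simp
    intro h
    rcases mul_eq_zero.mp (show x * (x + y - 1) = 0 by linear_combination (div_eq_zero_iff.mp h).resolve_right hx1') with h' | h'
    · exact hx0 h'
    · exact hs h'
  have h3sum : x + x * y / (x - 1) = x * (x + y - 1) / (x - 1) := by
    field_simp; ring
  have h4 : Tmem (Tme (x, y)) = (x * (x - 1) / (x + y - 1), x * y / (x + y - 1)) := by
    simp only [Tmem, Tme]
    rw [h3sum]
    refine Prod.ext ?_ ?_ <;> simp only
    · field_simp
    · field_simp
  have h3 : (1 : ℂ) - (Tmem (Tme (x, y))).2 ≠ 0 := by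
    rw [h4]
    simp only
    rw [show (1:ℂ) - x * y / (x + y - 1) = (x - 1) * (1 - y) / (x + y - 1) by
      field_simp; ring]
    exact div_ne_zero (mul_ne_zero hx1' h1y) hs
  refine ⟨h1, h2, h3, ?_, ?_⟩
  · simp only [Tme, Tm]
    rw [show x / (1 - y) * y / (x / (1 - y) - 1) = x * y / (x + y - 1) by
      rw [show x / (1 - y) - 1 = (x + y - 1) / (1 - y) by field_simp; ring,
        div_mul_eq_mul_div, div_div_div_cancel_right₀ h1y]]
  · rw [h4]
    simp only [Tm]
    rw [show x * (x - 1) / (x + y - 1) / (1 - x * y / (x + y - 1)) = x / (1 - y) by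
      rw [show (1:ℂ) - x * y / (x + y - 1) = (x - 1) * (1 - y) / (x + y - 1) by
        field_simp; ring,
        div_div_div_cancel_right₀ hs, div_eq_div_iff (mul_ne_zero hx1' h1y) h1y]
      ring]
end

section
/- Let R > 0, θ ∈ (0, 2π), b ∈ ℂ with |b| = 1, and ζ ∈ ℂ \ {0} with ζ/b ∉ ℝ. Then, as s → 0⁺, the quantity ∫₀^∞ (1/t)·((tb − ζ)/(tb + ζ))·Log(1 − e^{iθ} q_s(t)) dt − ∫₀^∞ (1/t)·((tb + ζ)/(tb − ζ))·Log(1 − e^{−iθ} q_s(t)) dt converges to 2·[Log(b/ζ)·Log(1 − e^{iθ}) − Log(−b/ζ)·Log(1 − e^{−iθ})]. (This is the limit of the Ooguri–Vafa magnetic correction integrals along the rays ℓ₊ = −ℝ₊b and ℓ₋ = ℝ₊b as the modulus |a| = s of the base coordinate a = sb tends to 0.) -/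
open Complex Filter MeasureTheory

section OVaux
open Set
/-- `c.re < 1` when `|c| = 1`, `c ≠ 1`. -/
private lemma ov_cre {c : ℂ} (hc : ‖c‖ = 1) (hc1 : c ≠ 1) : c.re < 1 := by
  rcases lt_or_eq_of_le ((Complex.re_le_norm c).trans_eq hc) with h | h
  · exact h
  · exfalso
    have h2 := Complex.sq_norm c
    rw [hc, Complex.normSq_apply] at h2
    have him : c.im = 0 := by nlinarith
    exact hc1 (by apply Complex.ext <;> simp [h, him])

/-- real part lower bound for `1 - c q`. -/
private lemma ov_re_bound {c : ℂ} (hc : ‖c‖ = 1) (hc1 : c ≠ 1) :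
    ∃ δ : ℝ, 0 < δ ∧ δ ≤ 1 ∧ ∀ q : ℝ, 0 ≤ q → q ≤ 1 → δ ≤ (1 - c * q).re := by
  have hcre := ov_cre hc hc1
  refine ⟨min 1 (1 - c.re), by simp [hcre], min_le_left _ _, fun q hq0 hq1 => ?_⟩
  have : (1 - c * (q:ℂ)).re = 1 - c.re * q := by
    simp [Complex.sub_re, Complex.mul_re]
  rw [this]
  rcases le_or_gt c.re 0 with h | h
  · have : c.re * q ≤ 0 := mul_nonpos_of_nonpos_of_nonneg h hq0
    have := min_le_left (1:ℝ) (1 - c.re); linarith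
  · have : c.re * q ≤ c.re * 1 := by nlinarith
    have := min_le_right (1:ℝ) (1 - c.re); linarith

/-- The log factor is bounded by `C q` for `q ∈ [0,1]`. -/
private lemma ov_log_bound {c : ℂ} (hc : ‖c‖ = 1) (hc1 : c ≠ 1) :
    ∃ C : ℝ, 0 < C ∧ ∀ q : ℝ, 0 ≤ q → q ≤ 1 →
      ‖Complex.log (1 - c * q)‖ ≤ C * q := by
  obtain ⟨δ, hδ0, hδ1, hδ⟩ := ov_re_bound hc hc1
  have hlog2 : (0:ℝ) < Real.log 2 := Real.log_pos (by norm_num)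
  have hlogδ : Real.log δ ≤ 0 := Real.log_nonpos hδ0.le hδ1
  set B : ℝ := Real.log 2 - Real.log δ + Real.pi with hB
  have hBpos : 0 < B := by have := Real.pi_pos; simp only [hB]; linarith
  refine ⟨2 + 2 * B, by linarith, fun q hq0 hq1 => ?_⟩
  have habsq : ‖c * q‖ = q := by
    rw [norm_mul, hc, one_mul, Complex.norm_real, Real.norm_eq_abs, _root_.abs_of_nonneg hq0]
  rcases le_or_gt q (1/2) with h | h
  · have : (1 : ℂ) - c * q = 1 + (-(c * q)) := by ring
    rw [this]
    have hb : ‖-(c * (q:ℂ))‖ ≤ 1/2 := by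
      rw [norm_neg, habsq]; exact h
    calc ‖Complex.log (1 + (-(c * (q:ℂ))))‖ ≤ (3/2) * ‖-(c * (q:ℂ))‖ :=
          Complex.norm_log_one_add_half_le_self hb
      _ = (3/2) * q := by rw [norm_neg, habsq]
      _ ≤ (2 + 2*B) * q := by nlinarith
  · -- q ≥ 1/2 : use a uniform bound B ≤ 2 B q
    set z : ℂ := 1 - c * q with hz
    have hre : δ ≤ z.re := hδ q hq0 hq1
    have hzlow : δ ≤ ‖z‖ := hre.trans (Complex.re_le_norm z)
    have hzhigh : ‖z‖ ≤ 2 := by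
      calc ‖z‖ ≤ ‖(1:ℂ)‖ + ‖c * q‖ := by
            simpa [hz, sub_eq_add_neg] using norm_add_le 1 (-(c*q))
        _ = 1 + q := by rw [habsq, norm_one]
        _ ≤ 2 := by linarith
    have hzne : z ≠ 0 := by
      intro h0; rw [h0] at hzlow; simp at hzlow; linarith
    have h1 : ‖Complex.log z‖ ≤ |Real.log (‖z‖)| + Real.pi := by
      rw [Complex.log]
      refine (norm_add_le _ _).trans ?_
      gcongr
      · simp
      · simpa [norm_mul] using Complex.abs_arg_le_pi z
    have h2 : |Real.log (‖z‖)| ≤ Real.log 2 - Real.log δ := by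
      rw [abs_le]
      constructor
      · have := Real.log_le_log hδ0 hzlow; linarith
      · have := Real.log_le_log (hδ0.trans_le hzlow) hzhigh; linarith
    calc ‖Complex.log z‖ ≤ B := by simp only [hB]; linarith
      _ ≤ (2*B) * q := by nlinarith
      _ ≤ (2 + 2*B) * q := by nlinarith

/-- bound for rational factors. -/
private lemma ov_rat_bound {w : ℂ} (hw : w.im ≠ 0) :
    ∃ A : ℝ, 0 < A ∧ ∀ z : ℂ, z.im = w.im → ‖(z - 2*w) / z‖ ≤ A := by
  have him : (0:ℝ) < |w.im| := abs_pos.mpr hw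
  refine ⟨1 + 2 * ‖w‖ / |w.im|, by positivity, fun z hzim => ?_⟩
  have hzlow : |w.im| ≤ ‖z‖ := by
    rw [← hzim]; exact Complex.abs_im_le_norm z
  have hz0 : (0:ℝ) < ‖z‖ := him.trans_le hzlow
  rw [norm_div]
  rw [div_le_iff₀ hz0]
  have h1 : ‖z - 2*w‖ ≤ ‖z‖ + 2 * ‖w‖ := by
    calc ‖z - 2*w‖ ≤ ‖z‖ + ‖2*w‖ := norm_sub_le _ _
      _ = ‖z‖ + 2 * ‖w‖ := by
          rw [norm_mul]; simp
  refine h1.trans ?_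
  have h2 : 2 * ‖w‖ ≤ 2 * ‖w‖ / |w.im| * ‖z‖ := by
    rw [div_mul_eq_mul_div, le_div_iff₀ him]
    have : (0:ℝ) ≤ 2 * ‖w‖ := by positivity
    nlinarith
  nlinarith

/-- Integrability of the integrands for fixed `s > 0`. -/
private lemma ov_integrable {R s : ℝ} (hR : 0 < R) (hs : 0 < s) {c : ℂ}
    (hc : ‖c‖ = 1) (hc1 : c ≠ 1) {g : ℝ → ℂ} (hg : Measurable g)
    {A : ℝ} (hA : ∀ t ∈ Ioi (0:ℝ), ‖g t‖ ≤ A) :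
    IntegrableOn (fun t : ℝ => (1 / (t:ℂ)) * g t *
      Complex.log (1 - c * (Real.exp (-Real.pi * R * s * (t + 1 / t)) : ℂ))) (Ioi 0) := by
  obtain ⟨C, hC0, hC⟩ := ov_log_bound hc hc1
  set a : ℝ := Real.pi * R * s with ha
  have ha0 : 0 < a := by have := Real.pi_pos; positivity
  have hA0 : 0 ≤ A := le_trans (norm_nonneg _) (hA 1 (by norm_num))
  have hmeas : AEStronglyMeasurable (fun t : ℝ => (1 / (t:ℂ)) * g t *
      Complex.log (1 - c * (Real.exp (-Real.pi * R * s * (t + 1 / t)) : ℂ)))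
      (volume.restrict (Ioi 0)) := by
    refine Measurable.aestronglyMeasurable ?_
    apply Measurable.mul
    · exact (measurable_const.div Complex.measurable_ofReal).mul hg
    · apply Complex.measurable_log.comp
      apply Measurable.sub measurable_const
      apply measurable_const.mul
      exact Complex.measurable_ofReal.comp
        (Real.measurable_exp.comp
          (measurable_const.mul (measurable_id.add (measurable_const.div measurable_id))))
  refine Integrable.mono' (g := fun t => (A * C / a) * Real.exp (-a * t))
      ?_ hmeas ?_
  · exact ((exp_neg_integrableOn_Ioi 0 ha0).const_mul _)
  · rw [ae_restrict_iff' measurableSet_Ioi]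
    refine ae_of_all _ fun t ht => ?_
    have ht0 : (0:ℝ) < t := ht
    set q : ℝ := Real.exp (-Real.pi * R * s * (t + 1 / t)) with hq
    have hq0 : 0 < q := Real.exp_pos _
    have hq1 : q ≤ 1 := by
      rw [hq, Real.exp_le_one_iff]
      have htt : 0 < t + 1/t := by positivity
      nlinarith
    have hqsplit : q = Real.exp (-a * t) * Real.exp (-(a/t)) := by
      rw [hq, ← Real.exp_add]; congr 1; field_simp; ring
    have hkey : (1/t) * Real.exp (-(a/t)) ≤ 1/a := by
      have hx : a/t ≤ Real.exp (a/t) := by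
        have := Real.add_one_le_exp (a/t); linarith
      have h2 : (a/t) * (Real.exp (a/t))⁻¹ ≤ 1 := by
        rw [← div_eq_mul_inv, div_le_one (Real.exp_pos _)]; exact hx
      have h3 : (1:ℝ)/t * (Real.exp (a/t))⁻¹ = ((a/t) * (Real.exp (a/t))⁻¹)/a := by
        rw [eq_div_iff ha0.ne']; field_simp
      rw [Real.exp_neg, h3]
      gcongr
    have hnorm : ‖(1 / (t:ℂ)) * g t * Complex.log (1 - c * (q:ℂ))‖
        = (1/t) * ‖g t‖ * ‖Complex.log (1 - c * (q:ℂ))‖ := by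
      rw [norm_mul, norm_mul, norm_div, norm_one,
        Complex.norm_real, Real.norm_eq_abs, _root_.abs_of_pos ht0]
    rw [hnorm]
    calc (1/t) * ‖g t‖ * ‖Complex.log (1 - c * (q:ℂ))‖
        ≤ (1/t) * A * (C * q) := by
          have h1 := hA t ht
          have h2 := hC q hq0.le hq1
          have : (0:ℝ) ≤ 1/t := by positivity
          gcongr
      _ = (A * C * Real.exp (-a * t)) * ((1/t) * Real.exp (-(a/t))) := by
          rw [hqsplit]; ring
      _ ≤ (A * C * Real.exp (-a * t)) * (1/a) := by
          have : (0:ℝ) ≤ A * C * Real.exp (-a * t) := by positivity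
          gcongr
      _ = (A * C / a) * Real.exp (-a * t) := by ring

/-- Substitution `t ↦ 1/t` on `(0,∞)`. -/
private lemma ov_subst (F : ℝ → ℂ) :
    (∫ t in Ioi (0:ℝ), F t) = ∫ t in Ioi (0:ℝ), (t ^ 2)⁻¹ • F t⁻¹ := by
  rw [← integral_comp_rpow_Ioi F (p := (-1:ℝ)) (by norm_num)]
  refine setIntegral_congr_fun measurableSet_Ioi fun x hx => ?_
  have hx0 : (0:ℝ) < x := hx
  have h1 : x ^ ((-1:ℝ)) = x⁻¹ := Real.rpow_neg_one x
  have h2 : |(-1:ℝ)| * x ^ ((-1:ℝ) - 1) = (x ^ 2)⁻¹ := by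
    rw [show ((-1:ℝ) - 1) = -(2:ℕ) by norm_num, Real.rpow_neg hx0.le,
      Real.rpow_natCast]
    norm_num
  rw [h1, h2]

/-- Integrability of the kernel `K`. -/
private lemma ov_K_integrable {w : ℂ} (hw : w.im ≠ 0) :
    IntegrableOn (fun t : ℝ => (1 - w^2) / (((t:ℂ) + w) * (1 + (t:ℂ) * w))) (Ioi 0) := by
  have hw0 : w ≠ 0 := fun h => hw (by simp [h])
  have habsw : 0 < ‖w‖ := norm_pos_iff.mpr hw0
  set T : ℝ := 2 * ‖w‖ + 2 / ‖w‖ + 1 with hT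
  have hT0 : 0 < T := by positivity
  have hden1 : ∀ t : ℝ, 0 ≤ t → ((t:ℂ) + w) ≠ 0 := by
    intro t _ h
    apply hw
    have := congrArg Complex.im h
    simpa using this
  have hden2 : ∀ t : ℝ, 0 ≤ t → (1 + (t:ℂ) * w) ≠ 0 := by
    intro t ht h
    rcases eq_or_lt_of_le ht with rfl | ht'
    · simp at h
    · have := congrArg Complex.im h
      simp at this
      rcases this with h' | h'
      · exact ht'.ne' h'
      · exact hw h'
  have hcontK : ContinuousOn (fun t : ℝ => (1 - w^2) / (((t:ℂ) + w) * (1 + (t:ℂ) * w)))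
      (Icc 0 T) := by
    apply ContinuousOn.div continuousOn_const
    · exact ((Complex.continuous_ofReal.continuousOn.add continuousOn_const).mul
        (continuousOn_const.add (Complex.continuous_ofReal.continuousOn.mul continuousOn_const)))
    · intro t ht
      exact mul_ne_zero (hden1 t ht.1) (hden2 t ht.1)
  have hI1 : IntegrableOn (fun t : ℝ => (1 - w^2) / (((t:ℂ) + w) * (1 + (t:ℂ) * w)))
      (Ioc 0 T) :=
    (hcontK.integrableOn_compact isCompact_Icc).mono_set Ioc_subset_Icc_self
  have hI2 : IntegrableOn (fun t : ℝ => (1 - w^2) / (((t:ℂ) + w) * (1 + (t:ℂ) * w)))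
      (Ioi T) := by
    have hmeas : AEStronglyMeasurable
        (fun t : ℝ => (1 - w^2) / (((t:ℂ) + w) * (1 + (t:ℂ) * w)))
        (volume.restrict (Ioi T)) := by
      refine Measurable.aestronglyMeasurable ?_
      exact measurable_const.div
        ((Complex.measurable_ofReal.add measurable_const).mul
          (measurable_const.add (Complex.measurable_ofReal.mul measurable_const)))
    refine Integrable.mono'
      (g := fun t : ℝ => (4 * ‖1 - w^2‖ / ‖w‖) * t ^ (-2:ℝ))
      ((integrableOn_Ioi_rpow_of_lt (by norm_num) hT0).const_mul _) hmeas ?_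
    rw [ae_restrict_iff' measurableSet_Ioi]
    refine ae_of_all _ fun t ht => ?_
    have htT : T < t := ht
    have ht0 : 0 < t := hT0.trans htT
    have h1 : t - ‖w‖ ≤ ‖(t:ℂ) + w‖ := by
      have := norm_add_le ((t:ℂ) + w) (-w)
      simp only [add_neg_cancel_right, norm_neg] at this
      rw [Complex.norm_real, Real.norm_eq_abs, _root_.abs_of_pos ht0] at this
      linarith
    have h1' : t/2 ≤ ‖(t:ℂ) + w‖ := by
      refine le_trans ?_ h1
      have : 2 * ‖w‖ ≤ t := by
        simp only [hT] at htT
        have : 0 < 2 / ‖w‖ := by positivity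
        linarith
      linarith
    have h2 : t * ‖w‖ - 1 ≤ ‖1 + (t:ℂ) * w‖ := by
      have := norm_add_le (1 + (t:ℂ) * w) (-1)
      have he : (1 + (t:ℂ) * w) + (-1) = (t:ℂ) * w := by ring
      rw [he, norm_neg, norm_one, norm_mul, Complex.norm_real, Real.norm_eq_abs,
        _root_.abs_of_pos ht0] at this
      linarith
    have h2' : t * ‖w‖ / 2 ≤ ‖1 + (t:ℂ) * w‖ := by
      refine le_trans ?_ h2
      have h3 : 2 / ‖w‖ ≤ t := by
        simp only [hT] at htT
        have : 0 < 2 * ‖w‖ := by positivity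
        linarith
      have h4 : 2 ≤ t * ‖w‖ := by
        rw [div_le_iff₀ habsw] at h3; linarith
      linarith
    have hprod : t^2 * ‖w‖ / 4 ≤
        ‖(t:ℂ) + w‖ * ‖1 + (t:ℂ) * w‖ := by
      calc t^2 * ‖w‖ / 4 = (t/2) * (t * ‖w‖ / 2) := by ring
        _ ≤ _ := by
            apply mul_le_mul h1' h2' (by positivity) (norm_nonneg _)
    have hrp : t ^ (-2:ℝ) = (t ^ (2:ℕ))⁻¹ := by
      rw [← Real.rpow_natCast t 2, ← Real.rpow_neg ht0.le]; norm_num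
    simp only [norm_div, norm_mul, hrp]
    have hd0 : (0:ℝ) < t^2 * ‖w‖ / 4 := by positivity
    calc ‖1 - w^2‖ / (‖(t:ℂ) + w‖ * ‖1 + (t:ℂ) * w‖)
        ≤ ‖1 - w^2‖ / (t^2 * ‖w‖ / 4) := by
          apply div_le_div_of_nonneg_left (norm_nonneg _) hd0 hprod
      _ = 4 * ‖1 - w^2‖ / ‖w‖ * (t ^ 2)⁻¹ := by
          field_simp
  have : Ioi (0:ℝ) = Ioc 0 T ∪ Ioi T := (Ioc_union_Ioi_eq_Ioi hT0.le).symm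
  rw [this]
  exact hI1.union hI2

/-- FTC evaluation of `∫₀^∞ (1-w²)/((t+w)(1+tw)) dt = -2 log w`. -/
private lemma ov_K_integral {w : ℂ} (hw : w.im ≠ 0) :
    (∫ t in Ioi (0:ℝ), (1 - w^2) / (((t:ℂ) + w) * (1 + (t:ℂ) * w)))
      = -2 * Complex.log w := by
  have hw0 : w ≠ 0 := fun h => hw (by simp [h])
  have hwslit : w ∈ Complex.slitPlane := Or.inr hw
  have hden1 : ∀ t : ℝ, 0 ≤ t → ((t:ℂ) + w) ≠ 0 := by
    intro t _ h
    exact hw (by simpa using congrArg Complex.im h)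
  have hden2 : ∀ t : ℝ, 0 ≤ t → (1 + (t:ℂ) * w) ≠ 0 := by
    intro t ht h
    rcases eq_or_lt_of_le ht with rfl | ht'
    · simp at h
    · have := congrArg Complex.im h
      simp at this
      rcases this with h' | h'
      · exact ht'.ne' h'
      · exact hw h'
  set φ : ℝ → ℂ := fun t => Complex.log ((t:ℂ) + w) - Complex.log (1 + (t:ℂ) * w) with hφ
  have hslit1 : ∀ t : ℝ, 0 ≤ t → ((t:ℂ) + w) ∈ Complex.slitPlane := by
    intro t _; exact Or.inr (by simpa using hw)
  have hslit2 : ∀ t : ℝ, 0 ≤ t → (1 + (t:ℂ) * w) ∈ Complex.slitPlane := by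
    intro t ht
    rcases eq_or_lt_of_le ht with rfl | ht'
    · exact Or.inl (by norm_num)
    · refine Or.inr ?_
      simpa using mul_ne_zero ht'.ne' hw
  have hderiv : ∀ x ∈ Ioi (0:ℝ), HasDerivAt φ
      ((1 - w^2) / (((x:ℂ) + w) * (1 + (x:ℂ) * w))) x := by
    intro x hx
    have hx0 : (0:ℝ) < x := hx
    have d1 : HasDerivAt (fun t : ℝ => Complex.log ((t:ℂ) + w)) (((x:ℂ) + w)⁻¹) x := by
      have inner : HasDerivAt (fun z : ℂ => z + w) 1 (x:ℂ) :=
        (hasDerivAt_id _).add_const w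
      have outer := (Complex.hasDerivAt_log (hslit1 x hx0.le)).comp (x:ℂ) inner
      simpa using outer.comp_ofReal
    have d2 : HasDerivAt (fun t : ℝ => Complex.log (1 + (t:ℂ) * w))
        ((1 + (x:ℂ) * w)⁻¹ * w) x := by
      have inner : HasDerivAt (fun z : ℂ => 1 + z * w) w (x:ℂ) := by
        simpa using ((hasDerivAt_id (x:ℂ)).mul_const w).const_add 1
      have outer := (Complex.hasDerivAt_log (hslit2 x hx0.le)).comp (x:ℂ) inner
      simpa using outer.comp_ofReal
    have := d1.sub d2
    refine this.congr_deriv ?_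
    have h1 := hden1 x hx0.le
    have h2 := hden2 x hx0.le
    symm
    rw [inv_eq_one_div, inv_eq_one_div, div_mul_eq_mul_div, one_mul, div_sub_div _ _ h1 h2]
    ring
  have hcont : ContinuousWithinAt φ (Ici (0:ℝ)) 0 := by
    have c1 : ContinuousAt (fun t : ℝ => Complex.log ((t:ℂ) + w)) 0 := by
      have : ContinuousAt (fun t : ℝ => (t:ℂ) + w) 0 :=
        (Complex.continuous_ofReal.continuousAt).add continuousAt_const
      exact (continuousAt_clog (by simpa using hslit1 0 le_rfl)).comp this
    have c2 : ContinuousAt (fun t : ℝ => Complex.log (1 + (t:ℂ) * w)) 0 := by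
      have : ContinuousAt (fun t : ℝ => 1 + (t:ℂ) * w) 0 :=
        continuousAt_const.add ((Complex.continuous_ofReal.continuousAt).mul continuousAt_const)
      exact (continuousAt_clog (by simpa using hslit2 0 le_rfl)).comp this
    exact ((c1.sub c2).continuousWithinAt)
  have htends : Tendsto φ atTop (nhds (-Complex.log w)) := by
    have hev : ∀ᶠ t : ℝ in atTop, φ t =
        Complex.log (1 + ((t:ℝ)⁻¹ : ℝ) * w) - Complex.log ((((t:ℝ)⁻¹ : ℝ) : ℂ) + w) := by
      filter_upwards [eventually_gt_atTop (0:ℝ)] with t ht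
      have ht0 : (t:ℂ) ≠ 0 := Complex.ofReal_ne_zero.mpr ht.ne'
      have e1 : ((t:ℂ) + w) = (t:ℝ) * (1 + ((t:ℝ)⁻¹ : ℝ) * w) := by
        push_cast
        field_simp
        try ring
      have e2 : (1 + (t:ℂ) * w) = (t:ℝ) * ((((t:ℝ)⁻¹ : ℝ) : ℂ) + w) := by
        push_cast
        field_simp
      have hne1 : (1 : ℂ) + ((t:ℝ)⁻¹ : ℝ) * w ≠ 0 := by
        intro h
        have := congrArg Complex.im h
        simp at this
        rcases this with h' | h'
        · exact ht.ne' h'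
        · exact hw h'
      have hne2 : ((((t:ℝ)⁻¹ : ℝ) : ℂ) + w) ≠ 0 := hden1 _ (inv_pos.mpr ht).le
      rw [hφ]
      simp only
      rw [e1, e2, Complex.log_ofReal_mul ht hne1, Complex.log_ofReal_mul ht hne2]
      ring
    have l1 : Tendsto (fun t : ℝ => Complex.log (1 + ((t:ℝ)⁻¹ : ℝ) * w)) atTop
        (nhds 0) := by
      have hinner : Tendsto (fun t : ℝ => (1 : ℂ) + ((t:ℝ)⁻¹ : ℝ) * w) atTop (nhds 1) := by
        have : Tendsto (fun t : ℝ => ((t:ℝ)⁻¹ : ℝ)) atTop (nhds 0) := tendsto_inv_atTop_zero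
        have h2 : Tendsto (fun t : ℝ => (((t:ℝ)⁻¹ : ℝ) : ℂ)) atTop (nhds 0) := by
          have h3 := (Complex.continuous_ofReal.tendsto 0).comp this
          simpa [Function.comp_def] using h3
        have := (h2.mul_const w).const_add (1:ℂ)
        simpa using this
      have hlog := (continuousAt_clog (Or.inl (by norm_num : (0:ℝ) < (1:ℂ).re))).tendsto
      have := hlog.comp hinner
      simpa [Function.comp_def] using this
    have l2 : Tendsto (fun t : ℝ => Complex.log ((((t:ℝ)⁻¹ : ℝ) : ℂ) + w)) atTop
        (nhds (Complex.log w)) := by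
      have hinner : Tendsto (fun t : ℝ => (((t:ℝ)⁻¹ : ℝ) : ℂ) + w) atTop (nhds w) := by
        have h1 : Tendsto (fun t : ℝ => ((t:ℝ)⁻¹ : ℝ)) atTop (nhds 0) := tendsto_inv_atTop_zero
        have h2 : Tendsto (fun t : ℝ => (((t:ℝ)⁻¹ : ℝ) : ℂ)) atTop (nhds 0) := by
          have h3 := (Complex.continuous_ofReal.tendsto 0).comp h1
          simpa [Function.comp_def] using h3
        have h4 := h2.add_const w
        simpa using h4
      have hlog := (continuousAt_clog hwslit).tendsto
      exact hlog.comp hinner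
    have := l1.sub l2
    rw [zero_sub] at this
    exact Tendsto.congr' (EventuallyEq.symm hev) this
  have := integral_Ioi_of_hasDerivAt_of_tendsto hcont hderiv (ov_K_integrable hw) htends
  rw [this, hφ]
  simp
  ring

/-- Dominated convergence for the symmetrized integral. -/
private lemma ov_dct {R : ℝ} (hR : 0 < R) {w c : ℂ} (hw : w.im ≠ 0)
    (hc : ‖c‖ = 1) (hc1 : c ≠ 1) :
    Tendsto (fun s : ℝ => ∫ t in Ioi (0:ℝ),
        (1 - w^2) / (((t:ℂ) + w) * (1 + (t:ℂ) * w)) *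
          Complex.log (1 - c * (Real.exp (-Real.pi * R * s * (t + 1 / t)) : ℂ)))
      (nhdsWithin 0 (Ioi 0))
      (nhds (∫ t in Ioi (0:ℝ),
        (1 - w^2) / (((t:ℂ) + w) * (1 + (t:ℂ) * w)) * Complex.log (1 - c))) := by
  obtain ⟨C, hC0, hC⟩ := ov_log_bound hc hc1
  have hKi := ov_K_integrable hw
  refine tendsto_integral_filter_of_dominated_convergence
    (fun t => ‖(1 - w^2) / (((t:ℂ) + w) * (1 + (t:ℂ) * w))‖ * C) ?_ ?_ ?_ ?_
  · refine Eventually.of_forall fun s => ?_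
    refine Measurable.aestronglyMeasurable ?_
    refine Measurable.mul ?_ ?_
    · exact measurable_const.div
        ((Complex.measurable_ofReal.add measurable_const).mul
          (measurable_const.add (Complex.measurable_ofReal.mul measurable_const)))
    · exact Complex.measurable_log.comp
        (measurable_const.sub (measurable_const.mul
          (Complex.measurable_ofReal.comp (Real.measurable_exp.comp
            (measurable_const.mul (measurable_id.add (measurable_const.div measurable_id)))))))
  · filter_upwards [self_mem_nhdsWithin] with s hs
    rw [ae_restrict_iff' measurableSet_Ioi]
    refine ae_of_all _ fun t ht => ?_
    have ht0 : (0:ℝ) < t := ht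
    have hs0 : (0:ℝ) < s := hs
    set q : ℝ := Real.exp (-Real.pi * R * s * (t + 1 / t)) with hq
    have hq0 : 0 < q := Real.exp_pos _
    have hq1 : q ≤ 1 := by
      rw [hq, Real.exp_le_one_iff]
      have htt : 0 < t + 1/t := by positivity
      have hpi := Real.pi_pos
      nlinarith [mul_pos (mul_pos (mul_pos hpi hR) hs0) htt]
    rw [norm_mul]
    gcongr
    calc ‖Complex.log (1 - c * (q:ℂ))‖ ≤ C * q := hC q hq0.le hq1
      _ ≤ C * 1 := by nlinarith
      _ = C := mul_one C
  · exact hKi.norm.mul_const C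
  · rw [ae_restrict_iff' measurableSet_Ioi]
    refine ae_of_all _ fun t ht => ?_
    have ht0 : (0:ℝ) < t := ht
    refine Tendsto.const_mul _ ?_
    have hq : Tendsto (fun s : ℝ => Real.exp (-Real.pi * R * s * (t + 1 / t)))
        (nhdsWithin 0 (Ioi 0)) (nhds 1) := by
      have hcont : ContinuousAt (fun s : ℝ => Real.exp (-Real.pi * R * s * (t + 1 / t))) 0 :=
        Real.continuous_exp.continuousAt.comp
          ((continuous_mul_right _).comp (continuous_mul_left _) |>.continuousAt)
      have h0 : Real.exp (-Real.pi * R * 0 * (t + 1 / t)) = 1 := by norm_num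
      have h5 : Tendsto (fun s : ℝ => Real.exp (-Real.pi * R * s * (t + 1 / t)))
          (nhdsWithin 0 (Ioi 0)) (nhds (Real.exp (-Real.pi * R * 0 * (t + 1 / t)))) :=
        hcont.tendsto.mono_left nhdsWithin_le_nhds
      rwa [h0] at h5
    have hinner : Tendsto (fun s : ℝ => 1 - c * (Real.exp (-Real.pi * R * s * (t + 1 / t)) : ℂ))
        (nhdsWithin 0 (Ioi 0)) (nhds (1 - c)) := by
      have h2 : Tendsto (fun s : ℝ => ((Real.exp (-Real.pi * R * s * (t + 1 / t)) : ℝ) : ℂ))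
          (nhdsWithin 0 (Ioi 0)) (nhds 1) := by
        have := (Complex.continuous_ofReal.tendsto 1).comp hq
        simpa [Function.comp_def] using this
      have := (h2.const_mul c).const_sub 1
      simpa using this
    have hslit : (1 - c) ∈ Complex.slitPlane := by
      refine Or.inl ?_
      have := ov_cre hc hc1
      simp only [Complex.sub_re, Complex.one_re]
      linarith
    exact ((continuousAt_clog hslit).tendsto.comp hinner)

/-- Main auxiliary limit for a single integral in reduced form. -/
private lemma ov_main_aux (R : ℝ) (hR : 0 < R) (w c : ℂ) (hw : w.im ≠ 0)
    (hc : ‖c‖ = 1) (hc1 : c ≠ 1) :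
    Tendsto (fun s : ℝ => ∫ t in Ioi (0:ℝ),
        (1 / (t:ℂ)) * (((t:ℂ) - w) / ((t:ℂ) + w)) *
          Complex.log (1 - c * (Real.exp (-Real.pi * R * s * (t + 1 / t)) : ℂ)))
      (nhdsWithin 0 (Ioi 0))
      (nhds ((-2 * Complex.log w) * Complex.log (1 - c))) := by
  obtain ⟨A, hA0, hA⟩ := ov_rat_bound hw
  have hdct := ov_dct hR hw hc hc1
  have hval : (∫ t in Ioi (0:ℝ),
      (1 - w^2) / (((t:ℂ) + w) * (1 + (t:ℂ) * w)) * Complex.log (1 - c))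
      = (-2 * Complex.log w) * Complex.log (1 - c) := by
    rw [integral_mul_const, ov_K_integral hw]
  rw [hval] at hdct
  refine Tendsto.congr' ?_ hdct
  filter_upwards [self_mem_nhdsWithin] with s hs
  have hs0 : (0:ℝ) < s := hs
  -- notation
  set Λ : ℝ → ℂ := fun t => Complex.log (1 - c * (Real.exp (-Real.pi * R * s * (t + 1 / t)) : ℂ))
    with hΛ
  have hg1meas : Measurable (fun t : ℝ => ((t:ℂ) - w) / ((t:ℂ) + w)) :=
    (Complex.measurable_ofReal.sub measurable_const).div
      (Complex.measurable_ofReal.add measurable_const)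
  have hg2meas : Measurable (fun t : ℝ => (1/(t:ℂ) - w) / (1/(t:ℂ) + w)) :=
    ((measurable_const.div Complex.measurable_ofReal).sub measurable_const).div
      ((measurable_const.div Complex.measurable_ofReal).add measurable_const)
  have hg1bd : ∀ t ∈ Ioi (0:ℝ), ‖((t:ℂ) - w) / ((t:ℂ) + w)‖ ≤ A := by
    intro t _
    have h1 : ((t:ℂ) - w) = ((t:ℂ) + w) - 2*w := by ring
    rw [h1]
    exact hA _ (by simp)
  have hg2bd : ∀ t ∈ Ioi (0:ℝ), ‖(1/(t:ℂ) - w) / (1/(t:ℂ) + w)‖ ≤ A := by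
    intro t _
    have h1 : (1/(t:ℂ) - w) = (1/(t:ℂ) + w) - 2*w := by ring
    rw [h1]
    refine hA _ ?_
    simp [Complex.div_im]
  have hF : IntegrableOn (fun t : ℝ => (1 / (t:ℂ)) * (((t:ℂ) - w) / ((t:ℂ) + w)) * Λ t)
      (Ioi 0) := ov_integrable hR hs0 hc hc1 hg1meas hg1bd
  have hF' : IntegrableOn (fun t : ℝ => (1 / (t:ℂ)) * ((1/(t:ℂ) - w) / (1/(t:ℂ) + w)) * Λ t)
      (Ioi 0) := ov_integrable hR hs0 hc hc1 hg2meas hg2bd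
  -- substitution t ↦ 1/t
  have hsub : (∫ t in Ioi (0:ℝ), (1 / (t:ℂ)) * (((t:ℂ) - w) / ((t:ℂ) + w)) * Λ t)
      = ∫ t in Ioi (0:ℝ), (1 / (t:ℂ)) * ((1/(t:ℂ) - w) / (1/(t:ℂ) + w)) * Λ t := by
    rw [ov_subst (fun t : ℝ => (1 / (t:ℂ)) * (((t:ℂ) - w) / ((t:ℂ) + w)) * Λ t)]
    refine setIntegral_congr_fun measurableSet_Ioi fun x hx => ?_
    have hx0 : (0:ℝ) < x := hx
    have hxne : (x:ℝ) ≠ 0 := hx0.ne'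
    have hΛeq : Λ x⁻¹ = Λ x := by
      simp only [hΛ]
      congr 3
      rw [one_div, inv_inv]
      ring
    rw [hΛeq]
    have hcast : ((x⁻¹ : ℝ) : ℂ) = 1/(x:ℂ) := by push_cast; rw [one_div]
    rw [real_smul, hcast]
    have hxC : ((x:ℝ):ℂ) ≠ 0 := Complex.ofReal_ne_zero.mpr hxne
    have hsc : (((x ^ 2)⁻¹ : ℝ) : ℂ) * (1 / (1/(x:ℂ))) = 1/(x:ℂ) := by
      push_cast
      field_simp
    calc (((x ^ 2)⁻¹ : ℝ) : ℂ) * (1 / (1/(x:ℂ)) * ((1/(x:ℂ) - w) / (1/(x:ℂ) + w)) * Λ x)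
        = ((((x ^ 2)⁻¹ : ℝ) : ℂ) * (1 / (1/(x:ℂ)))) * ((1/(x:ℂ) - w) / (1/(x:ℂ) + w)) * Λ x := by
          ring
      _ = 1/(x:ℂ) * ((1/(x:ℂ) - w) / (1/(x:ℂ) + w)) * Λ x := by rw [hsc]
  -- pointwise algebraic identity
  have hptw : ∀ x ∈ Ioi (0:ℝ),
      (1 - w^2) / (((x:ℂ) + w) * (1 + (x:ℂ) * w)) * Λ x
      = ((1 / (x:ℂ)) * (((x:ℂ) - w) / ((x:ℂ) + w)) * Λ x
        + (1 / (x:ℂ)) * ((1/(x:ℂ) - w) / (1/(x:ℂ) + w)) * Λ x) / 2 := by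
    intro x hx
    have hx0 : (0:ℝ) < x := hx
    have hxC : ((x:ℝ):ℂ) ≠ 0 := Complex.ofReal_ne_zero.mpr hx0.ne'
    have h1 : ((x:ℂ) + w) ≠ 0 := by
      intro h; exact hw (by simpa using congrArg Complex.im h)
    have h2 : (1 + (x:ℂ) * w) ≠ 0 := by
      intro h
      have := congrArg Complex.im h
      simp at this
      rcases this with h' | h'
      · exact hx0.ne' h'
      · exact hw h'
    have hcast2 : (1/(x:ℂ)) = ((x⁻¹ : ℝ) : ℂ) := by push_cast; rw [one_div]
    have h3 : (1/(x:ℂ) + w) ≠ 0 := by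
      intro h
      rw [hcast2] at h
      exact hw (by simpa using congrArg Complex.im h)
    have e1 : 1/(x:ℂ) - w = (1 - (x:ℂ)*w)/(x:ℂ) := by field_simp
    have e2 : 1/(x:ℂ) + w = (1 + (x:ℂ)*w)/(x:ℂ) := by field_simp
    have e3 : ((1 - (x:ℂ)*w)/(x:ℂ)) / ((1 + (x:ℂ)*w)/(x:ℂ))
        = (1 - (x:ℂ)*w)/(1 + (x:ℂ)*w) := by
      rw [div_div_div_eq, mul_comm ((x:ℂ)) (1 + (x:ℂ)*w), mul_div_mul_right _ _ hxC]
    have hrat : (1 - w^2) / (((x:ℂ) + w) * (1 + (x:ℂ) * w))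
        = ((1 / (x:ℂ)) * (((x:ℂ) - w) / ((x:ℂ) + w))
          + (1 / (x:ℂ)) * ((1/(x:ℂ) - w) / (1/(x:ℂ) + w))) / 2 := by
      rw [e1, e2, e3]
      rw [← mul_add, div_add_div _ _ h1 h2, eq_div_iff two_ne_zero, one_div_mul_eq_div,
        div_div, div_mul_eq_mul_div,
        div_eq_div_iff (mul_ne_zero h1 h2) (mul_ne_zero (mul_ne_zero h1 h2) hxC)]
      ring
    rw [hrat]
    ring
  calc (∫ t in Ioi (0:ℝ),
        (1 - w^2) / (((t:ℂ) + w) * (1 + (t:ℂ) * w)) * Λ t)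
      = ∫ t in Ioi (0:ℝ),
          ((1 / (t:ℂ)) * (((t:ℂ) - w) / ((t:ℂ) + w)) * Λ t
          + (1 / (t:ℂ)) * ((1/(t:ℂ) - w) / (1/(t:ℂ) + w)) * Λ t) / 2 :=
        setIntegral_congr_fun measurableSet_Ioi hptw
    _ = (∫ t in Ioi (0:ℝ),
          ((1 / (t:ℂ)) * (((t:ℂ) - w) / ((t:ℂ) + w)) * Λ t
          + (1 / (t:ℂ)) * ((1/(t:ℂ) - w) / (1/(t:ℂ) + w)) * Λ t)) / 2 :=
        integral_div 2 _
    _ = ((∫ t in Ioi (0:ℝ), (1 / (t:ℂ)) * (((t:ℂ) - w) / ((t:ℂ) + w)) * Λ t)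
        + ∫ t in Ioi (0:ℝ), (1 / (t:ℂ)) * ((1/(t:ℂ) - w) / (1/(t:ℂ) + w)) * Λ t) / 2 := by
        rw [integral_add hF hF']
    _ = ∫ t in Ioi (0:ℝ), (1 / (t:ℂ)) * (((t:ℂ) - w) / ((t:ℂ) + w)) * Λ t := by
        rw [← hsub]; ring
end OVaux

/-- The limit of the Ooguri–Vafa magnetic correction integrals along the rays
`ℓ₊ = -ℝ₊b` and `ℓ₋ = ℝ₊b` as `s = |a| → 0⁺`: for `R > 0`, `θ ∈ (0, 2π)`, `|b| = 1`,
`ζ ≠ 0` with `ζ/b ∉ ℝ`, the difference of the two correction integrals converges to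
`2·[Log(b/ζ)·Log(1 - e^{iθ}) - Log(-b/ζ)·Log(1 - e^{-iθ})]`. -/
theorem ov_correction_integral_limit (R θ : ℝ) (b ζ : ℂ) (hR : 0 < R)
    (hθ : θ ∈ Set.Ioo 0 (2 * Real.pi)) (hb : ‖b‖ = 1) (hζ : ζ ≠ 0)
    (hζb : ¬ ∃ r : ℝ, (r : ℂ) = ζ / b) :
    Tendsto (fun s : ℝ =>
        (∫ t in Set.Ioi (0:ℝ), (1 / (t : ℂ)) * (((t : ℂ) * b - ζ) / ((t : ℂ) * b + ζ)) *
          Complex.log (1 - Complex.exp ((θ : ℂ) * I) *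
            (Real.exp (-Real.pi * R * s * (t + 1 / t)) : ℂ))) -
        (∫ t in Set.Ioi (0:ℝ), (1 / (t : ℂ)) * (((t : ℂ) * b + ζ) / ((t : ℂ) * b - ζ)) *
          Complex.log (1 - Complex.exp (-(θ : ℂ) * I) *
            (Real.exp (-Real.pi * R * s * (t + 1 / t)) : ℂ))))
      (nhdsWithin 0 (Set.Ioi 0))
      (nhds (2 * (Complex.log (b / ζ) * Complex.log (1 - Complex.exp ((θ : ℂ) * I)) -
        Complex.log (-b / ζ) * Complex.log (1 - Complex.exp (-(θ : ℂ) * I))))) := by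
  obtain ⟨hθ0, hθ2⟩ := hθ
  have hπ := Real.pi_pos
  have hb0 : b ≠ 0 := by intro h; rw [h] at hb; simp at hb
  have hw1 : (ζ/b).im ≠ 0 := by
    intro h
    exact hζb ⟨(ζ/b).re, by apply Complex.ext <;> simp [h]⟩
  have hw2 : (-(ζ/b)).im ≠ 0 := by simpa using hw1
  have hc1 : ‖Complex.exp ((θ:ℂ)*I)‖ = 1 := Complex.norm_exp_ofReal_mul_I θ
  have hc2 : ‖Complex.exp (-(θ:ℂ)*I)‖ = 1 := by
    have he : (-(θ:ℂ) * I) = ((-θ : ℝ):ℂ) * I := by push_cast; ring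
    rw [he]; exact Complex.norm_exp_ofReal_mul_I (-θ)
  have hne1 : Complex.exp ((θ:ℂ)*I) ≠ 1 := by
    rw [Ne, Complex.exp_eq_one_iff]
    rintro ⟨n, hn⟩
    have h2 : ((θ:ℝ):ℂ) = ((n * (2*Real.pi) : ℝ) : ℂ) := by
      apply mul_right_cancel₀ Complex.I_ne_zero
      rw [hn]; push_cast; ring
    have h3 : θ = n * (2*Real.pi) := by exact_mod_cast h2
    rcases le_or_gt (n:ℤ) 0 with h | h
    · have : (n:ℝ) ≤ 0 := by exact_mod_cast h
      nlinarith
    · have hn1 : (1:ℤ) ≤ n := h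
      have : (1:ℝ) ≤ (n:ℝ) := by exact_mod_cast hn1
      nlinarith
  have hne2 : Complex.exp (-(θ:ℂ)*I) ≠ 1 := by
    rw [Ne, Complex.exp_eq_one_iff]
    rintro ⟨n, hn⟩
    have h2 : ((-θ:ℝ):ℂ) = ((n * (2*Real.pi) : ℝ) : ℂ) := by
      apply mul_right_cancel₀ Complex.I_ne_zero
      push_cast
      rw [hn]; ring
    have h3 : -θ = n * (2*Real.pi) := by exact_mod_cast h2
    rcases le_or_gt 0 (n:ℤ) with h | h
    · have : (0:ℝ) ≤ (n:ℝ) := by exact_mod_cast h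
      nlinarith
    · have hn1 : (n:ℤ) ≤ -1 := by omega
      have : (n:ℝ) ≤ -1 := by exact_mod_cast hn1
      nlinarith
  have h1 := ov_main_aux R hR (ζ/b) _ hw1 hc1 hne1
  have h2 := ov_main_aux R hR (-(ζ/b)) _ hw2 hc2 hne2
  have hmain := h1.sub h2
  have hr1 : ∀ t : ℝ, ((t:ℂ) - ζ/b) / ((t:ℂ) + ζ/b) = ((t:ℂ)*b - ζ)/((t:ℂ)*b + ζ) := by
    intro t
    rw [show ((t:ℂ) - ζ/b) / ((t:ℂ) + ζ/b)
        = (((t:ℂ) - ζ/b)*b) / (((t:ℂ) + ζ/b)*b) from (mul_div_mul_right _ _ hb0).symm,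
      sub_mul, add_mul, div_mul_cancel₀ _ hb0]
  have hr2 : ∀ t : ℝ, ((t:ℂ) - -(ζ/b)) / ((t:ℂ) + -(ζ/b)) = ((t:ℂ)*b + ζ)/((t:ℂ)*b - ζ) := by
    intro t
    rw [sub_neg_eq_add, ← sub_eq_add_neg,
      show ((t:ℂ) + ζ/b) / ((t:ℂ) - ζ/b)
        = (((t:ℂ) + ζ/b)*b) / (((t:ℂ) - ζ/b)*b) from (mul_div_mul_right _ _ hb0).symm,
      sub_mul, add_mul, div_mul_cancel₀ _ hb0]
  simp only [hr1, hr2] at hmain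
  have harg1 : (ζ/b).arg ≠ Real.pi := fun h => hw1 (Complex.arg_eq_pi_iff.mp h).2
  have harg2 : (-(ζ/b)).arg ≠ Real.pi := fun h => hw2 (Complex.arg_eq_pi_iff.mp h).2
  have e1 : Complex.log (b/ζ) = -Complex.log (ζ/b) := by
    rw [← Complex.log_inv _ harg1, inv_div]
  have e2 : Complex.log (-b/ζ) = -Complex.log (-(ζ/b)) := by
    rw [← Complex.log_inv _ harg2, inv_neg, inv_div, neg_div]
  have hval : (-2 * Complex.log (ζ/b)) * Complex.log (1 - Complex.exp ((θ:ℂ)*I))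
      - (-2 * Complex.log (-(ζ/b))) * Complex.log (1 - Complex.exp (-(θ:ℂ)*I))
      = 2 * (Complex.log (b / ζ) * Complex.log (1 - Complex.exp ((θ : ℂ) * I)) -
        Complex.log (-b / ζ) * Complex.log (1 - Complex.exp (-(θ : ℂ) * I))) := by
    rw [e1, e2]; ring
  rw [hval] at hmain
  exact hmain
end

section
/- Let θ_e ∈ (0, 2π), θ_m ∈ ℝ, φ ∈ (−π, π], b = e^{iφ}, and let ζ ∈ ℂ satisfy Im ζ > 0 and Im(b/ζ) < 0. Then exp( iθ_m + (i/2π)[ Log(b/ζ)·Log(1 − e^{iθ_e}) − Log(−b/ζ)·Log(1 − e^{−iθ_e}) ] ) = exp( iθ'_m + ((θ_e − π)/2π)·Log ζ + (1/2)·Log(1 − e^{−iθ_e}) ), where θ'_m := θ_m − (θ_e − π)φ/(2π). (This is the closed-form region-I formula for the extended magnetic coordinate of the Ooguri–Vafa space at the singular fiber, after the gauge transformation θ_m ↦ θ'_m.) -/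
open Complex


lemma logA (θ : ℝ) (h1 : 0 < θ) (h2 : θ < 2*Real.pi) :
    Complex.log (1 - Complex.exp ((θ:ℂ)*I)) =
      (Real.log (2*Real.sin (θ/2)) : ℂ) + (((θ - Real.pi)/2 : ℝ) : ℂ) * I := by
  have hs : 0 < Real.sin (θ/2) :=
    Real.sin_pos_of_pos_of_lt_pi (by linarith) (by linarith)
  have key : (1 : ℂ) - Complex.exp ((θ:ℂ)*I) =
      Complex.exp ((Real.log (2*Real.sin (θ/2)) : ℂ) + (((θ - Real.pi)/2 : ℝ) : ℂ) * I) := by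
    apply Complex.ext
    · simp [Complex.exp_re, Complex.exp_im, Real.exp_log (by positivity : (0:ℝ) < 2*Real.sin (θ/2))]
      have : (θ - Real.pi)/2 = θ/2 - Real.pi/2 := by ring
      rw [this, Real.cos_sub_pi_div_two]
      have hc : Real.cos θ = 1 - 2 * Real.sin (θ/2)^2 := by
        have h2 : Real.cos (2*(θ/2)) = 2*Real.cos (θ/2)^2 - 1 := Real.cos_two_mul _
        have h3 : Real.sin (θ/2)^2 + Real.cos (θ/2)^2 = 1 := Real.sin_sq_add_cos_sq _
        have h4 : (2:ℝ)*(θ/2) = θ := by ring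
        rw [h4] at h2; linarith
      nlinarith [hc]
    · simp [Complex.exp_re, Complex.exp_im, Real.exp_log (by positivity : (0:ℝ) < 2*Real.sin (θ/2))]
      have : (θ - Real.pi)/2 = θ/2 - Real.pi/2 := by ring
      rw [this, Real.sin_sub_pi_div_two]
      have hsθ : Real.sin θ = 2 * Real.sin (θ/2) * Real.cos (θ/2) := by
        have := Real.sin_two_mul (θ/2)
        have h : (2:ℝ)*(θ/2) = θ := by ring
        rw [h] at this; linarith
      nlinarith [hsθ]
  rw [key, Complex.log_exp (by simp; linarith [Real.pi_pos]) (by simp; linarith [Real.pi_pos])]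
lemma logB (θ : ℝ) (h1 : 0 < θ) (h2 : θ < 2*Real.pi) :
    Complex.log (1 - Complex.exp (-(θ:ℂ)*I)) =
      (Real.log (2*Real.sin (θ/2)) : ℂ) + (((Real.pi - θ)/2 : ℝ) : ℂ) * I := by
  have hper : Complex.exp (-(θ:ℂ)*I) = Complex.exp (((2*Real.pi - θ : ℝ):ℂ)*I) := by
    have : ((2*Real.pi - θ : ℝ):ℂ)*I = -(θ:ℂ)*I + 2*(Real.pi:ℂ)*I := by push_cast; ring
    rw [this, Complex.exp_add, Complex.exp_two_pi_mul_I, mul_one]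
  rw [hper, logA (2*Real.pi - θ) (by linarith) (by linarith)]
  have hsin : Real.sin ((2*Real.pi - θ)/2) = Real.sin (θ/2) := by
    have : (2*Real.pi - θ)/2 = Real.pi - θ/2 := by ring
    rw [this, Real.sin_pi_sub]
  rw [hsin]
  push_cast
  ring_nf

lemma logC (φ : ℝ) (ζ : ℂ) (hφ : φ ∈ Set.Ioc (-Real.pi) Real.pi)
    (hζ : 0 < ζ.im) (hbζ : (Complex.exp ((φ : ℂ) * I) / ζ).im < 0) :
    Complex.log (Complex.exp ((φ : ℂ) * I) / ζ) = (φ:ℂ)*I - Complex.log ζ := by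
  have hζ0 : ζ ≠ 0 := by
    intro h; rw [h] at hζ; simp at hζ
  have hexp : Complex.exp ((φ:ℂ)*I - Complex.log ζ) = Complex.exp ((φ : ℂ) * I) / ζ := by
    rw [Complex.exp_sub, Complex.exp_log hζ0]
  have him : ((φ:ℂ)*I - Complex.log ζ).im = φ - Complex.arg ζ := by
    simp [Complex.log_im]
  have harg1 : 0 ≤ Complex.arg ζ := Complex.arg_nonneg_iff.2 hζ.le
  have harg2 : Complex.arg ζ ≤ Real.pi := Complex.arg_le_pi ζ
  have hlb : -Real.pi < φ - Complex.arg ζ := by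
    by_contra h
    push_neg at h
    have hsin : Real.sin (φ - Complex.arg ζ) < 0 := by
      have := hbζ
      rw [← hexp] at this
      rw [Complex.exp_im, him] at this
      nlinarith [Real.exp_pos ((φ:ℂ)*I - Complex.log ζ).re]
    have : 0 ≤ Real.sin (φ - Complex.arg ζ) := by
      have h1 : 0 ≤ φ - Complex.arg ζ + 2*Real.pi := by
        have := hφ.1; linarith
      have h2 : φ - Complex.arg ζ + 2*Real.pi ≤ Real.pi := by linarith
      have := Real.sin_nonneg_of_nonneg_of_le_pi h1 h2
      rwa [show φ - Complex.arg ζ + 2*Real.pi = φ - Complex.arg ζ + 2*Real.pi from rfl,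
        Real.sin_add_two_pi] at this
    linarith
  rw [← hexp, Complex.log_exp (by rw [him]; exact hlb)
    (by rw [him]; have := hφ.2; linarith)]

lemma logD (z : ℂ) (hz : z.im < 0) :
    Complex.log (-z) = Complex.log z + (Real.pi:ℂ)*I := by
  have hz0 : z ≠ 0 := by intro h; rw [h] at hz; simp at hz
  have hexp : Complex.exp (Complex.log z + (Real.pi:ℂ)*I) = -z := by
    rw [Complex.exp_add, Complex.exp_log hz0, Complex.exp_pi_mul_I]; ring
  have harg1 : -Real.pi < Complex.arg z := Complex.neg_pi_lt_arg z
  have harg2 : Complex.arg z < 0 := Complex.arg_neg_iff.2 hz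
  have him : (Complex.log z + (Real.pi:ℂ)*I).im = Complex.arg z + Real.pi := by
    simp [Complex.log_im]
  rw [← hexp, Complex.log_exp (by rw [him]; linarith [Real.pi_pos]) (by rw [him]; linarith)]
/-- Closed-form region-I formula for the extended magnetic coordinate of the Ooguri–Vafa
space at the singular fiber, after the gauge transformation
`θ'_m = θ_m - (θ_e - π)φ/(2π)`: for `θ_e ∈ (0, 2π)`, `θ_m ∈ ℝ`, `φ ∈ (-π, π]`,
`b = e^{iφ}`, and `ζ` with `Im ζ > 0` and `Im(b/ζ) < 0`,
`exp(iθ_m + (i/2π)[Log(b/ζ)Log(1-e^{iθ_e}) - Log(-b/ζ)Log(1-e^{-iθ_e})])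
  = exp(iθ'_m + ((θ_e-π)/2π)Log ζ + (1/2)Log(1-e^{-iθ_e}))`. -/
theorem ov_region_I_formula (θe θm φ : ℝ) (ζ : ℂ)
    (hθe : θe ∈ Set.Ioo 0 (2 * Real.pi)) (hφ : φ ∈ Set.Ioc (-Real.pi) Real.pi)
    (hζ : 0 < ζ.im) (hbζ : (Complex.exp ((φ : ℂ) * I) / ζ).im < 0) :
    Complex.exp ((θm : ℂ) * I + (I / (2 * (Real.pi : ℂ))) *
        (Complex.log (Complex.exp ((φ : ℂ) * I) / ζ) *
            Complex.log (1 - Complex.exp ((θe : ℂ) * I)) -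
          Complex.log (-Complex.exp ((φ : ℂ) * I) / ζ) *
            Complex.log (1 - Complex.exp (-(θe : ℂ) * I)))) =
    Complex.exp (((θm - (θe - Real.pi) * φ / (2 * Real.pi) : ℝ) : ℂ) * I +
        (((θe : ℂ) - (Real.pi : ℂ)) / (2 * (Real.pi : ℂ))) * Complex.log ζ +
        (1 / 2) * Complex.log (1 - Complex.exp (-(θe : ℂ) * I))) := by
  have hneg : -Complex.exp ((φ : ℂ) * I) / ζ = -(Complex.exp ((φ : ℂ) * I) / ζ) := by
    rw [neg_div]
  rw [hneg, logD _ hbζ, logC φ ζ hφ hζ hbζ, logA θe hθe.1 hθe.2, logB θe hθe.1 hθe.2]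
  congr 1
  have hπ : (Real.pi : ℂ) ≠ 0 := by
    exact_mod_cast Real.pi_ne_zero
  push_cast
  set L : ℂ := (Real.log (2*Real.sin (θe/2)) : ℂ)
  set Z : ℂ := Complex.log ζ
  field_simp
  linear_combination (2*(I*(φ:ℂ) - Z)*((θe:ℂ) - (Real.pi:ℂ)) - 2*(Real.pi:ℂ)*L
    - I*(Real.pi:ℂ)*((Real.pi:ℂ) - (θe:ℂ))) * Complex.I_sq
end

section
/- Let w ∈ ℂ with Im w > 0 and θ ∈ (0, 2π). Then (i/2π)[ Log(w)·Log(1 − e^{iθ}) − Log(−w)·Log(1 − e^{−iθ}) ] + Log(1 − e^{iθ}) = −((θ − π)/2π)·Log(w) + (1/2)·Log(1 − e^{−iθ}) + i(θ − π). (This is the region-III identity in the proof that the extended magnetic coordinate of the Ooguri–Vafa space is continuous across the cut; the extra term i(θ − π) is exactly compensated by the 2πi discontinuity of Log(a/ζ) = Log a − Log ζ + 2πi valid in region III.) -/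
open Complex

lemma log_one_sub_exp {θ : ℝ} (hθ : θ ∈ Set.Ioo 0 (2 * Real.pi)) (s : ℝ) (hs : s = 1 ∨ s = -1) :
    Complex.log (1 - Complex.exp ((s*θ : ℝ) * I)) =
      (Real.log (2 * Real.sin (θ/2)) : ℂ) + ((s*(θ - Real.pi)/2 : ℝ)) * I := by
  obtain ⟨h0, h2⟩ := hθ
  have hsin : 0 < Real.sin (θ/2) := Real.sin_pos_of_pos_of_lt_pi (by linarith) (by linarith)
  have hc2 : Real.cos θ = 2 * Real.cos (θ/2)^2 - 1 := by
    rw [show θ = 2*(θ/2) by ring, Real.cos_two_mul]; ring_nf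
  have hs2 : Real.sin θ = 2 * Real.sin (θ/2) * Real.cos (θ/2) := by
    rw [show θ = 2*(θ/2) by ring, Real.sin_two_mul]; ring_nf
  have hcd : Real.cos (θ/2 - Real.pi/2) = Real.sin (θ/2) := by
    rw [Real.cos_sub, Real.cos_pi_div_two, Real.sin_pi_div_two]; ring
  have hsd : Real.sin (θ/2 - Real.pi/2) = - Real.cos (θ/2) := by
    rw [Real.sin_sub, Real.cos_pi_div_two, Real.sin_pi_div_two]; ring
  have hcos : 2 * Real.sin (θ/2) * Real.cos (s*(θ - Real.pi)/2) = 1 - Real.cos (s*θ) := by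
    rcases hs with rfl | rfl
    · rw [show (1:ℝ)*(θ - Real.pi)/2 = θ/2 - Real.pi/2 by ring, hcd, one_mul]
      nlinarith [Real.sin_sq_add_cos_sq (θ/2)]
    · rw [show (-1:ℝ)*(θ - Real.pi)/2 = -(θ/2 - Real.pi/2) by ring, Real.cos_neg, hcd,
        show (-1:ℝ)*θ = -θ by ring, Real.cos_neg]
      nlinarith [Real.sin_sq_add_cos_sq (θ/2)]
  have hsin2 : 2 * Real.sin (θ/2) * Real.sin (s*(θ - Real.pi)/2) = - Real.sin (s*θ) := by
    rcases hs with rfl | rfl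
    · rw [show (1:ℝ)*(θ - Real.pi)/2 = θ/2 - Real.pi/2 by ring, hsd, one_mul]
      nlinarith
    · rw [show (-1:ℝ)*(θ - Real.pi)/2 = -(θ/2 - Real.pi/2) by ring, Real.sin_neg, hsd,
        show (-1:ℝ)*θ = -θ by ring, Real.sin_neg]
      nlinarith
  have hexp : Complex.exp ((Real.log (2 * Real.sin (θ/2)) : ℂ) + ((s*(θ - Real.pi)/2 : ℝ)) * I)
      = 1 - Complex.exp ((s*θ : ℝ) * I) := by
    rw [Complex.exp_add, Complex.exp_mul_I, Complex.exp_mul_I, ← Complex.ofReal_exp,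
      Real.exp_log (by positivity), ← Complex.ofReal_cos, ← Complex.ofReal_sin,
      ← Complex.ofReal_cos, ← Complex.ofReal_sin, Complex.ext_iff]
    constructor <;>
      simp only [Complex.ofReal_mul, mul_re, mul_im, ofReal_re, ofReal_im, add_re, add_im,
        one_re, one_im, sub_re, sub_im, I_re, I_im, mul_zero, mul_one, zero_mul, sub_zero,
        zero_sub, add_zero, zero_add, Complex.re_ofNat, Complex.im_ofNat] <;>
      nlinarith [hcos, hsin2]
  rw [← hexp, Complex.log_exp] <;> simp <;>
  · rcases hs with rfl | rfl <;> nlinarith [Real.pi_pos]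

/-- Region-III identity in the proof that the extended magnetic coordinate of the
Ooguri–Vafa space is continuous across the cut: for `Im w > 0` and `θ ∈ (0, 2π)`,
`(i/2π)[Log(w)Log(1-e^{iθ}) - Log(-w)Log(1-e^{-iθ})] + Log(1-e^{iθ})
  = -((θ-π)/2π)Log(w) + (1/2)Log(1-e^{-iθ}) + i(θ-π)`. -/
theorem ov_region_III_identity (w : ℂ) (θ : ℝ) (hw : 0 < w.im)
    (hθ : θ ∈ Set.Ioo 0 (2 * Real.pi)) :
    (I / (2 * (Real.pi : ℂ))) *
        (Complex.log w * Complex.log (1 - Complex.exp ((θ : ℂ) * I)) -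
          Complex.log (-w) * Complex.log (1 - Complex.exp (-(θ : ℂ) * I))) +
      Complex.log (1 - Complex.exp ((θ : ℂ) * I)) =
    -(((θ : ℂ) - (Real.pi : ℂ)) / (2 * (Real.pi : ℂ))) * Complex.log w +
      (1 / 2) * Complex.log (1 - Complex.exp (-(θ : ℂ) * I)) +
      I * ((θ : ℂ) - (Real.pi : ℂ)) := by
  have h1 : Complex.log (1 - Complex.exp ((θ : ℂ) * I)) =
      (Real.log (2 * Real.sin (θ/2)) : ℂ) + (((θ - Real.pi)/2 : ℝ)) * I := by
    have := log_one_sub_exp hθ 1 (Or.inl rfl)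
    rw [show ((1*θ : ℝ) : ℂ) = (θ : ℂ) by push_cast; ring] at this
    rw [this]; norm_num
  have h2 : Complex.log (1 - Complex.exp (-(θ : ℂ) * I)) =
      (Real.log (2 * Real.sin (θ/2)) : ℂ) - (((θ - Real.pi)/2 : ℝ)) * I := by
    have := log_one_sub_exp hθ (-1) (Or.inr rfl)
    rw [show (((-1)*θ : ℝ) : ℂ) = -(θ : ℂ) by push_cast; ring] at this
    rw [this]; push_cast; ring
  have hlw : Complex.log (-w) = Complex.log w - (Real.pi : ℂ) * I := by
    rw [Complex.log, Complex.log, Complex.arg_neg_eq_arg_sub_pi_of_im_pos hw, norm_neg]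
    push_cast; ring
  have hπ : ((Real.pi : ℂ)) ≠ 0 := by
    exact_mod_cast Complex.ofReal_ne_zero.mpr Real.pi_ne_zero
  rw [h1, h2, hlw]
  have hI : I * I = -1 := Complex.I_mul_I
  push_cast
  field_simp
  ring_nf
  rw [Complex.I_sq, show Complex.I^3 = -Complex.I by rw [pow_succ, Complex.I_sq]; ring]
  ring
end

section
/- Let θ ∈ (0, 2π), φ ∈ (−π, π], b = e^{iφ}, and let ζ ∈ ℂ satisfy Im ζ > 0 and Im(b/ζ) < 0. Then φ/(2π) − (i e^{iθ}/(2π(1 − e^{iθ})))·Log(b/ζ) − (i e^{−iθ}/(2π(1 − e^{−iθ})))·Log(−b/ζ) = −(i/2π)·Log ζ − 1/(2(1 − e^{iθ})). (This identity shows that the dθ_e-coefficient of d log X_m at the singular fiber of the Ooguri–Vafa space is independent of the phase φ = arg a.) -/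
open Complex

lemma ov_aux (p e L c : ℂ) (hp : p ≠ 0) (he : 1 - e ≠ 0) :
    c / (2*p) - (I*e/(2*p*(1-e))) * (c*I - L) - (-(I/(2*p*(1-e)))) * (c*I - L + p*I)
    = -(I/(2*p))*L - 1/(2*(1-e)) := by
  have hA : (2*p*(1-e)) * (2*p*(1-e))⁻¹ = 1 := mul_inv_cancel₀ (by
    exact mul_ne_zero (mul_ne_zero two_ne_zero hp) he)
  have hB : (2*p) * (2*p)⁻¹ = 1 := mul_inv_cancel₀ (mul_ne_zero two_ne_zero hp)
  have hC : (2*(1-e)) * (2*(1-e))⁻¹ = 1 := mul_inv_cancel₀ (mul_ne_zero two_ne_zero he)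
  have hI : I * I = -1 := Complex.I_mul_I
  linear_combination I*(c*I-L)*((2*p)⁻¹*hA - (1-e)*(2*p*(1-e))⁻¹*hB)
    + I*I*((2*(1-e))⁻¹*hA - p*(2*p*(1-e))⁻¹*hC) + (c*(2*p)⁻¹ + (2*(1-e))⁻¹)*hI

/-- The `dθ_e`-coefficient of `d log X_m` at the singular fiber of the Ooguri–Vafa space
is independent of the phase `φ = arg a`: for `θ ∈ (0, 2π)`, `φ ∈ (-π, π]`, `b = e^{iφ}`,
and `ζ` with `Im ζ > 0` and `Im(b/ζ) < 0`,
`φ/(2π) - (ie^{iθ}/(2π(1-e^{iθ})))Log(b/ζ) - (ie^{-iθ}/(2π(1-e^{-iθ})))Log(-b/ζ)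
  = -(i/2π)Log ζ - 1/(2(1-e^{iθ}))`. -/
theorem ov_dtheta_coefficient (θ φ : ℝ) (ζ : ℂ)
    (hθ : θ ∈ Set.Ioo 0 (2 * Real.pi)) (hφ : φ ∈ Set.Ioc (-Real.pi) Real.pi)
    (hζ : 0 < ζ.im) (hbζ : (Complex.exp ((φ : ℂ) * I) / ζ).im < 0) :
    ((φ : ℂ) / (2 * (Real.pi : ℂ))) -
      (I * Complex.exp ((θ : ℂ) * I) /
          (2 * (Real.pi : ℂ) * (1 - Complex.exp ((θ : ℂ) * I)))) *
        Complex.log (Complex.exp ((φ : ℂ) * I) / ζ) -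
      (I * Complex.exp (-(θ : ℂ) * I) /
          (2 * (Real.pi : ℂ) * (1 - Complex.exp (-(θ : ℂ) * I)))) *
        Complex.log (-Complex.exp ((φ : ℂ) * I) / ζ) =
    -(I / (2 * (Real.pi : ℂ))) * Complex.log ζ -
      1 / (2 * (1 - Complex.exp ((θ : ℂ) * I))) := by
  obtain ⟨hθ0, hθ2⟩ := hθ
  obtain ⟨hφ1, hφ2⟩ := hφ
  have hζ0 : ζ ≠ 0 := by
    intro h; rw [h] at hζ; simp at hζ
  set a := ζ.arg with ha
  have hsina : 0 < Real.sin a := by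
    rw [ha, Complex.sin_arg]
    exact div_pos hζ (norm_pos_iff.mpr hζ0)
  have ha0 : 0 < a := by
    by_contra h
    push_neg at h
    rcases lt_or_eq_of_le h with h' | h'
    · exact absurd hsina (not_lt.2 (Real.sin_neg_of_neg_of_neg_pi_lt h' (Complex.neg_pi_lt_arg ζ)).le)
    · rw [h', Real.sin_zero] at hsina; exact lt_irrefl 0 hsina
  have haπ : a ≤ Real.pi := Complex.arg_le_pi ζ
  -- rewrite b/ζ as exp
  have hexp : Complex.exp ((φ : ℂ) * I - Complex.log ζ) = Complex.exp ((φ : ℂ) * I) / ζ := by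
    rw [Complex.exp_sub, Complex.exp_log hζ0]
  have him : ((φ : ℂ) * I - Complex.log ζ).im = φ - a := by
    simp [Complex.log_im, ha]
  have hsin : Real.sin (φ - a) < 0 := by
    rw [← hexp, Complex.exp_im, him] at hbζ
    by_contra h
    push_neg at h
    nlinarith [Real.exp_pos (((φ : ℂ) * I - Complex.log ζ).re)]
  have h1 : -Real.pi < φ - a := by
    by_contra h
    push_neg at h
    have h3 : 0 ≤ φ - a + 2 * Real.pi := by nlinarith
    have h4 : φ - a + 2 * Real.pi ≤ Real.pi := by nlinarith
    have := Real.sin_nonneg_of_nonneg_of_le_pi h3 h4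
    rw [Real.sin_add_two_pi] at this
    linarith
  have h2 : φ - a < 0 := by
    by_contra h
    push_neg at h
    have h4 : φ - a ≤ Real.pi := by nlinarith
    have := Real.sin_nonneg_of_nonneg_of_le_pi h h4
    linarith
  have hL1 : Complex.log (Complex.exp ((φ : ℂ) * I) / ζ) = (φ : ℂ) * I - Complex.log ζ := by
    rw [← hexp, Complex.log_exp (by rw [him]; linarith) (by rw [him]; linarith [Real.pi_pos])]
  have hexp2 : Complex.exp ((φ : ℂ) * I - Complex.log ζ + Real.pi * I)
      = -Complex.exp ((φ : ℂ) * I) / ζ := by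
    rw [Complex.exp_add, hexp, Complex.exp_pi_mul_I]
    ring
  have hL2 : Complex.log (-Complex.exp ((φ : ℂ) * I) / ζ)
      = (φ : ℂ) * I - Complex.log ζ + Real.pi * I := by
    rw [← hexp2, Complex.log_exp] <;>
      simp only [Complex.add_im, him, Complex.mul_im, Complex.ofReal_re, Complex.I_im,
        Complex.ofReal_im, Complex.I_re, mul_one, mul_zero, add_zero, zero_mul] <;> linarith
  have he1 : Complex.exp ((θ : ℂ) * I) ≠ 1 := by
    intro h
    rw [Complex.exp_eq_one_iff] at h
    obtain ⟨n, hn⟩ := h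
    have hθeq : θ = n * (2 * Real.pi) := by
      have h2 := congrArg Complex.im hn
      simpa using h2
    have hπ := Real.pi_pos
    rcases lt_trichotomy n 0 with h | h | h
    · have hn1 : n ≤ -1 := by omega
      have : (n : ℝ) ≤ -1 := by exact_mod_cast hn1
      nlinarith
    · rw [h] at hθeq; simp at hθeq; linarith
    · have : (1 : ℝ) ≤ n := by exact_mod_cast h
      nlinarith
  have hene : Complex.exp ((θ : ℂ) * I) ≠ 0 := Complex.exp_ne_zero _
  have hsub : 1 - Complex.exp ((θ : ℂ) * I) ≠ 0 := sub_ne_zero.2 (Ne.symm he1)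
  have hπc : (Real.pi : ℂ) ≠ 0 := Complex.ofReal_ne_zero.2 Real.pi_ne_zero
  rw [hL1, hL2, neg_mul, Complex.exp_neg]
  have hsub2 : 1 - (Complex.exp ((θ : ℂ) * I))⁻¹ ≠ 0 := by
    rw [sub_ne_zero]
    intro h
    exact he1 (by rw [← inv_inv (Complex.exp ((θ:ℂ)*I)), ← h, inv_one])
  have hsub' : Complex.exp ((θ : ℂ) * I) - 1 ≠ 0 := sub_ne_zero.2 he1
  have hc2 : I * (Complex.exp ((θ : ℂ) * I))⁻¹ /
      (2 * (Real.pi : ℂ) * (1 - (Complex.exp ((θ : ℂ) * I))⁻¹)) =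
      -(I / (2 * (Real.pi : ℂ) * (1 - Complex.exp ((θ : ℂ) * I)))) := by
    field_simp
    ring_nf; rw [← inv_neg, neg_sub]; ring
  rw [hc2]
  exact ov_aux (Real.pi : ℂ) (Complex.exp ((θ : ℂ) * I)) (Complex.log ζ) (φ : ℂ) hπc hsub
end

section
/- Let R > 0 and θ ∈ (0, 2π). Then, as s → 0⁺, the quantity −i(θ − π)/(4πs) − (R/4)·∫₀^∞ (1/t²)·( e^{iθ} q_s(t)/(1 − e^{iθ} q_s(t)) − e^{−iθ} q_s(t)/(1 − e^{−iθ} q_s(t)) ) dt converges to 0. (This shows that the apparently divergent da-coefficient −i(θ_e − π)/(4πa) produced by the gauge transformation θ_m ↦ θ'_m is exactly cancelled by the Bessel-type correction integrals as the base coordinate a = sb tends to 0 in the Ooguri–Vafa geometry.) -/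
open Complex Filter MeasureTheory

noncomputable def ovBrkt (θ x : ℝ) : ℂ :=
  Complex.exp ((θ : ℂ) * I) * (x : ℂ) / (1 - Complex.exp ((θ : ℂ) * I) * (x : ℂ)) -
  Complex.exp (-(θ : ℂ) * I) * (x : ℂ) / (1 - Complex.exp (-(θ : ℂ) * I) * (x : ℂ))

noncomputable def ovDelta (θ : ℝ) : ℝ := 1 - max (Real.cos θ) 0

lemma ovDelta_pos {θ : ℝ} (hθ : θ ∈ Set.Ioo 0 (2 * Real.pi)) : 0 < ovDelta θ := by
  have h1 : Real.cos θ < 1 := by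
    rcases lt_or_ge (Real.cos θ) 1 with h | h
    · exact h
    · exfalso
      have := Real.cos_le_one θ
      have hc : Real.cos θ = 1 := le_antisymm this h
      have := (Real.cos_eq_one_iff_of_lt_of_lt (by nlinarith [hθ.1, hθ.2, Real.pi_pos]) hθ.2).mp hc
      exact absurd this (ne_of_gt hθ.1)
  have : max (Real.cos θ) 0 < 1 := by
    rcases le_total (Real.cos θ) 0 with h | h
    · simpa [max_eq_right h]
    · simpa [max_eq_left h] using h1
  simpa [ovDelta] using this

lemma ovDelta_le_one (θ : ℝ) : ovDelta θ ≤ 1 := by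
  simp [ovDelta, le_max_right]

/-- Lower bound on the real part of the denominator. -/
lemma ov_re_lb {θ : ℝ} (φ x : ℝ) (hc : Real.cos φ = Real.cos θ)
    (hx0 : 0 ≤ x) (hx1 : x ≤ 1) :
    ovDelta θ ≤ (1 - Complex.exp ((φ : ℂ) * I) * (x : ℂ)).re := by
  have hre : (1 - Complex.exp ((φ : ℂ) * I) * (x : ℂ)).re = 1 - Real.cos φ * x := by
    simp [Complex.sub_re, Complex.mul_re, Complex.exp_ofReal_mul_I_re]
  rw [hre, ovDelta, ← hc]
  rcases le_total (Real.cos φ) 0 with h | h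
  · rw [max_eq_right h]; nlinarith
  · rw [max_eq_left h]; nlinarith

lemma ov_slit {θ : ℝ} (hθ : θ ∈ Set.Ioo 0 (2 * Real.pi)) (φ x : ℝ)
    (hc : Real.cos φ = Real.cos θ) (hx0 : 0 ≤ x) (hx1 : x ≤ 1) :
    (1 - Complex.exp ((φ : ℂ) * I) * (x : ℂ)) ∈ Complex.slitPlane :=
  Complex.mem_slitPlane_iff.mpr (Or.inl (lt_of_lt_of_le (ovDelta_pos hθ) (ov_re_lb φ x hc hx0 hx1)))

/-- Lower bound on the denominator. -/
lemma ov_denom_lb {θ : ℝ} (φ x : ℝ) (hc : Real.cos φ = Real.cos θ)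
    (hx0 : 0 ≤ x) (hx1 : x ≤ 1) :
    ovDelta θ ≤ ‖(1 - Complex.exp ((φ : ℂ) * I) * (x : ℂ))‖ :=
  le_trans (ov_re_lb φ x hc hx0 hx1) (Complex.re_le_norm _)

lemma ov_denom_ne {θ : ℝ} (hθ : θ ∈ Set.Ioo 0 (2 * Real.pi)) (φ x : ℝ)
    (hc : Real.cos φ = Real.cos θ) (hx0 : 0 ≤ x) (hx1 : x ≤ 1) :
    1 - Complex.exp ((φ : ℂ) * I) * (x : ℂ) ≠ 0 := by
  intro h
  have := ov_denom_lb (θ := θ) φ x hc hx0 hx1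
  rw [h] at this
  simp at this
  exact absurd this (not_le.mpr (ovDelta_pos hθ))

lemma ov_frac_diff (E x y : ℂ) (hx : 1 - E * x ≠ 0) (hy : 1 - E * y ≠ 0) :
    E * x / (1 - E * x) - E * y / (1 - E * y) = E * (x - y) / ((1 - E * x) * (1 - E * y)) := by
  field_simp
  ring

lemma ov_frac_bound {θ : ℝ} (hθ : θ ∈ Set.Ioo 0 (2 * Real.pi)) (φ x y : ℝ)
    (hc : Real.cos φ = Real.cos θ) (hx0 : 0 ≤ x) (hx1 : x ≤ 1) (hy0 : 0 ≤ y) (hy1 : y ≤ 1) :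
    ‖(Complex.exp ((φ : ℂ) * I) * (x : ℂ) / (1 - Complex.exp ((φ : ℂ) * I) * (x : ℂ)) -
      Complex.exp ((φ : ℂ) * I) * (y : ℂ) / (1 - Complex.exp ((φ : ℂ) * I) * (y : ℂ)))‖
      ≤ |x - y| / (ovDelta θ) ^ 2 := by
  set E := Complex.exp ((φ : ℂ) * I) with hE
  have hdx := ov_denom_ne hθ φ x hc hx0 hx1
  have hdy := ov_denom_ne hθ φ y hc hy0 hy1
  rw [ov_frac_diff E _ _ hdx hdy]
  rw [norm_div, norm_mul, norm_mul]
  have hEabs : ‖E‖ = 1 := Complex.norm_exp_ofReal_mul_I φ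
  rw [hEabs, one_mul]
  have h1 : ‖((x : ℂ) - (y : ℂ))‖ = |x - y| := by
    rw [← Complex.ofReal_sub, Complex.norm_real, Real.norm_eq_abs]
  rw [h1]
  have hδ := ovDelta_pos hθ
  have hbx := ov_denom_lb (θ := θ) φ x hc hx0 hx1
  have hby := ov_denom_lb (θ := θ) φ y hc hy0 hy1
  have hpos : (0:ℝ) < ‖(1 - E * (x:ℂ))‖ * ‖(1 - E * (y:ℂ))‖ :=
    mul_pos (lt_of_lt_of_le hδ hbx) (lt_of_lt_of_le hδ hby)
  rw [div_le_div_iff₀ hpos (by positivity)]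
  have habs := abs_nonneg (x - y)
  nlinarith [mul_le_mul hbx hby hδ.le (norm_nonneg _)]

lemma ov_brkt_sub_bound {θ : ℝ} (hθ : θ ∈ Set.Ioo 0 (2 * Real.pi)) (x y : ℝ)
    (hx0 : 0 ≤ x) (hx1 : x ≤ 1) (hy0 : 0 ≤ y) (hy1 : y ≤ 1) :
    ‖(ovBrkt θ x - ovBrkt θ y)‖ ≤ 2 * |x - y| / (ovDelta θ) ^ 2 := by
  have hneg : (-(θ:ℂ)) = ((-θ : ℝ) : ℂ) := by push_cast; ring
  have hp := ov_frac_bound hθ θ x y rfl hx0 hx1 hy0 hy1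
  have hm := ov_frac_bound hθ (-θ) x y (Real.cos_neg θ) hx0 hx1 hy0 hy1
  have key : ovBrkt θ x - ovBrkt θ y =
      (Complex.exp ((θ : ℂ) * I) * (x : ℂ) / (1 - Complex.exp ((θ : ℂ) * I) * (x : ℂ)) -
       Complex.exp ((θ : ℂ) * I) * (y : ℂ) / (1 - Complex.exp ((θ : ℂ) * I) * (y : ℂ))) -
      (Complex.exp (((-θ : ℝ) : ℂ) * I) * (x : ℂ) / (1 - Complex.exp (((-θ:ℝ) : ℂ) * I) * (x : ℂ)) -
       Complex.exp (((-θ:ℝ) : ℂ) * I) * (y : ℂ) / (1 - Complex.exp (((-θ:ℝ) : ℂ) * I) * (y : ℂ))) := by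
    rw [ovBrkt, ovBrkt, ← hneg]
    ring
  rw [key]
  calc ‖_‖ ≤ |x - y| / (ovDelta θ)^2 + |x - y| / (ovDelta θ)^2 := by
        refine le_trans (norm_sub_le _ _) (add_le_add hp hm)
    _ = 2 * |x - y| / (ovDelta θ)^2 := by ring

lemma ov_brkt_zero (θ : ℝ) : ovBrkt θ 0 = 0 := by simp [ovBrkt]

lemma ov_brkt_bound {θ : ℝ} (hθ : θ ∈ Set.Ioo 0 (2 * Real.pi)) (x : ℝ)
    (hx0 : 0 ≤ x) (hx1 : x ≤ 1) :
    ‖(ovBrkt θ x)‖ ≤ 2 * x / (ovDelta θ) ^ 2 := by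
  have := ov_brkt_sub_bound hθ x 0 hx0 hx1 le_rfl zero_le_one
  simpa [ov_brkt_zero, _root_.abs_of_nonneg hx0] using this

lemma ov_denom_ne' {θ : ℝ} (hθ : θ ∈ Set.Ioo 0 (2 * Real.pi)) (x : ℝ)
    (hx0 : 0 ≤ x) (hx1 : x ≤ 1) :
    1 - Complex.exp (-(θ : ℂ) * I) * (x : ℂ) ≠ 0 := by
  have := ov_denom_ne hθ (-θ) x (Real.cos_neg θ) hx0 hx1
  simpa using this

lemma ov_slit' {θ : ℝ} (hθ : θ ∈ Set.Ioo 0 (2 * Real.pi)) (x : ℝ)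
    (hx0 : 0 ≤ x) (hx1 : x ≤ 1) :
    (1 - Complex.exp (-(θ : ℂ) * I) * (x : ℂ)) ∈ Complex.slitPlane := by
  have := ov_slit hθ (-θ) x (Real.cos_neg θ) hx0 hx1
  simpa using this

lemma ov_brkt_continuousOn {θ : ℝ} (hθ : θ ∈ Set.Ioo 0 (2 * Real.pi)) {g : ℝ → ℝ} {s : Set ℝ}
    (hg : ContinuousOn g s) (h0 : ∀ u ∈ s, 0 ≤ g u) (h1 : ∀ u ∈ s, g u ≤ 1) :
    ContinuousOn (fun u => ovBrkt θ (g u)) s := by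
  simp only [ovBrkt]
  have hcast : ContinuousOn (fun u => ((g u : ℝ) : ℂ)) s :=
    Complex.continuous_ofReal.comp_continuousOn hg
  apply ContinuousOn.sub
  · exact ContinuousOn.div (continuousOn_const.mul hcast)
      (continuousOn_const.sub (continuousOn_const.mul hcast))
      (fun u hu => ov_denom_ne hθ θ (g u) rfl (h0 u hu) (h1 u hu))
  · exact ContinuousOn.div (continuousOn_const.mul hcast)
      (continuousOn_const.sub (continuousOn_const.mul hcast))
      (fun u hu => ov_denom_ne' hθ (g u) (h0 u hu) (h1 u hu))

lemma ov_one_sub_exp (w : ℂ) :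
    1 - Complex.exp (2 * w * I) = 2 * Complex.sin w * Complex.exp (w * I) * (-I) := by
  rw [Complex.sin]
  rw [show -w * I = -(w * I) by ring, Complex.exp_neg]
  have h2 : Complex.exp (2 * w * I) = Complex.exp (w * I) ^ 2 := by
    rw [sq, ← Complex.exp_add]; ring_nf
  rw [h2]
  have := Complex.exp_ne_zero (w * I)
  field_simp
  linear_combination (1 - Complex.exp (w * I) ^ 2) * Complex.I_sq

lemma ov_repr {θ : ℝ} :
    1 - Complex.exp ((θ : ℂ) * I) =
      ((2 * Real.sin (θ / 2) : ℝ) : ℂ) * Complex.exp ((((θ - Real.pi) / 2 : ℝ) : ℂ) * I) := by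
  have h1 := ov_one_sub_exp ((θ / 2 : ℝ) : ℂ)
  have h2 : (2 : ℂ) * ((θ / 2 : ℝ) : ℂ) = (θ : ℂ) := by push_cast; ring
  rw [h2] at h1
  rw [h1]
  have e1 : Complex.exp ((((θ - Real.pi) / 2 : ℝ) : ℂ) * I) =
      Complex.exp (((θ / 2 : ℝ) : ℂ) * I) * Complex.exp (-(Real.pi / 2 : ℂ) * I) := by
    rw [← Complex.exp_add]; push_cast; ring_nf
  have e2 : Complex.exp (-(Real.pi / 2 : ℂ) * I) = -I := by
    have : (-(Real.pi / 2 : ℂ)) * I = ((-(Real.pi / 2) : ℝ) : ℂ) * I := by push_cast; ring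
    rw [this, Complex.exp_mul_I]
    push_cast
    simp [Complex.cos_neg, Complex.sin_neg, Complex.cos_pi_div_two, Complex.sin_pi_div_two]
  rw [e1, e2, ← Complex.ofReal_sin]
  push_cast
  ring

lemma ov_log_eval {θ : ℝ} (hθ : θ ∈ Set.Ioo 0 (2 * Real.pi)) :
    Complex.log (1 - Complex.exp (-(θ : ℂ) * I)) - Complex.log (1 - Complex.exp ((θ : ℂ) * I)) =
      -I * ((θ : ℂ) - (Real.pi : ℂ)) := by
  have hpi := Real.pi_pos
  set z := 1 - Complex.exp ((θ : ℂ) * I) with hzdef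
  have hr : 0 < 2 * Real.sin (θ / 2) := by
    have := Real.sin_pos_of_pos_of_lt_pi (x := θ / 2) (by linarith [hθ.1]) (by linarith [hθ.2])
    linarith
  have hx1 : -Real.pi < (θ - Real.pi) / 2 := by linarith [hθ.1]
  have hx2 : (θ - Real.pi) / 2 ≤ Real.pi := by linarith [hθ.2]
  have harg : z.arg = (θ - Real.pi) / 2 := by
    rw [hzdef, ov_repr, Complex.arg_real_mul _ hr, Complex.exp_mul_I]
    exact Complex.arg_cos_add_sin_mul_I ⟨hx1, hx2⟩
  have hconj : 1 - Complex.exp (-(θ : ℂ) * I) = (starRingEnd ℂ) z := by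
    rw [hzdef, map_sub, map_one, ← Complex.exp_conj, map_mul, Complex.conj_ofReal,
      Complex.conj_I]
    ring_nf
  have hargne : z.arg ≠ Real.pi := by
    rw [harg]; intro h; linarith [hθ.2]
  rw [hconj, Complex.log_conj _ hargne]
  apply Complex.ext
  · simp
  · simp only [Complex.sub_im, Complex.conj_im, Complex.log_im, harg]
    simp only [Complex.neg_im, Complex.mul_im, Complex.I_re, Complex.I_im, Complex.sub_re,
      Complex.sub_im, Complex.ofReal_re, Complex.ofReal_im, Complex.neg_re]
    ring

lemma ov_model_integrable {θ : ℝ} (hθ : θ ∈ Set.Ioo 0 (2 * Real.pi)) {c : ℝ} (hc : 0 < c) :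
    IntegrableOn (fun u => ovBrkt θ (Real.exp (-c * u))) (Set.Ioi (0:ℝ)) := by
  have hr0 : ∀ u : ℝ, (0:ℝ) ≤ Real.exp (-c * u) := fun u => (Real.exp_pos _).le
  have hr1 : ∀ u : ℝ, 0 ≤ u → Real.exp (-c * u) ≤ 1 := fun u hu =>
    Real.exp_le_one_iff.mpr (by nlinarith)
  apply Integrable.mono' (((exp_neg_integrableOn_Ioi 0 hc)).const_mul (2 / (ovDelta θ) ^ 2))
  · refine (ov_brkt_continuousOn hθ ?_ ?_ ?_).aestronglyMeasurable measurableSet_Ioi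
    · exact (Real.continuous_exp.comp (continuous_const.mul continuous_id)).continuousOn
    · exact fun u _ => hr0 u
    · exact fun u hu => hr1 u (le_of_lt hu)
  · rw [ae_restrict_iff' measurableSet_Ioi]
    filter_upwards with u hu
    calc ‖(ovBrkt θ (Real.exp (-c * u)))‖
        ≤ 2 * Real.exp (-c * u) / (ovDelta θ) ^ 2 :=
          ov_brkt_bound hθ _ (hr0 u) (hr1 u (le_of_lt hu))
      _ = 2 / (ovDelta θ) ^ 2 * Real.exp (-c * u) := by ring

lemma ov_model_integral {θ : ℝ} (hθ : θ ∈ Set.Ioo 0 (2 * Real.pi)) {c : ℝ} (hc : 0 < c) :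
    ∫ u in Set.Ioi (0:ℝ), ovBrkt θ (Real.exp (-c * u)) =
      -I * ((θ : ℂ) - (Real.pi : ℂ)) / (c : ℂ) := by
  have hδ := ovDelta_pos hθ
  set Ep := Complex.exp ((θ : ℂ) * I) with hEp
  set Em := Complex.exp (-(θ : ℂ) * I) with hEm
  set Ψ : ℝ → ℂ := fun u => -(1 / (c : ℂ)) *
    (Complex.log (1 - Em * (Real.exp (-c * u) : ℂ)) -
     Complex.log (1 - Ep * (Real.exp (-c * u) : ℂ))) with hΨ
  have hcC : (c : ℂ) ≠ 0 := Complex.ofReal_ne_zero.mpr hc.ne'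
  -- bounds on r u for u ≥ 0
  have hr0 : ∀ u : ℝ, (0:ℝ) ≤ Real.exp (-c * u) := fun u => (Real.exp_pos _).le
  have hr1 : ∀ u : ℝ, 0 ≤ u → Real.exp (-c * u) ≤ 1 := fun u hu =>
    Real.exp_le_one_iff.mpr (by nlinarith)
  -- derivative
  have hderiv : ∀ u ∈ Set.Ici (0:ℝ), HasDerivAt Ψ (ovBrkt θ (Real.exp (-c * u))) u := by
    intro u hu
    have hlin : HasDerivAt (fun u : ℝ => -c * u) (-c) u := by
      simpa using (hasDerivAt_id u).const_mul (-c)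
    have hdenp : HasDerivAt (fun u : ℝ => 1 - Ep * (Real.exp (-c * u) : ℂ))
        (-(Ep * ((Real.exp (-c * u) * (-c) : ℝ) : ℂ))) u :=
      ((hlin.exp.ofReal_comp).const_mul Ep).const_sub 1
    have hdenm : HasDerivAt (fun u : ℝ => 1 - Em * (Real.exp (-c * u) : ℂ))
        (-(Em * ((Real.exp (-c * u) * (-c) : ℝ) : ℂ))) u :=
      ((hlin.exp.ofReal_comp).const_mul Em).const_sub 1
    have hslitp := ov_slit hθ θ (Real.exp (-c * u)) rfl (hr0 u) (hr1 u hu)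
    have hslitm := ov_slit' hθ (Real.exp (-c * u)) (hr0 u) (hr1 u hu)
    have hlogp := hdenp.clog_real hslitp
    have hlogm := hdenm.clog_real hslitm
    have := (hlogm.sub hlogp).const_mul (-(1 / (c : ℂ)))
    refine this.congr_deriv ?_
    symm
    have hdp := ov_denom_ne hθ θ (Real.exp (-c * u)) rfl (hr0 u) (hr1 u hu)
    have hdm := ov_denom_ne' hθ (Real.exp (-c * u)) (hr0 u) (hr1 u hu)
    rw [ovBrkt]
    rw [← hEp, ← hEm]
    push_cast
    field_simp
    ring
  -- integrability
  have hint : IntegrableOn (fun u => ovBrkt θ (Real.exp (-c * u))) (Set.Ioi (0:ℝ)) :=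
    ov_model_integrable hθ hc
  -- limit at infinity
  have hrtend : Tendsto (fun u : ℝ => Real.exp (-c * u)) atTop (nhds 0) :=
    Real.tendsto_exp_atBot.comp (tendsto_id.const_mul_atTop_of_neg (neg_lt_zero.mpr hc))
  have hGp : ContinuousAt (fun x : ℝ => Complex.log (1 - Ep * (x : ℂ))) 0 := by
    have hin : ContinuousAt (fun x : ℝ => 1 - Ep * (x : ℂ)) 0 :=
      (continuous_const.sub (continuous_const.mul Complex.continuous_ofReal)).continuousAt
    have h1 : (1 - Ep * ((0:ℝ) : ℂ)) ∈ Complex.slitPlane := by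
      simpa using ov_slit hθ θ 0 rfl le_rfl zero_le_one
    exact hin.clog h1
  have hGm : ContinuousAt (fun x : ℝ => Complex.log (1 - Em * (x : ℂ))) 0 := by
    have hin : ContinuousAt (fun x : ℝ => 1 - Em * (x : ℂ)) 0 :=
      (continuous_const.sub (continuous_const.mul Complex.continuous_ofReal)).continuousAt
    have h1 : (1 - Em * ((0:ℝ) : ℂ)) ∈ Complex.slitPlane := by
      simpa using ov_slit' hθ 0 le_rfl zero_le_one
    exact hin.clog h1
  have hΨtend : Tendsto Ψ atTop (nhds 0) := by
    have hG : ContinuousAt (fun x : ℝ => -(1 / (c : ℂ)) *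
        (Complex.log (1 - Em * (x : ℂ)) - Complex.log (1 - Ep * (x : ℂ)))) 0 :=
      (continuousAt_const).mul (hGm.sub hGp)
    have h2 := hG.tendsto.comp hrtend
    have h3 : ((fun x : ℝ => -(1 / (c : ℂ)) *
        (Complex.log (1 - Em * (x : ℂ)) - Complex.log (1 - Ep * (x : ℂ)))) ∘
        (fun u : ℝ => Real.exp (-c * u))) = Ψ := rfl
    rw [h3] at h2
    simpa [Complex.log_one] using h2
  have key := integral_Ioi_of_hasDerivAt_of_tendsto' hderiv hint hΨtend
  rw [key, hΨ]
  simp only [mul_zero, Real.exp_zero, Complex.ofReal_one, mul_one]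
  rw [ov_log_eval hθ]
  field_simp
  ring

lemma ov_inv_integral (F : ℝ → ℂ) (hF : ∀ t : ℝ, F t⁻¹ = F t) :
    ∫ t in Set.Ioi (0:ℝ), (1 / (t : ℂ) ^ 2) * F t = ∫ t in Set.Ioi (0:ℝ), F t := by
  have h1 := mellin_comp_inv F (1 : ℂ)
  rw [funext hF] at h1
  have h2 : mellin F (1 : ℂ) = ∫ t in Set.Ioi (0:ℝ), F t := by
    simp only [mellin, sub_self, Complex.cpow_zero, one_smul]
  have h3 : mellin F (-1 : ℂ) = ∫ t in Set.Ioi (0:ℝ), (1 / (t : ℂ) ^ 2) * F t := by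
    rw [mellin]
    apply setIntegral_congr_fun measurableSet_Ioi
    intro t ht
    show (t : ℂ) ^ ((-1 : ℂ) - 1) • F t = 1 / (t : ℂ) ^ 2 * F t
    have h4 : ((-1 : ℂ) - 1) = ((-2 : ℤ) : ℂ) := by norm_num
    rw [h4, Complex.cpow_intCast]
    rw [smul_eq_mul, zpow_neg, one_div, show ((2:ℤ)) = ((2:ℕ):ℤ) by norm_num, zpow_natCast]
  rw [← h3, ← h1, h2]

lemma ov_bound_integrable :
    IntegrableOn (fun u : ℝ => min 1 (u ^ 2)⁻¹) (Set.Ioi (0:ℝ)) := by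
  have hmeas : AEStronglyMeasurable (fun u : ℝ => min 1 (u ^ 2)⁻¹) volume := by
    apply Measurable.aestronglyMeasurable
    exact measurable_const.min ((measurable_id.pow_const 2).inv)
  rw [← Set.Ioc_union_Ioi_eq_Ioi (zero_le_one (α := ℝ))]
  apply IntegrableOn.union
  · apply Integrable.mono' (integrableOn_const (C := (1:ℝ)) measure_Ioc_lt_top.ne)
    · exact hmeas.restrict
    · filter_upwards with u
      rw [Real.norm_eq_abs, abs_le]
      constructor
      · have : (0:ℝ) ≤ min 1 (u^2)⁻¹ := le_min zero_le_one (by positivity)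
        linarith
      · exact min_le_left _ _
  · apply Integrable.mono' (integrableOn_Ioi_rpow_of_lt (by norm_num : (-2:ℝ) < -1) one_pos)
    · exact hmeas.restrict
    · rw [ae_restrict_iff' measurableSet_Ioi]
      filter_upwards with u hu
      have hu0 : (0:ℝ) < u := lt_trans one_pos hu
      rw [Real.norm_eq_abs, abs_le]
      have hrw : u ^ (-2:ℝ) = (u ^ 2)⁻¹ := by
        rw [show (-2:ℝ) = -(2:ℝ) by norm_num, Real.rpow_neg hu0.le, Real.rpow_two]
      constructor
      · have h1 : (0:ℝ) ≤ min 1 (u^2)⁻¹ := le_min zero_le_one (by positivity)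
        have h2 : (0:ℝ) ≤ u ^ (-2:ℝ) := Real.rpow_nonneg hu0.le _
        linarith
      · rw [hrw]; exact min_le_right _ _

lemma ov_sym_integrable {θ : ℝ} (hθ : θ ∈ Set.Ioo 0 (2 * Real.pi)) {c : ℝ} (hc : 0 < c) :
    IntegrableOn (fun u => ovBrkt θ (Real.exp (-c * (u + 1 / u)))) (Set.Ioi (0:ℝ)) := by
  have hbig : ∀ u : ℝ, 0 < u → 0 < u + 1 / u := fun u hu =>
    add_pos hu (by positivity)
  have hr0 : ∀ u : ℝ, (0:ℝ) ≤ Real.exp (-c * (u + 1 / u)) := fun u => (Real.exp_pos _).le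
  have hr1 : ∀ u : ℝ, 0 < u → Real.exp (-c * (u + 1 / u)) ≤ 1 := fun u hu =>
    Real.exp_le_one_iff.mpr (by nlinarith [hbig u hu])
  apply Integrable.mono' (((exp_neg_integrableOn_Ioi 0 hc)).const_mul (2 / (ovDelta θ) ^ 2))
  · refine (ov_brkt_continuousOn hθ ?_ ?_ ?_).aestronglyMeasurable measurableSet_Ioi
    · exact Real.continuous_exp.comp_continuousOn
        (continuousOn_const.mul (continuousOn_id.add
          (ContinuousOn.div continuousOn_const continuousOn_id
            (fun u hu => ne_of_gt hu))))
    · exact fun u _ => hr0 u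
    · exact fun u hu => hr1 u hu
  · rw [ae_restrict_iff' measurableSet_Ioi]
    filter_upwards with u hu
    have hle : Real.exp (-c * (u + 1 / u)) ≤ Real.exp (-c * u) := by
      apply Real.exp_le_exp.mpr
      have h1u : 0 < 1 / u := one_div_pos.mpr hu
      nlinarith
    calc ‖(ovBrkt θ (Real.exp (-c * (u + 1 / u))))‖
        ≤ 2 * Real.exp (-c * (u + 1 / u)) / (ovDelta θ) ^ 2 :=
          ov_brkt_bound hθ _ (hr0 u) (hr1 u hu)
      _ ≤ 2 / (ovDelta θ) ^ 2 * Real.exp (-c * u) := by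
          rw [div_mul_eq_mul_div]
          gcongr

lemma ov_xy {a u : ℝ} (ha : 0 < a) (hu : 0 < u) :
    |Real.exp (-a * (u + 1 / u)) - Real.exp (-a * u)| ≤ min 1 (u ^ 2)⁻¹ ∧
    |Real.exp (-a * (u + 1 / u)) - Real.exp (-a * u)| ≤ 1 - Real.exp (-(a / u)) := by
  have hau : 0 < a / u := div_pos ha hu
  set y := Real.exp (-a * u) with hy
  set e := Real.exp (-(a / u)) with he
  have hxeq : Real.exp (-a * (u + 1 / u)) = y * e := by
    rw [hy, he, ← Real.exp_add]; congr 1; field_simp; ring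
  have hy0 : 0 < y := Real.exp_pos _
  have hy1 : y ≤ 1 := Real.exp_le_one_iff.mpr (by nlinarith)
  have he0 : 0 < e := Real.exp_pos _
  have he1 : e ≤ 1 := Real.exp_le_one_iff.mpr (by nlinarith)
  have habs : |Real.exp (-a * (u + 1 / u)) - y| = y * (1 - e) := by
    have h1 : y * e - y = -(y * (1 - e)) := by ring
    rw [hxeq, h1, abs_neg, _root_.abs_of_nonneg (by nlinarith)]
  constructor
  · rw [habs]
    apply le_min
    · nlinarith
    · have hyb : y ≤ (a * u)⁻¹ := by
        rw [hy, show -a * u = -(a * u) by ring, Real.exp_neg]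
        exact inv_anti₀ (mul_pos ha hu) (by nlinarith [Real.add_one_le_exp (a * u)])
      have heb : 1 - e ≤ a / u := by
        have := Real.add_one_le_exp (-(a / u))
        rw [he]; linarith
      calc y * (1 - e) ≤ (a * u)⁻¹ * (a / u) :=
            mul_le_mul hyb heb (by nlinarith) (by positivity)
        _ = (u ^ 2)⁻¹ := by field_simp
  · rw [habs]; nlinarith

/-- The apparently divergent `da`-coefficient `-i(θ_e - π)/(4πa)` produced by the gauge
transformation `θ_m ↦ θ'_m` is exactly cancelled by the Bessel-type correction integrals
as `a = sb → 0` in the Ooguri–Vafa geometry: for `R > 0` and `θ ∈ (0, 2π)`, as `s → 0⁺`,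
`-i(θ-π)/(4πs) - (R/4)∫₀^∞ (1/t²)(e^{iθ}q_s(t)/(1-e^{iθ}q_s(t))
   - e^{-iθ}q_s(t)/(1-e^{-iθ}q_s(t))) dt → 0`. -/
theorem ov_da_coefficient_cancellation (R θ : ℝ) (hR : 0 < R)
    (hθ : θ ∈ Set.Ioo 0 (2 * Real.pi)) :
    Tendsto (fun s : ℝ =>
        -I * ((θ : ℂ) - (Real.pi : ℂ)) / (4 * (Real.pi : ℂ) * (s : ℂ)) -
        ((R : ℂ) / 4) *
          (∫ t in Set.Ioi (0:ℝ), (1 / (t : ℂ) ^ 2) *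
            (Complex.exp ((θ : ℂ) * I) * (Real.exp (-Real.pi * R * s * (t + 1 / t)) : ℂ) /
              (1 - Complex.exp ((θ : ℂ) * I) *
                (Real.exp (-Real.pi * R * s * (t + 1 / t)) : ℂ)) -
             Complex.exp (-(θ : ℂ) * I) * (Real.exp (-Real.pi * R * s * (t + 1 / t)) : ℂ) /
              (1 - Complex.exp (-(θ : ℂ) * I) *
                (Real.exp (-Real.pi * R * s * (t + 1 / t)) : ℂ)))))
      (nhdsWithin 0 (Set.Ioi 0)) (nhds 0) := by
  have hπ := Real.pi_pos
  have hδ := ovDelta_pos hθ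
  have hexp : ∀ s x : ℝ, -Real.pi * R * s * x = -(Real.pi * R * s) * x := fun s x => by ring
  have hfun : ∀ s : ℝ,
      (-I * ((θ : ℂ) - (Real.pi : ℂ)) / (4 * (Real.pi : ℂ) * (s : ℂ)) -
        ((R : ℂ) / 4) *
          (∫ t in Set.Ioi (0:ℝ), (1 / (t : ℂ) ^ 2) *
            (Complex.exp ((θ : ℂ) * I) * (Real.exp (-Real.pi * R * s * (t + 1 / t)) : ℂ) /
              (1 - Complex.exp ((θ : ℂ) * I) *
                (Real.exp (-Real.pi * R * s * (t + 1 / t)) : ℂ)) -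
             Complex.exp (-(θ : ℂ) * I) * (Real.exp (-Real.pi * R * s * (t + 1 / t)) : ℂ) /
              (1 - Complex.exp (-(θ : ℂ) * I) *
                (Real.exp (-Real.pi * R * s * (t + 1 / t)) : ℂ))))) =
      (-I * ((θ : ℂ) - (Real.pi : ℂ)) / (4 * (Real.pi : ℂ) * (s : ℂ)) -
        ((R : ℂ) / 4) *
          (∫ t in Set.Ioi (0:ℝ), (1 / (t : ℂ) ^ 2) *
            ovBrkt θ (Real.exp (-(Real.pi * R * s) * (t + 1 / t))))) := by
    intro s
    simp only [ovBrkt, hexp]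
  simp only [hfun]
  -- the main dominated convergence statement
  have hmain : Tendsto (fun s : ℝ => ∫ u in Set.Ioi (0:ℝ),
      (ovBrkt θ (Real.exp (-(Real.pi * R * s) * (u + 1 / u))) -
       ovBrkt θ (Real.exp (-(Real.pi * R * s) * u))))
      (nhdsWithin 0 (Set.Ioi 0)) (nhds 0) := by
    have hDCT := tendsto_integral_filter_of_dominated_convergence
      (μ := volume.restrict (Set.Ioi (0:ℝ)))
      (l := nhdsWithin (0:ℝ) (Set.Ioi 0))
      (F := fun s u => ovBrkt θ (Real.exp (-(Real.pi * R * s) * (u + 1 / u))) -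
        ovBrkt θ (Real.exp (-(Real.pi * R * s) * u)))
      (f := fun _ => (0:ℂ))
      (bound := fun u => 2 / (ovDelta θ) ^ 2 * min 1 (u ^ 2)⁻¹)
      (by -- measurability
        filter_upwards [self_mem_nhdsWithin] with s hs
        have ha : 0 < Real.pi * R * s := mul_pos (mul_pos hπ hR) hs
        exact ((ov_sym_integrable hθ ha).aestronglyMeasurable).sub
          ((ov_model_integrable hθ ha).aestronglyMeasurable))
      (by -- bound
        filter_upwards [self_mem_nhdsWithin] with s hs
        rw [ae_restrict_iff' measurableSet_Ioi]
        filter_upwards with u hu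
        have ha : 0 < Real.pi * R * s := mul_pos (mul_pos hπ hR) hs
        have hu0 : (0:ℝ) < u := hu
        have hbig : 0 < u + 1 / u := add_pos hu0 (one_div_pos.mpr hu0)
        have hx0 : (0:ℝ) ≤ Real.exp (-(Real.pi * R * s) * (u + 1 / u)) := (Real.exp_pos _).le
        have hx1 : Real.exp (-(Real.pi * R * s) * (u + 1 / u)) ≤ 1 :=
          Real.exp_le_one_iff.mpr (by nlinarith)
        have hy0 : (0:ℝ) ≤ Real.exp (-(Real.pi * R * s) * u) := (Real.exp_pos _).le
        have hy1 : Real.exp (-(Real.pi * R * s) * u) ≤ 1 :=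
          Real.exp_le_one_iff.mpr (by nlinarith)
        have h1 := ov_brkt_sub_bound hθ _ _ hx0 hx1 hy0 hy1
        have h2 := (ov_xy ha hu0).1
        calc ‖_‖ ≤ 2 * |Real.exp (-(Real.pi * R * s) * (u + 1 / u)) -
              Real.exp (-(Real.pi * R * s) * u)| / (ovDelta θ) ^ 2 := h1
          _ ≤ 2 / (ovDelta θ) ^ 2 * min 1 (u ^ 2)⁻¹ := by
              rw [div_mul_eq_mul_div]
              gcongr)
      (ov_bound_integrable.const_mul _) -- bound integrable
      (by -- pointwise limit
        rw [ae_restrict_iff' measurableSet_Ioi]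
        filter_upwards with u hu
        have hu0 : (0:ℝ) < u := hu
        apply squeeze_zero_norm'
          (a := fun s : ℝ => 2 / (ovDelta θ) ^ 2 * (1 - Real.exp (-(Real.pi * R * s / u))))
        · filter_upwards [self_mem_nhdsWithin] with s hs
          have ha : 0 < Real.pi * R * s := mul_pos (mul_pos hπ hR) hs
          have hbig : 0 < u + 1 / u := add_pos hu0 (one_div_pos.mpr hu0)
          have hx0 : (0:ℝ) ≤ Real.exp (-(Real.pi * R * s) * (u + 1 / u)) := (Real.exp_pos _).le
          have hx1 : Real.exp (-(Real.pi * R * s) * (u + 1 / u)) ≤ 1 :=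
            Real.exp_le_one_iff.mpr (by nlinarith)
          have hy0 : (0:ℝ) ≤ Real.exp (-(Real.pi * R * s) * u) := (Real.exp_pos _).le
          have hy1 : Real.exp (-(Real.pi * R * s) * u) ≤ 1 :=
            Real.exp_le_one_iff.mpr (by nlinarith)
          have h1 := ov_brkt_sub_bound hθ _ _ hx0 hx1 hy0 hy1
          have h2 := (ov_xy ha hu0).2
          calc ‖_‖ ≤ 2 * |Real.exp (-(Real.pi * R * s) * (u + 1 / u)) -
                Real.exp (-(Real.pi * R * s) * u)| / (ovDelta θ) ^ 2 := h1
            _ ≤ 2 / (ovDelta θ) ^ 2 * (1 - Real.exp (-(Real.pi * R * s / u))) := by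
                rw [div_mul_eq_mul_div]
                gcongr
        · have hcont : Continuous (fun s : ℝ =>
              2 / (ovDelta θ) ^ 2 * (1 - Real.exp (-(Real.pi * R * s / u)))) := by
            fun_prop
          have h0 := hcont.tendsto 0
          have hval : 2 / (ovDelta θ) ^ 2 * (1 - Real.exp (-(Real.pi * R * 0 / u))) = 0 := by
            simp
          rw [hval] at h0
          exact h0.mono_left nhdsWithin_le_nhds)
    simpa using hDCT
  -- eventual equality of the two expressions
  have heq : ∀ᶠ s in nhdsWithin (0:ℝ) (Set.Ioi 0),
      (-((R:ℂ) / 4)) * (∫ u in Set.Ioi (0:ℝ),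
        (ovBrkt θ (Real.exp (-(Real.pi * R * s) * (u + 1 / u))) -
         ovBrkt θ (Real.exp (-(Real.pi * R * s) * u)))) =
      (-I * ((θ : ℂ) - (Real.pi : ℂ)) / (4 * (Real.pi : ℂ) * (s : ℂ)) -
        ((R : ℂ) / 4) *
          (∫ t in Set.Ioi (0:ℝ), (1 / (t : ℂ) ^ 2) *
            ovBrkt θ (Real.exp (-(Real.pi * R * s) * (t + 1 / t))))) := by
    filter_upwards [self_mem_nhdsWithin] with s hs
    have ha : 0 < Real.pi * R * s := mul_pos (mul_pos hπ hR) hs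
    have hV : (∫ t in Set.Ioi (0:ℝ), (1 / (t : ℂ) ^ 2) *
        ovBrkt θ (Real.exp (-(Real.pi * R * s) * (t + 1 / t)))) =
        ∫ t in Set.Ioi (0:ℝ), ovBrkt θ (Real.exp (-(Real.pi * R * s) * (t + 1 / t))) := by
      apply ov_inv_integral
      intro t
      have harg : t⁻¹ + 1 / t⁻¹ = t + 1 / t := by
        rw [one_div, inv_inv, one_div]; ring
      simp only [harg]
    rw [hV]
    rw [integral_sub (ov_sym_integrable hθ ha) (ov_model_integrable hθ ha)]
    rw [ov_model_integral hθ ha]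
    have hsC : ((s:ℝ) : ℂ) ≠ 0 := Complex.ofReal_ne_zero.mpr (ne_of_gt hs)
    have hπC : ((Real.pi : ℝ) : ℂ) ≠ 0 := Complex.ofReal_ne_zero.mpr hπ.ne'
    have hRC : ((R : ℝ) : ℂ) ≠ 0 := Complex.ofReal_ne_zero.mpr hR.ne'
    push_cast
    field_simp
    ring
  have hfin := hmain.const_mul (-((R:ℂ) / 4))
  rw [mul_zero] at hfin
  exact Tendsto.congr' heq hfin
end

section
/- Let R > 0, θ ∈ (0, 2π), b ∈ ℂ with |b| = 1, and ζ ∈ ℂ \ {0} with ζ/b ∉ ℝ. Then the limit as s → 0⁺ of Log(sb)/ζ − ∫₀^∞ (1/(t(tb + ζ)))·( e^{iθ} q_s(t)/(1 − e^{iθ} q_s(t)) ) dt + ∫₀^∞ (1/(t(tb − ζ)))·( e^{−iθ} q_s(t)/(1 − e^{−iθ} q_s(t)) ) dt exists in ℂ. (The logarithmic divergences of the two correction integrals cancel the explicit Log(a)/ζ term as a = sb → 0, so the da-coefficient of d log X_m extends to the singular fiber of the Ooguri–Vafa space.) -/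
open Complex Filter MeasureTheory Set Real

lemma ov_cos_lt_one {θ : ℝ} (hθ : θ ∈ Set.Ioo 0 (2 * Real.pi)) : Real.cos θ < 1 := by
  rcases lt_or_eq_of_le (Real.cos_le_one θ) with h | h
  · exact h
  · exfalso
    have := (Real.cos_eq_one_iff_of_lt_of_lt (by nlinarith [Real.pi_pos, hθ.1]) hθ.2).1 h
    exact absurd this (ne_of_gt hθ.1)

lemma ov_exp_neg_div_div_le {A u : ℝ} (hA : 0 < A) (hu : 0 < u) :
    Real.exp (-(A/u)) / u ≤ (Real.exp 1 * A)⁻¹ := by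
  have hx : 0 < A / u := div_pos hA hu
  have h1 : A / u ≤ Real.exp (A/u - 1) := by
    have := Real.add_one_le_exp (A/u - 1); linarith
  have h2 : Real.exp (A/u - 1) = Real.exp (A/u) / Real.exp 1 := by
    rw [Real.exp_sub]
  have h3 : A / u * Real.exp 1 ≤ Real.exp (A/u) := by
    rw [h2] at h1
    have he : (0:ℝ) < Real.exp 1 := Real.exp_pos 1
    calc A/u * Real.exp 1 ≤ (Real.exp (A/u) / Real.exp 1) * Real.exp 1 := by
          exact mul_le_mul_of_nonneg_right h1 he.le
      _ = Real.exp (A/u) := by field_simp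
  have he : (0:ℝ) < Real.exp 1 := Real.exp_pos 1
  rw [Real.exp_neg, inv_eq_one_div, div_div, inv_eq_one_div,
    div_le_div_iff₀ (by positivity) (by positivity)]
  have h4 : A / u * Real.exp 1 * u ≤ Real.exp (A/u) * u :=
    mul_le_mul_of_nonneg_right h3 hu.le
  have h5 : A / u * Real.exp 1 * u = A * Real.exp 1 := by field_simp
  nlinarith

lemma ov_D_ge {θ q : ℝ} (hθ : θ ∈ Set.Ioo 0 (2 * Real.pi)) (h0 : 0 ≤ q) (h1 : q ≤ 1) :
    ((1 - Real.cos θ)/2)^2 ≤ 1 - 2*q*Real.cos θ + q^2 := by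
  have hc1 : Real.cos θ < 1 := ov_cos_lt_one hθ
  have hc2 : -1 ≤ Real.cos θ := Real.neg_one_le_cos θ
  nlinarith [sq_nonneg (1 - q - (1 - Real.cos θ)/2)]

lemma ov_normSq_one_sub (w : ℂ) (q : ℝ) (hw : Complex.normSq w = 1) :
    Complex.normSq (1 - w * (q:ℂ)) = 1 - 2*q*w.re + q^2 := by
  simp only [Complex.normSq_apply, Complex.sub_re, Complex.sub_im, Complex.mul_re,
    Complex.mul_im, Complex.ofReal_re, Complex.ofReal_im, Complex.one_re, Complex.one_im] at hw ⊢
  ring_nf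
  nlinarith [hw]

lemma ov_abs_ge {θ : ℝ} (hθ : θ ∈ Set.Ioo 0 (2 * Real.pi)) {w : ℂ}
    (hw : Complex.normSq w = 1) (hre : w.re = Real.cos θ) {q : ℝ} (h0 : 0 ≤ q) (h1 : q ≤ 1) :
    (1 - Real.cos θ)/2 ≤ ‖(1 - w * (q:ℂ))‖ := by
  have hm : 0 < 1 - Real.cos θ := by linarith [ov_cos_lt_one hθ]
  rw [Complex.norm_def, Real.le_sqrt (by positivity) (Complex.normSq_nonneg _),
    ov_normSq_one_sub w q hw, hre]
  exact ov_D_ge hθ h0 h1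

lemma ov_ne_zero {θ : ℝ} (hθ : θ ∈ Set.Ioo 0 (2 * Real.pi)) {w : ℂ}
    (hw : Complex.normSq w = 1) (hre : w.re = Real.cos θ) {q : ℝ} (h0 : 0 ≤ q) (h1 : q ≤ 1) :
    1 - w * (q:ℂ) ≠ 0 := by
  have hm : 0 < 1 - Real.cos θ := by linarith [ov_cos_lt_one hθ]
  intro h
  have := ov_abs_ge hθ hw hre h0 h1
  rw [h] at this; simp at this; linarith

lemma ov_norm_f_le {θ : ℝ} (hθ : θ ∈ Set.Ioo 0 (2 * Real.pi)) {w : ℂ}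
    (hw : Complex.normSq w = 1) (hre : w.re = Real.cos θ) {q : ℝ} (h0 : 0 ≤ q) (h1 : q ≤ 1) :
    ‖(w * (q:ℂ) / (1 - w * (q:ℂ)))‖ ≤ 2*q/(1 - Real.cos θ) := by
  have hm : 0 < 1 - Real.cos θ := by linarith [ov_cos_lt_one hθ]
  have habsw : ‖w‖ = 1 := by
    have := Complex.sq_norm w; rw [hw] at this; nlinarith [norm_nonneg w]
  rw [norm_div, norm_mul, habsw, one_mul, Complex.norm_real, Real.norm_eq_abs, _root_.abs_of_nonneg h0]
  have hkey : q / ‖(1 - w * (q:ℂ))‖ ≤ q / ((1 - Real.cos θ)/2) := by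
    apply div_le_div_of_nonneg_left h0 (by linarith) (ov_abs_ge hθ hw hre h0 h1)
  have : q / ((1 - Real.cos θ)/2) = 2*q/(1 - Real.cos θ) := by
    field_simp
  linarith

lemma ov_q_pos (R s t : ℝ) : 0 < Real.exp (-Real.pi * R * s * (t + 1/t)) := Real.exp_pos _

lemma ov_q_le_one {R s t : ℝ} (hR : 0 < R) (hs : 0 ≤ s) (ht : 0 ≤ t) :
    Real.exp (-Real.pi * R * s * (t + 1/t)) ≤ 1 := by
  rw [Real.exp_le_one_iff]
  have h1 : 0 ≤ 1/t := by positivity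
  have : 0 ≤ Real.pi * R * s * (t + 1/t) := by positivity
  nlinarith [Real.pi_pos]

lemma ov_meas_q (R s : ℝ) : Measurable (fun t : ℝ => Real.exp (-Real.pi * R * s * (t + 1/t))) := by
  fun_prop

lemma ov_meas_f (R s : ℝ) (w : ℂ) : Measurable (fun t : ℝ =>
    w * (Real.exp (-Real.pi * R * s * (t + 1/t)) : ℂ) /
      (1 - w * (Real.exp (-Real.pi * R * s * (t + 1/t)) : ℂ))) := by
  have h1 := ov_meas_q R s
  exact (((Complex.measurable_ofReal.comp h1).const_mul w).div
    (measurable_const.sub ((Complex.measurable_ofReal.comp h1).const_mul w)))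

lemma ov_tendsto_f (R : ℝ) (w : ℂ) (hne : 1 - w ≠ 0) (t : ℝ) :
    Tendsto (fun s : ℝ => w * (Real.exp (-Real.pi * R * s * (t + 1/t)) : ℂ) /
      (1 - w * (Real.exp (-Real.pi * R * s * (t + 1/t)) : ℂ)))
      (nhdsWithin 0 (Set.Ioi 0)) (nhds (w / (1 - w))) := by
  have hc : Continuous fun s : ℝ => Real.exp (-Real.pi * R * s * (t + 1/t)) := by fun_prop
  have h0 : Tendsto (fun s : ℝ => Real.exp (-Real.pi * R * s * (t + 1/t)))
      (nhds 0) (nhds 1) := by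
    have h := hc.tendsto 0; simpa using h
  have h1 : Tendsto (fun q : ℝ => w * (q:ℂ) / (1 - w * (q:ℂ))) (nhds 1) (nhds (w/(1-w))) := by
    have hca : ContinuousAt (fun q : ℝ => w * (q:ℂ) / (1 - w * (q:ℂ))) 1 :=
      ContinuousAt.div (by fun_prop) (by fun_prop) (by simpa using hne)
    simpa using hca.tendsto
  exact (h1.comp h0).mono_left nhdsWithin_le_nhds

lemma ov_dct_Ioc (R θ : ℝ) (hR : 0 < R) (hθ : θ ∈ Set.Ioo 0 (2 * Real.pi)) {w : ℂ}
    (hw : Complex.normSq w = 1) (hre : w.re = Real.cos θ) (η : ℂ) (hη : η.im ≠ 0) :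
    Tendsto (fun s : ℝ => ∫ t in Set.Ioc (0:ℝ) 1,
      w * (Real.exp (-Real.pi * R * s * (t + 1/t)) : ℂ) /
        (1 - w * (Real.exp (-Real.pi * R * s * (t + 1/t)) : ℂ)) / ((t:ℂ) + η))
      (nhdsWithin 0 (Set.Ioi 0))
      (nhds (∫ t in Set.Ioc (0:ℝ) 1, (w / (1 - w)) / ((t:ℂ) + η))) := by
  have hm : 0 < 1 - Real.cos θ := by linarith [ov_cos_lt_one hθ]
  have hβ : 0 < |η.im| := abs_pos.2 hη
  have habs : ∀ t : ℝ, |η.im| ≤ ‖((t:ℂ) + η)‖ := by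
    intro t
    have h := Complex.abs_im_le_norm ((t:ℂ) + η)
    simpa using h
  have hane : ∀ t : ℝ, (t:ℂ) + η ≠ 0 := by
    intro t h
    have := habs t; rw [h] at this; simp at this; exact hη this
  apply tendsto_integral_filter_of_dominated_convergence
    (bound := fun _ => 2/(1 - Real.cos θ) * |η.im|⁻¹)
  · filter_upwards with s
    exact ((ov_meas_f R s w).div (Complex.measurable_ofReal.add_const η)).aestronglyMeasurable
  · filter_upwards [self_mem_nhdsWithin] with s (hs : s ∈ Set.Ioi (0:ℝ))
    filter_upwards [ae_restrict_mem measurableSet_Ioc] with t ht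
    rw [norm_div]
    have h1 : ‖(w * (Real.exp (-Real.pi * R * s * (t + 1/t)) : ℂ) /
        (1 - w * (Real.exp (-Real.pi * R * s * (t + 1/t)) : ℂ)))‖ ≤ 2/(1 - Real.cos θ) := by
      refine (ov_norm_f_le hθ hw hre (le_of_lt (ov_q_pos R s t))
        (ov_q_le_one hR (le_of_lt hs) (le_of_lt ht.1))).trans ?_
      gcongr
      nlinarith [ov_q_le_one hR (le_of_lt hs) (le_of_lt ht.1)]
    calc ‖(w * (Real.exp (-Real.pi * R * s * (t + 1/t)) : ℂ) /
          (1 - w * (Real.exp (-Real.pi * R * s * (t + 1/t)) : ℂ)))‖ / ‖((t:ℂ) + η)‖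
        ≤ (2/(1 - Real.cos θ)) / |η.im| := div_le_div₀ (by positivity) h1 hβ (habs t)
      _ = 2/(1 - Real.cos θ) * |η.im|⁻¹ := div_eq_mul_inv _ _
  · exact integrableOn_const (ne_of_lt measure_Ioc_lt_top)
  · filter_upwards with t
    exact (ov_tendsto_f R w (by simpa using ov_ne_zero hθ hw hre zero_le_one le_rfl) t).div_const _

lemma ov_integrable_bound_Ioi {C M : ℝ} :
    IntegrableOn (fun t : ℝ => C * t ^ (-2:ℝ) * M) (Set.Ioi (1:ℝ)) := by
  exact ((integrableOn_Ioi_rpow_of_lt (by norm_num) one_pos).const_mul C).mul_const M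

lemma ov_dct_Ioi (R θ : ℝ) (hR : 0 < R) (hθ : θ ∈ Set.Ioo 0 (2 * Real.pi)) {w : ℂ}
    (hw : Complex.normSq w = 1) (hre : w.re = Real.cos θ) (k : ℝ → ℂ) (hk : Measurable k)
    {C : ℝ} (hC : ∀ t ∈ Set.Ioi (1:ℝ), ‖(k t)‖ ≤ C * t ^ (-2:ℝ)) :
    Tendsto (fun s : ℝ => ∫ t in Set.Ioi (1:ℝ),
      k t * (w * (Real.exp (-Real.pi * R * s * (t + 1/t)) : ℂ) /
        (1 - w * (Real.exp (-Real.pi * R * s * (t + 1/t)) : ℂ))))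
      (nhdsWithin 0 (Set.Ioi 0))
      (nhds (∫ t in Set.Ioi (1:ℝ), k t * (w / (1 - w)))) := by
  have hm : 0 < 1 - Real.cos θ := by linarith [ov_cos_lt_one hθ]
  apply tendsto_integral_filter_of_dominated_convergence
    (bound := fun t => C * t ^ (-2:ℝ) * (2/(1 - Real.cos θ)))
  · filter_upwards with s
    exact (hk.mul (ov_meas_f R s w)).aestronglyMeasurable
  · filter_upwards [self_mem_nhdsWithin] with s (hs : s ∈ Set.Ioi (0:ℝ))
    filter_upwards [ae_restrict_mem measurableSet_Ioi] with t ht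
    rw [norm_mul]
    have hq1 := ov_q_le_one (s := s) (t := t) hR (le_of_lt hs) (by linarith [ht.out])
    have h1 : ‖(w * (Real.exp (-Real.pi * R * s * (t + 1/t)) : ℂ) /
        (1 - w * (Real.exp (-Real.pi * R * s * (t + 1/t)) : ℂ)))‖ ≤ 2/(1 - Real.cos θ) := by
      refine (ov_norm_f_le hθ hw hre (le_of_lt (ov_q_pos R s t)) hq1).trans ?_
      gcongr
      nlinarith
    exact mul_le_mul (hC t ht) h1 (by positivity) (by
      have := hC t ht
      have h0 : (0:ℝ) ≤ ‖(k t)‖ := by positivity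
      linarith)
  · exact ov_integrable_bound_Ioi
  · filter_upwards with t
    exact Tendsto.const_mul _ (ov_tendsto_f R w (by simpa using ov_ne_zero hθ hw hre zero_le_one le_rfl) t)

noncomputable def ovRho (θ q : ℝ) : ℝ := 2*q*(q - Real.cos θ) / (1 - 2*q*Real.cos θ + q^2)

lemma ov_meas_rho (θ : ℝ) : Measurable (ovRho θ) := by
  unfold ovRho; fun_prop

lemma ovRho_abs_le {θ q : ℝ} (hθ : θ ∈ Set.Ioo 0 (2 * Real.pi)) (h0 : 0 ≤ q) (h1 : q ≤ 1) :
    |ovRho θ q| ≤ 16*q/(1 - Real.cos θ)^2 := by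
  have hm : 0 < 1 - Real.cos θ := by linarith [ov_cos_lt_one hθ]
  have hD := ov_D_ge hθ h0 h1
  have hDpos : 0 < 1 - 2*q*Real.cos θ + q^2 := lt_of_lt_of_le (by positivity) hD
  have hnum : |2*q*(q - Real.cos θ)| ≤ 4*q := by
    rw [abs_mul]
    have h2 : |q - Real.cos θ| ≤ 2 := by
      rw [abs_le]; constructor <;> nlinarith [Real.neg_one_le_cos θ, Real.cos_le_one θ]
    have h3 : |2*q| = 2*q := abs_of_nonneg (by linarith)
    nlinarith [abs_nonneg (q - Real.cos θ), abs_nonneg (2*q)]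
  rw [ovRho, abs_div, abs_of_pos hDpos]
  calc |2*q*(q - Real.cos θ)| / (1 - 2*q*Real.cos θ + q^2)
      ≤ (4*q) / (((1 - Real.cos θ)/2)^2 ) := div_le_div₀ (by positivity) hnum (by positivity) hD
    _ = 16*q/(1 - Real.cos θ)^2 := by field_simp; ring

lemma ovRho_sub_one_abs_le {θ q : ℝ} (hθ : θ ∈ Set.Ioo 0 (2 * Real.pi)) (h0 : 0 ≤ q) (h1 : q ≤ 1) :
    |ovRho θ q - 1| ≤ 8*(1-q)/(1 - Real.cos θ)^2 := by
  have hm : 0 < 1 - Real.cos θ := by linarith [ov_cos_lt_one hθ]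
  have hD := ov_D_ge hθ h0 h1
  have hDpos : 0 < 1 - 2*q*Real.cos θ + q^2 := lt_of_lt_of_le (by positivity) hD
  have hkey : ovRho θ q - 1 = (q^2 - 1) / (1 - 2*q*Real.cos θ + q^2) := by
    rw [ovRho]; field_simp; ring
  rw [hkey, abs_div, abs_of_pos hDpos]
  have hnum : |q^2 - 1| ≤ 2*(1-q) := by
    rw [abs_le]; constructor <;> nlinarith
  calc |q^2 - 1| / (1 - 2*q*Real.cos θ + q^2)
      ≤ (2*(1-q)) / (((1 - Real.cos θ)/2)^2) := div_le_div₀ (by nlinarith) hnum (by positivity) hD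
    _ = 8*(1-q)/(1 - Real.cos θ)^2 := by field_simp; ring

-- the sum identity
lemma ov_sum_identity {θ : ℝ} (hθ : θ ∈ Set.Ioo 0 (2 * Real.pi)) {q : ℝ} (h0 : 0 ≤ q) (h1 : q ≤ 1) :
    Complex.exp ((θ:ℂ) * I) * (q:ℂ) / (1 - Complex.exp ((θ:ℂ) * I) * (q:ℂ)) +
      Complex.exp (-(θ:ℂ) * I) * (q:ℂ) / (1 - Complex.exp (-(θ:ℂ) * I) * (q:ℂ)) =
      ((-(ovRho θ q) : ℝ) : ℂ) := by
  set w : ℂ := Complex.exp ((θ:ℂ) * I) with hwdef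
  set v : ℂ := Complex.exp (-(θ:ℂ) * I) with hvdef
  have hmul : w * v = 1 := by
    rw [hwdef, hvdef, ← Complex.exp_add]
    norm_num
  have hsum : w + v = 2 * (Real.cos θ : ℂ) := by
    rw [hwdef, hvdef]
    have h1 : (-(θ:ℂ)) * I = ((-θ : ℝ) : ℂ) * I := by push_cast; ring
    rw [h1, Complex.exp_mul_I, Complex.exp_mul_I]
    simp [Complex.ofReal_neg, Complex.cos_neg, Complex.sin_neg, ← Complex.ofReal_cos]
    ring
  have hwnormSq : Complex.normSq w = 1 := by
    have : ‖w‖ = 1 := by rw [hwdef]; exact Complex.norm_exp_ofReal_mul_I θ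
    rw [← Complex.sq_norm, this]; norm_num
  have hvnormSq : Complex.normSq v = 1 := by
    have h1 : (-(θ:ℂ)) * I = ((-θ : ℝ) : ℂ) * I := by push_cast; ring
    have : ‖v‖ = 1 := by rw [hvdef, h1]; exact Complex.norm_exp_ofReal_mul_I (-θ)
    rw [← Complex.sq_norm, this]; norm_num
  have hwre : w.re = Real.cos θ := by
    rw [hwdef, Complex.exp_ofReal_mul_I_re]
  have hvre : v.re = Real.cos θ := by
    have h1 : (-(θ:ℂ)) * I = ((-θ : ℝ) : ℂ) * I := by push_cast; ring
    rw [hvdef, h1, Complex.exp_ofReal_mul_I_re, Real.cos_neg]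
  have hne1 : 1 - w * (q:ℂ) ≠ 0 := ov_ne_zero hθ hwnormSq hwre h0 h1
  have hne2 : 1 - v * (q:ℂ) ≠ 0 := ov_ne_zero hθ hvnormSq hvre h0 h1
  have hm : 0 < 1 - Real.cos θ := by linarith [ov_cos_lt_one hθ]
  have hD := ov_D_ge hθ h0 h1
  have hDpos : (0:ℝ) < 1 - 2*q*Real.cos θ + q^2 := lt_of_lt_of_le (by positivity) hD
  have hne3 : ((1 - 2*q*Real.cos θ + q^2 : ℝ) : ℂ) ≠ 0 := by
    exact_mod_cast ne_of_gt hDpos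
  have hne3' : (1:ℂ) - 2*(q:ℂ)*(Real.cos θ:ℂ)+(q:ℂ)^2 ≠ 0 := by
    have h := Complex.ofReal_ne_zero.2 (ne_of_gt hDpos)
    simpa only [Complex.ofReal_sub, Complex.ofReal_add, Complex.ofReal_one, Complex.ofReal_mul,
      Complex.ofReal_pow, Complex.ofReal_ofNat] using h
  have key : w*(q:ℂ)/(1-w*(q:ℂ)) + v*(q:ℂ)/(1-v*(q:ℂ))
      = (-(2*(q:ℂ)*((q:ℂ)-(Real.cos θ:ℂ)))) / (1-2*(q:ℂ)*(Real.cos θ:ℂ)+(q:ℂ)^2) := by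
    rw [div_add_div _ _ hne1 hne2, div_eq_div_iff (mul_ne_zero hne1 hne2) hne3']
    linear_combination ((q:ℂ)*(1-2*(q:ℂ)*(Real.cos θ:ℂ)+(q:ℂ)^2) + 2*(q:ℂ)^2*(Real.cos θ:ℂ) - 2*(q:ℂ)^3) * hsum +
      (-2*(q:ℂ)^2*(1-2*(q:ℂ)*(Real.cos θ:ℂ)+(q:ℂ)^2) - 2*(q:ℂ)^3*(Real.cos θ:ℂ) + 2*(q:ℂ)^4) * hmul
  rw [key, ovRho, Complex.ofReal_neg, Complex.ofReal_div]
  simp only [Complex.ofReal_sub, Complex.ofReal_add, Complex.ofReal_one, Complex.ofReal_mul,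
    Complex.ofReal_pow, Complex.ofReal_ofNat]
  rw [neg_div]

-- substitution step
lemma ov_subst_s16 (R θ s : ℝ) (hs : 0 < s) :
    ∫ t in Set.Ioc (0:ℝ) 1, ovRho θ (Real.exp (-Real.pi * R * s * (t + 1/t))) / t
      = ∫ u in Set.Ioc (0:ℝ) s⁻¹,
          ovRho θ (Real.exp (-Real.pi * R * s * (s*u + 1/(s*u)))) / u := by
  have hinv : (0:ℝ) ≤ s⁻¹ := by positivity
  rw [← intervalIntegral.integral_of_le zero_le_one,
      ← intervalIntegral.integral_of_le hinv]
  have key : ∀ x : ℝ, ovRho θ (Real.exp (-Real.pi * R * s * (x + 1/x))) / x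
      = s⁻¹ • ((fun u => ovRho θ (Real.exp (-Real.pi * R * s * (s*u + 1/(s*u)))) / u) (s⁻¹ * x)) := by
    intro x
    rcases eq_or_ne x 0 with h | h
    · simp [h]
    · have h1 : s * (s⁻¹ * x) = x := by field_simp
      simp only [smul_eq_mul, h1]
      field_simp
  calc ∫ x in (0:ℝ)..1, ovRho θ (Real.exp (-Real.pi * R * s * (x + 1/x))) / x
      = ∫ x in (0:ℝ)..1, s⁻¹ • ((fun u => ovRho θ (Real.exp (-Real.pi * R * s * (s*u + 1/(s*u)))) / u) (s⁻¹ * x)) := by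
        refine intervalIntegral.integral_congr ?_
        intro x _; exact key x
    _ = s⁻¹ • ∫ x in (0:ℝ)..1, (fun u => ovRho θ (Real.exp (-Real.pi * R * s * (s*u + 1/(s*u)))) / u) (s⁻¹ * x) := by
        rw [intervalIntegral.integral_smul]
    _ = s⁻¹ • ((s⁻¹)⁻¹ • ∫ x in (s⁻¹*0)..(s⁻¹*1), (fun u => ovRho θ (Real.exp (-Real.pi * R * s * (s*u + 1/(s*u)))) / u) x) := by
        exact congrArg (fun z => s⁻¹ • z)
          (intervalIntegral.integral_comp_mul_left
            (fun u => ovRho θ (Real.exp (-Real.pi * R * s * (s*u + 1/(s*u)))) / u)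
            (inv_ne_zero hs.ne'))
    _ = ∫ u in (0:ℝ)..s⁻¹, ovRho θ (Real.exp (-Real.pi * R * s * (s*u + 1/(s*u)))) / u := by
        rw [smul_smul]
        field_simp
        simp only [one_smul, zero_div]

lemma ov_core_limit (R θ : ℝ) (hR : 0 < R) (hθ : θ ∈ Set.Ioo 0 (2 * Real.pi)) :
    ∃ L0 : ℝ, Tendsto (fun s : ℝ => Real.log s +
      ∫ t in Set.Ioc (0:ℝ) 1, ovRho θ (Real.exp (-Real.pi * R * s * (t + 1/t))) / t)
      (nhdsWithin 0 (Set.Ioi 0)) (nhds L0) := by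
  have hm : 0 < 1 - Real.cos θ := by linarith [ov_cos_lt_one hθ]
  have ha : 0 < Real.pi * R := by positivity
  set m := 1 - Real.cos θ with hmdef
  set a := Real.pi * R with hadef
  set H : ℝ → ℝ → ℝ := fun s u => ovRho θ (Real.exp (-Real.pi * R * s * (s*u + 1/(s*u)))) / u
    with hHdef
  set F : ℝ → ℝ → ℝ := fun s u => Set.indicator (Set.Ioc (0:ℝ) s⁻¹) (H s) u -
      Set.indicator (Set.Ioc (1:ℝ) s⁻¹) (fun u => 1/u) u with hFdef
  set G : ℝ → ℝ := fun u => ovRho θ (Real.exp (-(Real.pi * R / u))) / u -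
      Set.indicator (Set.Ioi (1:ℝ)) (fun u => 1/u) u with hGdef
  -- basic exponent facts
  have hexp_eq : ∀ s u : ℝ, 0 < s → 0 < u →
      -Real.pi * R * s * (s*u + 1/(s*u)) = -(a*s^2*u + a/u) := by
    intro s u hs hu
    rw [hadef]; field_simp
  have hq_le : ∀ s u : ℝ, 0 < s → 0 < u →
      Real.exp (-Real.pi * R * s * (s*u + 1/(s*u))) ≤ Real.exp (-(a/u)) := by
    intro s u hs hu
    apply Real.exp_le_exp.2
    rw [hexp_eq s u hs hu]
    have : 0 ≤ a*s^2*u := by positivity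
    linarith
  have hq_le_one : ∀ s u : ℝ, 0 < s → 0 < u →
      Real.exp (-Real.pi * R * s * (s*u + 1/(s*u))) ≤ 1 := by
    intro s u hs hu
    refine (hq_le s u hs hu).trans ?_
    rw [Real.exp_le_one_iff]
    have : 0 < a/u := by positivity
    linarith
  have hone_sub_q : ∀ s u : ℝ, 0 < s → 0 < u → u ≤ s⁻¹ →
      1 - Real.exp (-Real.pi * R * s * (s*u + 1/(s*u))) ≤ 2*a/u := by
    intro s u hs hu hus
    have h2 : 1 - Real.exp (-(a*s^2*u + a/u)) ≤ a*s^2*u + a/u := by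
      have := Real.add_one_le_exp (-(a*s^2*u + a/u)); linarith
    have hsu : s*u ≤ 1 := by
      calc s*u ≤ s*s⁻¹ := by nlinarith
        _ = 1 := mul_inv_cancel₀ hs.ne'
    have h3 : s^2*u ≤ 1/u := by
      rw [le_div_iff₀ hu]
      have heq : s^2*u*u = (s*u)^2 := by ring
      rw [heq]
      nlinarith [mul_pos hs hu]
    have h4 : a*s^2*u + a/u ≤ 2*a/u := by
      have h5 : a*(s^2*u) ≤ a*(1/u) := by nlinarith
      have h6 : a*(1/u) = a/u := by ring
      have h7 : a*s^2*u = a*(s^2*u) := by ring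
      have h8 : 2*a/u = a/u + a/u := by ring
      linarith
    rw [hexp_eq s u hs hu]; linarith
  -- pointwise bounds on H
  have hbnd1 : ∀ s u : ℝ, 0 < s → u ∈ Set.Ioc (0:ℝ) 1 →
      |H s u| ≤ 16/(m^2*(Real.exp 1 * a)) := by
    intro s u hs hu
    have hu0 := hu.1
    have hqpos : (0:ℝ) < Real.exp (-Real.pi * R * s * (s*u + 1/(s*u))) := Real.exp_pos _
    have hq1 := hq_le_one s u hs hu0
    have hrho := ovRho_abs_le hθ hqpos.le hq1
    calc |H s u| = |ovRho θ (Real.exp (-Real.pi * R * s * (s*u + 1/(s*u))))| / u := by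
          rw [hHdef]; rw [abs_div, abs_of_pos hu0]
      _ ≤ (16 * Real.exp (-Real.pi * R * s * (s*u + 1/(s*u))) / m^2) / u := by
          gcongr
      _ = (16/m^2) * (Real.exp (-Real.pi * R * s * (s*u + 1/(s*u))) / u) := by ring
      _ ≤ (16/m^2) * (Real.exp (-(a/u)) / u) := by
          gcongr
          exact Real.exp_le_exp.mp (hq_le s u hs hu0)
      _ ≤ (16/m^2) * (Real.exp 1 * a)⁻¹ := by
          gcongr
          exact ov_exp_neg_div_div_le ha hu0
      _ = 16/(m^2*(Real.exp 1 * a)) := by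
          rw [← div_eq_mul_inv, div_div]
  have hbnd2 : ∀ s u : ℝ, 0 < s → u ∈ Set.Ioc (1:ℝ) s⁻¹ →
      |H s u| ≤ 8/m^2 + 1 := by
    intro s u hs hu
    have hu0 : (0:ℝ) < u := lt_trans one_pos hu.1
    have hqpos : (0:ℝ) < Real.exp (-Real.pi * R * s * (s*u + 1/(s*u))) := Real.exp_pos _
    have hq1 := hq_le_one s u hs hu0
    have hrho := ovRho_sub_one_abs_le hθ hqpos.le hq1
    have habs : |ovRho θ (Real.exp (-Real.pi * R * s * (s*u + 1/(s*u))))| ≤ 8/m^2 + 1 := by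
      have h1 : |ovRho θ (Real.exp (-Real.pi * R * s * (s*u + 1/(s*u))))| ≤
          |ovRho θ (Real.exp (-Real.pi * R * s * (s*u + 1/(s*u)))) - 1| + 1 := by
        have := abs_sub_abs_le_abs_sub (ovRho θ (Real.exp (-Real.pi * R * s * (s*u + 1/(s*u))))) 1
        rw [abs_one] at this; linarith
      have h2 : 8*(1 - Real.exp (-Real.pi * R * s * (s*u + 1/(s*u))))/m^2 ≤ 8/m^2 := by
        gcongr
        · linarith
      linarith
    calc |H s u| = |ovRho θ (Real.exp (-Real.pi * R * s * (s*u + 1/(s*u))))| / u := by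
          rw [hHdef]; rw [abs_div, abs_of_pos hu0]
      _ ≤ |ovRho θ (Real.exp (-Real.pi * R * s * (s*u + 1/(s*u))))| := by
          apply div_le_self (abs_nonneg _) (by linarith [hu.1])
      _ ≤ 8/m^2 + 1 := habs
  have hbnd3 : ∀ s u : ℝ, 0 < s → u ∈ Set.Ioc (1:ℝ) s⁻¹ →
      |H s u - 1/u| ≤ 16*a/m^2 * u^(-2:ℝ) := by
    intro s u hs hu
    have hu0 : (0:ℝ) < u := lt_trans one_pos hu.1
    have hqpos : (0:ℝ) < Real.exp (-Real.pi * R * s * (s*u + 1/(s*u))) := Real.exp_pos _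
    have hq1 := hq_le_one s u hs hu0
    have hrho := ovRho_sub_one_abs_le hθ hqpos.le hq1
    have hrpow : u^(-2:ℝ) = (u^2)⁻¹ := by
      rw [show (-2:ℝ) = -((2:ℕ):ℝ) by norm_num, Real.rpow_neg hu0.le, Real.rpow_natCast]
    have hsub := hone_sub_q s u hs hu0 hu.2
    calc |H s u - 1/u|
        = |ovRho θ (Real.exp (-Real.pi * R * s * (s*u + 1/(s*u)))) - 1| / u := by
          rw [hHdef]
          rw [show ovRho θ (Real.exp (-Real.pi * R * s * (s*u + 1/(s*u)))) / u - 1/u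
            = (ovRho θ (Real.exp (-Real.pi * R * s * (s*u + 1/(s*u)))) - 1)/u by ring,
            abs_div, abs_of_pos hu0]
      _ ≤ (8*(1 - Real.exp (-Real.pi * R * s * (s*u + 1/(s*u))))/m^2) / u := by
          gcongr
      _ ≤ (8*(2*a/u)/m^2) / u := by
          gcongr
      _ = 16*a/m^2 * (u^2)⁻¹ := by
          field_simp
          ring
      _ = 16*a/m^2 * u^(-2:ℝ) := by rw [hrpow]
  -- measurability of H s
  have hHmeas : ∀ s : ℝ, Measurable (H s) := by
    intro s
    simp only [hHdef]
    exact (((ov_meas_rho θ).comp (by fun_prop)).div measurable_id)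
  -- integrability of the dominating function
  have hboundInt : Integrable (fun u => Set.indicator (Set.Ioc (0:ℝ) 1)
        (fun _ => 16/(m^2*(Real.exp 1 * a))) u
      + Set.indicator (Set.Ioi (1:ℝ)) (fun v => 16*a/m^2 * v^(-2:ℝ)) u)
      (volume.restrict (Set.Ioi (0:ℝ))) := by
    apply Integrable.add
    · rw [integrable_indicator_iff measurableSet_Ioc]
      exact integrableOn_const (ne_of_lt (lt_of_le_of_lt (Measure.restrict_apply_le _ _)
        measure_Ioc_lt_top))
    · rw [integrable_indicator_iff measurableSet_Ioi]
      have h1 : IntegrableOn (fun v : ℝ => 16*a/m^2 * v^(-2:ℝ)) (Set.Ioi (1:ℝ)) volume :=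
        (integrableOn_Ioi_rpow_of_lt (by norm_num) one_pos).const_mul _
      have hset : Set.Ioi (1:ℝ) ∩ Set.Ioi 0 = Set.Ioi 1 := by
        rw [Set.Ioi_inter_Ioi]; norm_num
      rw [IntegrableOn, Measure.restrict_restrict measurableSet_Ioi, hset]
      exact h1
  -- a.e. pointwise convergence
  have hae_ne : ∀ᵐ u : ℝ ∂(volume.restrict (Set.Ioi (0:ℝ))), u ≠ (1:ℝ) := by
    apply ae_restrict_of_ae
    rw [ae_iff]
    simp
  have hptwise : ∀ᵐ u ∂(volume.restrict (Set.Ioi (0:ℝ))),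
      Tendsto (fun s => F s u) (nhdsWithin 0 (Set.Ioi 0)) (nhds (G u)) := by
    filter_upwards [ae_restrict_mem measurableSet_Ioi, hae_ne] with u hu hne
    have hu0 : (0:ℝ) < u := hu
    have humin : 0 < min 1 u⁻¹ := by positivity
    have hev : Set.Ioo (0:ℝ) (min 1 u⁻¹) ∈ nhdsWithin (0:ℝ) (Set.Ioi 0) :=
      Ioo_mem_nhdsGT_of_mem ⟨le_refl 0, humin⟩
    have heq : ∀ᶠ s in nhdsWithin (0:ℝ) (Set.Ioi 0),
        ovRho θ (Real.exp (-(a*s^2*u + a/u))) / u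
          - Set.indicator (Set.Ioi (1:ℝ)) (fun v => 1/v) u = F s u := by
      filter_upwards [hev] with s hs
      have hs0 : 0 < s := hs.1
      have hsu : u < s⁻¹ := by
        have h1 : s < u⁻¹ := lt_of_lt_of_le hs.2 (min_le_right _ _)
        have h2 : (u⁻¹)⁻¹ < s⁻¹ := by
          apply inv_strictAnti₀ hs0 h1
        rwa [inv_inv] at h2
      have hmem1 : u ∈ Set.Ioc (0:ℝ) s⁻¹ := ⟨hu0, hsu.le⟩
      have hind1 : Set.indicator (Set.Ioc (0:ℝ) s⁻¹) (H s) u = H s u :=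
        Set.indicator_of_mem hmem1 _
      have hind2 : Set.indicator (Set.Ioc (1:ℝ) s⁻¹) (fun v : ℝ => 1/v) u
          = Set.indicator (Set.Ioi (1:ℝ)) (fun v : ℝ => 1/v) u := by
        rcases lt_or_gt_of_ne hne with h | h
        · have hn1 : u ∉ Set.Ioc (1:ℝ) s⁻¹ := fun hmem => absurd hmem.1 (not_lt.2 h.le)
          have hn2 : u ∉ Set.Ioi (1:ℝ) := fun hmem => absurd hmem (not_lt.2 h.le)
          rw [Set.indicator_of_notMem hn1, Set.indicator_of_notMem hn2]
        · have hm1 : u ∈ Set.Ioc (1:ℝ) s⁻¹ := ⟨h, hsu.le⟩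
          rw [Set.indicator_of_mem hm1, Set.indicator_of_mem (Set.mem_Ioi.2 h)]
      have hHeq : H s u = ovRho θ (Real.exp (-(a*s^2*u + a/u))) / u := by
        simp only [hHdef]
        rw [hexp_eq s u hs0 hu0]
      simp only [hFdef]
      rw [hind1, hind2, hHeq]
    apply Tendsto.congr' heq
    simp only [hGdef]
    apply Tendsto.sub_const
    apply Tendsto.div_const
    have hc : Continuous fun s : ℝ => Real.exp (-(a*s^2*u + a/u)) := by fun_prop
    have hcont1 := hc.tendsto 0
    have h00 : Real.exp (-(a*(0:ℝ)^2*u + a/u)) = Real.exp (-(Real.pi*R/u)) := by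
      rw [hadef]; norm_num
    rw [h00] at hcont1
    have hxpos : (0:ℝ) < Real.exp (-(Real.pi*R/u)) := Real.exp_pos _
    have hxle : Real.exp (-(Real.pi*R/u)) ≤ 1 := by
      rw [Real.exp_le_one_iff]
      have : 0 < Real.pi*R/u := by positivity
      linarith
    have hcontρ : ContinuousAt (ovRho θ) (Real.exp (-(Real.pi*R/u))) := by
      have hden : 1 - 2*Real.exp (-(Real.pi*R/u))*Real.cos θ
          + (Real.exp (-(Real.pi*R/u)))^2 ≠ 0 :=
        ne_of_gt (lt_of_lt_of_le (by positivity) (ov_D_ge hθ hxpos.le hxle))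
      show ContinuousAt (fun q => 2*q*(q - Real.cos θ) / (1 - 2*q*Real.cos θ + q^2)) _
      exact ContinuousAt.div (by fun_prop) (by fun_prop) hden
    exact hcontρ.tendsto.comp (hcont1.mono_left nhdsWithin_le_nhds)
  -- domination
  have hdom : ∀ᶠ s in nhdsWithin (0:ℝ) (Set.Ioi 0),
      ∀ᵐ u ∂(volume.restrict (Set.Ioi (0:ℝ))),
        ‖F s u‖ ≤ Set.indicator (Set.Ioc (0:ℝ) 1) (fun _ => 16/(m^2*(Real.exp 1 * a))) u
          + Set.indicator (Set.Ioi (1:ℝ)) (fun v => 16*a/m^2 * v^(-2:ℝ)) u := by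
    filter_upwards [Ioo_mem_nhdsGT_of_mem (Set.mem_Ico.2 ⟨le_refl (0:ℝ), one_pos⟩)] with s hs
    filter_upwards [ae_restrict_mem measurableSet_Ioi] with u hu
    have hu0 : (0:ℝ) < u := hu
    have hs0 : 0 < s := hs.1
    have hsinv : 1 < s⁻¹ := (one_lt_inv₀ hs0).2 hs.2
    rw [Real.norm_eq_abs]
    by_cases hu1 : u ≤ 1
    · have hmem : u ∈ Set.Ioc (0:ℝ) s⁻¹ := ⟨hu0, le_trans hu1 hsinv.le⟩
      have hnot : u ∉ Set.Ioc (1:ℝ) s⁻¹ := fun hmem' => absurd hmem'.1 (not_lt.2 hu1)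
      have hnot2 : u ∉ Set.Ioi (1:ℝ) := fun h => absurd h (not_lt.2 hu1)
      simp only [hFdef]
      rw [Set.indicator_of_mem hmem, Set.indicator_of_notMem hnot,
        Set.indicator_of_mem (Set.mem_Ioc.2 ⟨hu0, hu1⟩), Set.indicator_of_notMem hnot2]
      rw [sub_zero, add_zero]
      exact hbnd1 s u hs0 ⟨hu0, hu1⟩
    · push_neg at hu1
      have hn1 : u ∉ Set.Ioc (0:ℝ) 1 := fun h => absurd h.2 (not_le.2 hu1)
      simp only [hFdef]
      rw [Set.indicator_of_notMem hn1, Set.indicator_of_mem (Set.mem_Ioi.2 hu1), zero_add]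
      by_cases hus : u ≤ s⁻¹
      · rw [Set.indicator_of_mem (Set.mem_Ioc.2 ⟨hu0, hus⟩),
          Set.indicator_of_mem (Set.mem_Ioc.2 ⟨hu1, hus⟩)]
        exact hbnd3 s u hs0 ⟨hu1, hus⟩
      · push_neg at hus
        have hn2 : u ∉ Set.Ioc (0:ℝ) s⁻¹ := fun h => absurd h.2 (not_le.2 hus)
        have hn3 : u ∉ Set.Ioc (1:ℝ) s⁻¹ := fun h => absurd h.2 (not_le.2 hus)
        rw [Set.indicator_of_notMem hn2, Set.indicator_of_notMem hn3, sub_zero,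
            abs_zero]
        positivity
  -- measurability of F s
  have hFmeas : ∀ s : ℝ, AEStronglyMeasurable (F s) (volume.restrict (Set.Ioi (0:ℝ))) := by
    intro s
    apply Measurable.aestronglyMeasurable
    simp only [hFdef]
    exact ((hHmeas s).indicator measurableSet_Ioc).sub
      ((by fun_prop : Measurable fun v : ℝ => 1/v).indicator measurableSet_Ioc)
  have hDCT := tendsto_integral_filter_of_dominated_convergence
      (μ := volume.restrict (Set.Ioi (0:ℝ))) (F := F) (f := G) _
      (Filter.Eventually.of_forall hFmeas) hdom hboundInt hptwise
  refine ⟨∫ u in Set.Ioi (0:ℝ), G u, ?_⟩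
  apply Tendsto.congr' ?_ hDCT
  -- eventual equality of the integral of F with the original expression
  filter_upwards [Ioo_mem_nhdsGT_of_mem (Set.mem_Ico.2 ⟨le_refl (0:ℝ), one_pos⟩)] with s hs
  have hs0 : 0 < s := hs.1
  have hsinv : 1 < s⁻¹ := (one_lt_inv₀ hs0).2 hs.2
  -- integrability pieces
  have hint1 : IntegrableOn (H s) (Set.Ioc (0:ℝ) 1) volume := by
    apply Measure.integrableOn_of_bounded (ne_of_lt measure_Ioc_lt_top)
      (hHmeas s).aestronglyMeasurable
    filter_upwards [ae_restrict_mem measurableSet_Ioc] with u hu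
    rw [Real.norm_eq_abs]
    exact hbnd1 s u hs0 hu
  have hint2 : IntegrableOn (H s) (Set.Ioc (1:ℝ) s⁻¹) volume := by
    apply Measure.integrableOn_of_bounded (ne_of_lt measure_Ioc_lt_top)
      (hHmeas s).aestronglyMeasurable
    filter_upwards [ae_restrict_mem measurableSet_Ioc] with u hu
    rw [Real.norm_eq_abs]
    exact hbnd2 s u hs0 hu
  have hintH : IntegrableOn (H s) (Set.Ioc (0:ℝ) s⁻¹) volume := by
    have := hint1.union hint2
    rwa [Set.Ioc_union_Ioc_eq_Ioc zero_le_one hsinv.le] at this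
  have hint3 : IntegrableOn (fun v : ℝ => 1/v) (Set.Ioc (1:ℝ) s⁻¹) volume := by
    apply Measure.integrableOn_of_bounded (ne_of_lt measure_Ioc_lt_top)
      ((by fun_prop : Measurable fun v : ℝ => 1/v)).aestronglyMeasurable (M := 1)
    filter_upwards [ae_restrict_mem measurableSet_Ioc] with u hu
    rw [Real.norm_eq_abs, abs_div, abs_one, abs_of_pos (lt_trans one_pos hu.1)]
    rw [div_le_one (lt_trans one_pos hu.1)]
    exact hu.1.le
  -- absorb restrict
  have habsorbInt : ∀ (T : Set ℝ), T ⊆ Set.Ioi (0:ℝ) → MeasurableSet T →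
      ∀ g : ℝ → ℝ, IntegrableOn g T volume →
        Integrable (Set.indicator T g) (volume.restrict (Set.Ioi (0:ℝ))) := by
    intro T hT hTm g hg
    rw [integrable_indicator_iff hTm, IntegrableOn, Measure.restrict_restrict hTm,
      Set.inter_eq_left.2 hT]
    exact hg
  have habsorbEq : ∀ (T : Set ℝ), T ⊆ Set.Ioi (0:ℝ) → MeasurableSet T →
      ∀ g : ℝ → ℝ, (∫ u in Set.Ioi (0:ℝ), Set.indicator T g u) = ∫ u in T, g u := by
    intro T hT hTm g
    rw [integral_indicator hTm, Measure.restrict_restrict hTm, Set.inter_eq_left.2 hT]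
  have hsubIoc : Set.Ioc (0:ℝ) s⁻¹ ⊆ Set.Ioi (0:ℝ) := fun x hx => hx.1
  have hsubIoc2 : Set.Ioc (1:ℝ) s⁻¹ ⊆ Set.Ioi (0:ℝ) := fun x hx => lt_trans one_pos hx.1
  have hlog : (∫ u in Set.Ioc (1:ℝ) s⁻¹, (1:ℝ)/u) = - Real.log s := by
    rw [← intervalIntegral.integral_of_le hsinv.le]
    rw [integral_one_div (by
      intro h
      rw [Set.uIcc_of_le hsinv.le] at h
      have := h.1
      norm_num at this)]
    rw [div_one, Real.log_inv]
  calc (∫ u in Set.Ioi (0:ℝ), F s u)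
      = (∫ u in Set.Ioi (0:ℝ), Set.indicator (Set.Ioc (0:ℝ) s⁻¹) (H s) u)
        - ∫ u in Set.Ioi (0:ℝ), Set.indicator (Set.Ioc (1:ℝ) s⁻¹) (fun v : ℝ => 1/v) u := by
        simp only [hFdef]
        exact integral_sub (habsorbInt _ hsubIoc measurableSet_Ioc _ hintH)
          (habsorbInt _ hsubIoc2 measurableSet_Ioc _ hint3)
    _ = (∫ u in Set.Ioc (0:ℝ) s⁻¹, H s u) - ∫ u in Set.Ioc (1:ℝ) s⁻¹, (1:ℝ)/u := by
        rw [habsorbEq _ hsubIoc measurableSet_Ioc, habsorbEq _ hsubIoc2 measurableSet_Ioc]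
    _ = Real.log s + ∫ t in Set.Ioc (0:ℝ) 1,
          ovRho θ (Real.exp (-Real.pi * R * s * (t + 1/t))) / t := by
        rw [hlog, ov_subst_s16 R θ s hs0]
        simp only [hHdef]
        ring


-- q_s(t) ≤ exp(-(πRs/t)) for t > 0, s > 0
lemma ov_q_le_exp {R s t : ℝ} (hR : 0 < R) (hs : 0 < s) (ht : 0 < t) :
    Real.exp (-Real.pi * R * s * (t + 1/t)) ≤ Real.exp (-((Real.pi*R*s)/t)) := by
  apply Real.exp_le_exp.2
  have h1 : -Real.pi * R * s * (t + 1/t) = -(Real.pi*R*s*t) - (Real.pi*R*s)/t := by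
    field_simp; ring
  have h2 : 0 ≤ Real.pi*R*s*t := by positivity
  rw [h1]; linarith

lemma ov_int_Ioc_div_t (R θ s : ℝ) (hR : 0 < R) (hs : 0 < s)
    (hθ : θ ∈ Set.Ioo 0 (2 * Real.pi)) {w : ℂ}
    (hw : Complex.normSq w = 1) (hre : w.re = Real.cos θ) :
    IntegrableOn (fun t : ℝ => w * (Real.exp (-Real.pi * R * s * (t + 1/t)) : ℂ) /
      (1 - w * (Real.exp (-Real.pi * R * s * (t + 1/t)) : ℂ)) / (t:ℂ)) (Set.Ioc (0:ℝ) 1) := by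
  have hm : 0 < 1 - Real.cos θ := by linarith [ov_cos_lt_one hθ]
  have hA : 0 < Real.pi*R*s := by positivity
  apply Measure.integrableOn_of_bounded (ne_of_lt measure_Ioc_lt_top)
    ((ov_meas_f R s w).div Complex.measurable_ofReal).aestronglyMeasurable
    (M := 2/(1 - Real.cos θ) * (Real.exp 1 * (Real.pi*R*s))⁻¹)
  filter_upwards [ae_restrict_mem measurableSet_Ioc] with t ht
  rw [Pi.div_apply, norm_div, Complex.norm_real, Real.norm_eq_abs, abs_of_pos ht.1]
  have hq1 := ov_q_le_one (R := R) (s := s) (t := t) hR hs.le ht.1.le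
  have hq0 := (ov_q_pos R s t).le
  have hc2 : (0:ℝ) ≤ 2/(1 - Real.cos θ) := div_nonneg (by norm_num) hm.le
  calc ‖(w * (Real.exp (-Real.pi * R * s * (t + 1/t)) : ℂ) /
        (1 - w * (Real.exp (-Real.pi * R * s * (t + 1/t)) : ℂ)))‖ / t
      ≤ (2 * Real.exp (-Real.pi * R * s * (t + 1/t)) / (1 - Real.cos θ)) / t :=
        div_le_div₀ (div_nonneg (by positivity) hm.le)
          (ov_norm_f_le hθ hw hre hq0 hq1) ht.1 le_rfl
    _ = (2/(1 - Real.cos θ)) * (Real.exp (-Real.pi * R * s * (t + 1/t)) / t) := by ring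
    _ ≤ (2/(1 - Real.cos θ)) * (Real.exp (-((Real.pi*R*s)/t)) / t) :=
        mul_le_mul_of_nonneg_left
          (div_le_div₀ (Real.exp_pos _).le (ov_q_le_exp hR hs ht.1) ht.1 le_rfl) hc2
    _ ≤ 2/(1 - Real.cos θ) * (Real.exp 1 * (Real.pi*R*s))⁻¹ :=
        mul_le_mul_of_nonneg_left (ov_exp_neg_div_div_le hA ht.1) hc2

lemma ov_int_Ioc_div_shift (R θ s : ℝ) (hR : 0 < R) (hs : 0 < s)
    (hθ : θ ∈ Set.Ioo 0 (2 * Real.pi)) {w : ℂ}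
    (hw : Complex.normSq w = 1) (hre : w.re = Real.cos θ) (η : ℂ) (hη : η.im ≠ 0) :
    IntegrableOn (fun t : ℝ => w * (Real.exp (-Real.pi * R * s * (t + 1/t)) : ℂ) /
      (1 - w * (Real.exp (-Real.pi * R * s * (t + 1/t)) : ℂ)) / ((t:ℂ) + η))
      (Set.Ioc (0:ℝ) 1) := by
  have hm : 0 < 1 - Real.cos θ := by linarith [ov_cos_lt_one hθ]
  have hβ : 0 < |η.im| := abs_pos.2 hη
  apply Measure.integrableOn_of_bounded (ne_of_lt measure_Ioc_lt_top)
    ((ov_meas_f R s w).div (Complex.measurable_ofReal.add_const η)).aestronglyMeasurable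
    (M := 2/(1 - Real.cos θ) * |η.im|⁻¹)
  filter_upwards [ae_restrict_mem measurableSet_Ioc] with t ht
  rw [Pi.div_apply, norm_div]
  have hq1 := ov_q_le_one (R := R) (s := s) (t := t) hR hs.le ht.1.le
  have hq0 := (ov_q_pos R s t).le
  have habs : |η.im| ≤ ‖((t:ℂ) + η)‖ := by
    have h := Complex.abs_im_le_norm ((t:ℂ) + η)
    simpa using h
  have h1 : ‖(w * (Real.exp (-Real.pi * R * s * (t + 1/t)) : ℂ) /
      (1 - w * (Real.exp (-Real.pi * R * s * (t + 1/t)) : ℂ)))‖ ≤ 2/(1 - Real.cos θ) := by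
    refine (ov_norm_f_le hθ hw hre hq0 hq1).trans ?_
    gcongr
    nlinarith
  calc ‖(w * (Real.exp (-Real.pi * R * s * (t + 1/t)) : ℂ) /
        (1 - w * (Real.exp (-Real.pi * R * s * (t + 1/t)) : ℂ)))‖ / ‖((t:ℂ) + η)‖
      ≤ (2/(1 - Real.cos θ)) / |η.im| := div_le_div₀ (by positivity) h1 hβ habs
    _ = 2/(1 - Real.cos θ) * |η.im|⁻¹ := div_eq_mul_inv _ _

lemma ov_int_Ioi_ker (R θ s : ℝ) (hR : 0 < R) (hs : 0 < s)
    (hθ : θ ∈ Set.Ioo 0 (2 * Real.pi)) {w : ℂ}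
    (hw : Complex.normSq w = 1) (hre : w.re = Real.cos θ) (k : ℝ → ℂ) (hk : Measurable k)
    {C : ℝ} (hC : ∀ t ∈ Set.Ioi (1:ℝ), ‖(k t)‖ ≤ C * t ^ (-2:ℝ)) :
    IntegrableOn (fun t : ℝ => k t * (w * (Real.exp (-Real.pi * R * s * (t + 1/t)) : ℂ) /
      (1 - w * (Real.exp (-Real.pi * R * s * (t + 1/t)) : ℂ)))) (Set.Ioi (1:ℝ)) := by
  have hm : 0 < 1 - Real.cos θ := by linarith [ov_cos_lt_one hθ]
  apply Integrable.mono' (g := fun t => C * t ^ (-2:ℝ) * (2/(1 - Real.cos θ)))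
    (((integrableOn_Ioi_rpow_of_lt (by norm_num : (-2:ℝ) < -1) one_pos).const_mul C).mul_const _)
    (hk.mul (ov_meas_f R s w)).aestronglyMeasurable
  filter_upwards [ae_restrict_mem measurableSet_Ioi] with t ht
  rw [Pi.mul_apply, norm_mul]
  have hq1 := ov_q_le_one (R := R) (s := s) (t := t) hR hs.le (by linarith [ht.out] : (0:ℝ) ≤ t)
  have hq0 := (ov_q_pos R s t).le
  have h1 : ‖(w * (Real.exp (-Real.pi * R * s * (t + 1/t)) : ℂ) /
      (1 - w * (Real.exp (-Real.pi * R * s * (t + 1/t)) : ℂ)))‖ ≤ 2/(1 - Real.cos θ) := by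
    refine (ov_norm_f_le hθ hw hre hq0 hq1).trans ?_
    gcongr
    nlinarith
  refine mul_le_mul (hC t ht) h1 (by positivity) ?_
  have := hC t ht
  have h0 : (0:ℝ) ≤ ‖(k t)‖ := by positivity
  linarith

lemma ov_int_Ioc_rho (R θ s : ℝ) (hR : 0 < R) (hs : 0 < s)
    (hθ : θ ∈ Set.Ioo 0 (2 * Real.pi)) :
    IntegrableOn (fun t : ℝ => ovRho θ (Real.exp (-Real.pi * R * s * (t + 1/t))) / t)
      (Set.Ioc (0:ℝ) 1) := by
  have hm : 0 < 1 - Real.cos θ := by linarith [ov_cos_lt_one hθ]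
  have hA : 0 < Real.pi*R*s := by positivity
  have hmeas : Measurable (fun t : ℝ => ovRho θ (Real.exp (-Real.pi * R * s * (t + 1/t))) / t) :=
    ((ov_meas_rho θ).comp (by fun_prop)).div measurable_id
  apply Measure.integrableOn_of_bounded (ne_of_lt measure_Ioc_lt_top)
    hmeas.aestronglyMeasurable
    (M := 16/(1 - Real.cos θ)^2 * (Real.exp 1 * (Real.pi*R*s))⁻¹)
  filter_upwards [ae_restrict_mem measurableSet_Ioc] with t ht
  rw [Real.norm_eq_abs, abs_div, abs_of_pos ht.1]
  have hq1 := ov_q_le_one (R := R) (s := s) (t := t) hR hs.le ht.1.le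
  have hq0 := (ov_q_pos R s t).le
  have hc2 : (0:ℝ) ≤ 16/(1 - Real.cos θ)^2 := div_nonneg (by norm_num) (by positivity)
  calc |ovRho θ (Real.exp (-Real.pi * R * s * (t + 1/t)))| / t
      ≤ (16 * Real.exp (-Real.pi * R * s * (t + 1/t)) / (1 - Real.cos θ)^2) / t :=
        div_le_div₀ (div_nonneg (by positivity) (by positivity))
          (ovRho_abs_le hθ hq0 hq1) ht.1 le_rfl
    _ = (16/(1 - Real.cos θ)^2) * (Real.exp (-Real.pi * R * s * (t + 1/t)) / t) := by ring
    _ ≤ (16/(1 - Real.cos θ)^2) * (Real.exp (-((Real.pi*R*s)/t)) / t) :=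
        mul_le_mul_of_nonneg_left
          (div_le_div₀ (Real.exp_pos _).le (ov_q_le_exp hR hs ht.1) ht.1 le_rfl) hc2
    _ ≤ 16/(1 - Real.cos θ)^2 * (Real.exp 1 * (Real.pi*R*s))⁻¹ :=
        mul_le_mul_of_nonneg_left (ov_exp_neg_div_div_le hA ht.1) hc2

/-- The logarithmic divergences of the two correction integrals cancel the explicit
`Log(a)/ζ` term as `a = sb → 0`, so the `da`-coefficient of `d log X_m` extends to the
singular fiber of the Ooguri–Vafa space: for `R > 0`, `θ ∈ (0, 2π)`, `|b| = 1`, `ζ ≠ 0`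
with `ζ/b ∉ ℝ`, the limit as `s → 0⁺` of
`Log(sb)/ζ - ∫₀^∞ (1/(t(tb+ζ))) e^{iθ}q_s(t)/(1-e^{iθ}q_s(t)) dt
          + ∫₀^∞ (1/(t(tb-ζ))) e^{-iθ}q_s(t)/(1-e^{-iθ}q_s(t)) dt`
exists in `ℂ`. -/
theorem ov_da_part_limit_exists (R θ : ℝ) (b ζ : ℂ) (hR : 0 < R)
    (hθ : θ ∈ Set.Ioo 0 (2 * Real.pi)) (hb : ‖b‖ = 1) (hζ : ζ ≠ 0)
    (hζb : ¬ ∃ r : ℝ, (r : ℂ) = ζ / b) :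
    ∃ L : ℂ, Tendsto (fun s : ℝ =>
        Complex.log ((s : ℂ) * b) / ζ -
        (∫ t in Set.Ioi (0:ℝ), (1 / ((t : ℂ) * ((t : ℂ) * b + ζ))) *
          (Complex.exp ((θ : ℂ) * I) * (Real.exp (-Real.pi * R * s * (t + 1 / t)) : ℂ) /
            (1 - Complex.exp ((θ : ℂ) * I) *
              (Real.exp (-Real.pi * R * s * (t + 1 / t)) : ℂ)))) +
        (∫ t in Set.Ioi (0:ℝ), (1 / ((t : ℂ) * ((t : ℂ) * b - ζ))) *
          (Complex.exp (-(θ : ℂ) * I) * (Real.exp (-Real.pi * R * s * (t + 1 / t)) : ℂ) /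
            (1 - Complex.exp (-(θ : ℂ) * I) *
              (Real.exp (-Real.pi * R * s * (t + 1 / t)) : ℂ)))))
      (nhdsWithin 0 (Set.Ioi 0)) (nhds L) := by
  have hm : 0 < 1 - Real.cos θ := by linarith [ov_cos_lt_one hθ]
  have hb0 : b ≠ 0 := by intro h; rw [h] at hb; simp at hb
  set w : ℂ := ζ / b with hwdef
  have hζbw : ζ = b * w := by rw [hwdef]; field_simp
  have hwim : w.im ≠ 0 := by
    intro h
    exact hζb ⟨w.re, by apply Complex.ext <;> simp [h]⟩
  have hwim' : (-w).im ≠ 0 := by simpa using hwim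
  set wP : ℂ := Complex.exp ((θ:ℂ) * I) with hwP
  set wM : ℂ := Complex.exp (-(θ:ℂ) * I) with hwM
  have hneg : (-(θ:ℂ)) * I = ((-θ : ℝ) : ℂ) * I := by push_cast; ring
  have hPnormSq : Complex.normSq wP = 1 := by
    have : ‖wP‖ = 1 := by rw [hwP]; exact Complex.norm_exp_ofReal_mul_I θ
    rw [← Complex.sq_norm, this]; norm_num
  have hMnormSq : Complex.normSq wM = 1 := by
    have : ‖wM‖ = 1 := by rw [hwM, hneg]; exact Complex.norm_exp_ofReal_mul_I (-θ)
    rw [← Complex.sq_norm, this]; norm_num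
  have hPre : wP.re = Real.cos θ := by rw [hwP, Complex.exp_ofReal_mul_I_re]
  have hMre : wM.re = Real.cos θ := by
    rw [hwM, hneg, Complex.exp_ofReal_mul_I_re, Real.cos_neg]
  have hfactP : ∀ t : ℝ, (t:ℂ) * b + ζ = b * ((t:ℂ) + w) := by
    intro t; rw [hζbw]; ring
  have hfactM : ∀ t : ℝ, (t:ℂ) * b - ζ = b * ((t:ℂ) + -w) := by
    intro t; rw [hζbw]; ring
  have habs_shift : ∀ (η : ℂ), η.im ≠ 0 → ∀ t : ℝ, |η.im| ≤ ‖((t:ℂ) + η)‖ := by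
    intro η hη t
    have h := Complex.abs_im_le_norm ((t:ℂ) + η)
    simpa using h
  have hshift_ne : ∀ (η : ℂ), η.im ≠ 0 → ∀ t : ℝ, (t:ℂ) + η ≠ 0 := by
    intro η hη t h
    have := habs_shift η hη t
    rw [h] at this; simp at this
    exact hη this
  -- kernel bound
  have hker : ∀ (η : ℂ), η.im ≠ 0 → ∀ t : ℝ, t ∈ Set.Ioi (1:ℝ) →
      ‖(1 / ((t:ℂ) * (b * ((t:ℂ) + η))))‖ ≤
        (1 + ‖η‖ / |η.im|) * t ^ (-2:ℝ) := by
    intro η hη t ht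
    have ht1 : (1:ℝ) < t := ht
    have ht0 : (0:ℝ) < t := lt_trans one_pos ht1
    have hβ : 0 < |η.im| := abs_pos.2 hη
    have hA : 0 < ‖((t:ℂ) + η)‖ :=
      lt_of_lt_of_le hβ (habs_shift η hη t)
    have hC1 : (0:ℝ) < 1 + ‖η‖ / |η.im| := by positivity
    have htle : t ≤ (1 + ‖η‖ / |η.im|) * ‖((t:ℂ) + η)‖ := by
      have h1 : t ≤ ‖((t:ℂ) + η)‖ + ‖η‖ := by
        have h' : ‖((t:ℂ))‖ ≤ ‖((t:ℂ)+η)‖ + ‖(-η)‖ := by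
          calc ‖((t:ℂ))‖ = ‖(((t:ℂ)+η) + (-η))‖ := by ring_nf
            _ ≤ _ := norm_add_le _ _
        rw [norm_neg, Complex.norm_real, Real.norm_eq_abs, abs_of_pos ht0] at h'
        exact h'
      have h2 : ‖η‖ ≤ ‖η‖ / |η.im| * ‖((t:ℂ) + η)‖ := by
        rw [div_mul_eq_mul_div, le_div_iff₀ hβ]
        have := habs_shift η hη t
        nlinarith [norm_nonneg η]
      nlinarith
    have hrpow : t ^ (-2:ℝ) = (t^2)⁻¹ := by
      rw [show (-2:ℝ) = -((2:ℕ):ℝ) by norm_num, Real.rpow_neg ht0.le, Real.rpow_natCast]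
    rw [hrpow, norm_div, norm_one, norm_mul, norm_mul, hb, one_mul, Complex.norm_real,
      Real.norm_eq_abs, abs_of_pos ht0]
    rw [div_le_iff₀ (by positivity), ← sub_nonneg]
    have expand : (1 + ‖η‖ / |η.im|) * (t^2)⁻¹ * (t * ‖((t:ℂ) + η)‖) - 1
        = ((1 + ‖η‖ / |η.im|) * ‖((t:ℂ) + η)‖ - t) * t / t^2 := by
      field_simp
    rw [expand]
    exact div_nonneg (mul_nonneg (by linarith) ht0.le) (by positivity)
  have hkPmeas : Measurable (fun t : ℝ => 1 / ((t:ℂ) * ((t:ℂ) * b + ζ))) :=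
    measurable_const.div
      (Complex.measurable_ofReal.mul ((Complex.measurable_ofReal.mul_const b).add_const ζ))
  have hkMmeas : Measurable (fun t : ℝ => 1 / ((t:ℂ) * ((t:ℂ) * b - ζ))) := by
    have : Measurable (fun t : ℝ => (t:ℂ) * b - ζ) :=
      (Complex.measurable_ofReal.mul_const b).sub_const ζ
    exact measurable_const.div (Complex.measurable_ofReal.mul this)
  have hkerP : ∀ t ∈ Set.Ioi (1:ℝ), ‖(1 / ((t:ℂ) * ((t:ℂ) * b + ζ)))‖ ≤
      (1 + ‖w‖ / |w.im|) * t ^ (-2:ℝ) := by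
    intro t ht
    rw [hfactP t]
    exact hker w hwim t ht
  have hkerM : ∀ t ∈ Set.Ioi (1:ℝ), ‖(1 / ((t:ℂ) * ((t:ℂ) * b - ζ)))‖ ≤
      (1 + ‖(-w)‖ / |(-w).im|) * t ^ (-2:ℝ) := by
    intro t ht
    rw [hfactM t]
    exact hker (-w) hwim' t ht
  obtain ⟨L0, hL0⟩ := ov_core_limit R θ hR hθ
  have hQ1 : Tendsto (fun s : ℝ => ∫ t in Set.Ioi (1:ℝ),
      (1 / ((t:ℂ) * ((t:ℂ) * b + ζ))) * (wP * (Real.exp (-Real.pi * R * s * (t + 1/t)) : ℂ) /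
        (1 - wP * (Real.exp (-Real.pi * R * s * (t + 1/t)) : ℂ))))
      (nhdsWithin 0 (Set.Ioi 0))
      (nhds (∫ t in Set.Ioi (1:ℝ), (1 / ((t:ℂ) * ((t:ℂ) * b + ζ))) * (wP / (1 - wP)))) :=
    ov_dct_Ioi R θ hR hθ hPnormSq hPre _ hkPmeas hkerP
  have hQ2 : Tendsto (fun s : ℝ => ∫ t in Set.Ioi (1:ℝ),
      (1 / ((t:ℂ) * ((t:ℂ) * b - ζ))) * (wM * (Real.exp (-Real.pi * R * s * (t + 1/t)) : ℂ) /
        (1 - wM * (Real.exp (-Real.pi * R * s * (t + 1/t)) : ℂ))))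
      (nhdsWithin 0 (Set.Ioi 0))
      (nhds (∫ t in Set.Ioi (1:ℝ), (1 / ((t:ℂ) * ((t:ℂ) * b - ζ))) * (wM / (1 - wM)))) :=
    ov_dct_Ioi R θ hR hθ hMnormSq hMre _ hkMmeas hkerM
  have hP2 := ov_dct_Ioc R θ hR hθ hPnormSq hPre w hwim
  have hP4 := ov_dct_Ioc R θ hR hθ hMnormSq hMre (-w) hwim'
  refine ⟨(1/ζ) * (L0:ℂ) + Complex.log b / ζ
      + (1/ζ) * (∫ t in Set.Ioc (0:ℝ) 1, (wP/(1-wP))/((t:ℂ)+w))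
      + (1/ζ) * (∫ t in Set.Ioc (0:ℝ) 1, (wM/(1-wM))/((t:ℂ)+(-w)))
      - (∫ t in Set.Ioi (1:ℝ), (1 / ((t:ℂ) * ((t:ℂ) * b + ζ))) * (wP/(1-wP)))
      + (∫ t in Set.Ioi (1:ℝ), (1 / ((t:ℂ) * ((t:ℂ) * b - ζ))) * (wM/(1-wM))), ?_⟩
  have hg : Tendsto (fun s : ℝ =>
      (1/ζ) * ((Real.log s + ∫ t in Set.Ioc (0:ℝ) 1,
          ovRho θ (Real.exp (-Real.pi * R * s * (t + 1/t))) / t : ℝ) : ℂ)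
      + Complex.log b / ζ
      + (1/ζ) * (∫ t in Set.Ioc (0:ℝ) 1,
          wP * (Real.exp (-Real.pi * R * s * (t + 1/t)) : ℂ) /
            (1 - wP * (Real.exp (-Real.pi * R * s * (t + 1/t)) : ℂ)) / ((t:ℂ) + w))
      + (1/ζ) * (∫ t in Set.Ioc (0:ℝ) 1,
          wM * (Real.exp (-Real.pi * R * s * (t + 1/t)) : ℂ) /
            (1 - wM * (Real.exp (-Real.pi * R * s * (t + 1/t)) : ℂ)) / ((t:ℂ) + (-w)))
      - (∫ t in Set.Ioi (1:ℝ), (1 / ((t:ℂ) * ((t:ℂ) * b + ζ))) *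
          (wP * (Real.exp (-Real.pi * R * s * (t + 1/t)) : ℂ) /
            (1 - wP * (Real.exp (-Real.pi * R * s * (t + 1/t)) : ℂ))))
      + (∫ t in Set.Ioi (1:ℝ), (1 / ((t:ℂ) * ((t:ℂ) * b - ζ))) *
          (wM * (Real.exp (-Real.pi * R * s * (t + 1/t)) : ℂ) /
            (1 - wM * (Real.exp (-Real.pi * R * s * (t + 1/t)) : ℂ)))))
      (nhdsWithin 0 (Set.Ioi 0))
      (nhds ((1/ζ) * (L0:ℂ) + Complex.log b / ζ
      + (1/ζ) * (∫ t in Set.Ioc (0:ℝ) 1, (wP/(1-wP))/((t:ℂ)+w))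
      + (1/ζ) * (∫ t in Set.Ioc (0:ℝ) 1, (wM/(1-wM))/((t:ℂ)+(-w)))
      - (∫ t in Set.Ioi (1:ℝ), (1 / ((t:ℂ) * ((t:ℂ) * b + ζ))) * (wP/(1-wP)))
      + (∫ t in Set.Ioi (1:ℝ), (1 / ((t:ℂ) * ((t:ℂ) * b - ζ))) * (wM/(1-wM))))) := by
    exact (((((hL0.ofReal.const_mul (1/ζ)).add tendsto_const_nhds).add
      (hP2.const_mul (1/ζ))).add (hP4.const_mul (1/ζ))).sub hQ1).add hQ2
  apply Tendsto.congr' ?_ hg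
  filter_upwards [Ioo_mem_nhdsGT_of_mem (Set.mem_Ico.2 ⟨le_refl (0:ℝ), one_pos⟩)] with s hs
  obtain ⟨hs0, hs1⟩ := hs
  have intP1 := ov_int_Ioc_div_t R θ s hR hs0 hθ hPnormSq hPre
  have intP3 := ov_int_Ioc_div_t R θ s hR hs0 hθ hMnormSq hMre
  have intP2 := ov_int_Ioc_div_shift R θ s hR hs0 hθ hPnormSq hPre w hwim
  have intP4 := ov_int_Ioc_div_shift R θ s hR hs0 hθ hMnormSq hMre (-w) hwim'
  have intQ1 : IntegrableOn (fun t : ℝ => (1 / ((t:ℂ) * ((t:ℂ) * b + ζ))) *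
      (wP * (Real.exp (-Real.pi * R * s * (t + 1/t)) : ℂ) /
        (1 - wP * (Real.exp (-Real.pi * R * s * (t + 1/t)) : ℂ)))) (Set.Ioi (1:ℝ)) :=
    ov_int_Ioi_ker R θ s hR hs0 hθ hPnormSq hPre _ hkPmeas hkerP
  have intQ2 : IntegrableOn (fun t : ℝ => (1 / ((t:ℂ) * ((t:ℂ) * b - ζ))) *
      (wM * (Real.exp (-Real.pi * R * s * (t + 1/t)) : ℂ) /
        (1 - wM * (Real.exp (-Real.pi * R * s * (t + 1/t)) : ℂ)))) (Set.Ioi (1:ℝ)) :=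
    ov_int_Ioi_ker R θ s hR hs0 hθ hMnormSq hMre _ hkMmeas hkerM
  have hw0 : w ≠ 0 := by
    intro h; rw [h, mul_zero] at hζbw; exact hζ hζbw
  -- pointwise identities on Ioc 0 1
  have hEqP : Set.EqOn (fun t : ℝ => (1 / ((t:ℂ) * ((t:ℂ) * b + ζ))) *
      (wP * (Real.exp (-Real.pi * R * s * (t + 1/t)) : ℂ) /
        (1 - wP * (Real.exp (-Real.pi * R * s * (t + 1/t)) : ℂ))))
      (fun t : ℝ => (1/ζ) * (wP * (Real.exp (-Real.pi * R * s * (t + 1/t)) : ℂ) /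
        (1 - wP * (Real.exp (-Real.pi * R * s * (t + 1/t)) : ℂ)) / (t:ℂ))
      - (1/ζ) * (wP * (Real.exp (-Real.pi * R * s * (t + 1/t)) : ℂ) /
        (1 - wP * (Real.exp (-Real.pi * R * s * (t + 1/t)) : ℂ)) / ((t:ℂ) + w)))
      (Set.Ioc (0:ℝ) 1) := by
    intro t ht
    have ht0 : ((t:ℝ):ℂ) ≠ 0 := by exact_mod_cast ne_of_gt ht.1
    have htw := hshift_ne w hwim t
    simp only
    rw [hfactP t, hζbw]
    generalize (wP * (Real.exp (-Real.pi * R * s * (t + 1/t)) : ℂ) /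
        (1 - wP * (Real.exp (-Real.pi * R * s * (t + 1/t)) : ℂ))) = F
    field_simp
    ring
  have hEqM : Set.EqOn (fun t : ℝ => (1 / ((t:ℂ) * ((t:ℂ) * b - ζ))) *
      (wM * (Real.exp (-Real.pi * R * s * (t + 1/t)) : ℂ) /
        (1 - wM * (Real.exp (-Real.pi * R * s * (t + 1/t)) : ℂ))))
      (fun t : ℝ => (1/ζ) * (wM * (Real.exp (-Real.pi * R * s * (t + 1/t)) : ℂ) /
        (1 - wM * (Real.exp (-Real.pi * R * s * (t + 1/t)) : ℂ)) / ((t:ℂ) + (-w)))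
      - (1/ζ) * (wM * (Real.exp (-Real.pi * R * s * (t + 1/t)) : ℂ) /
        (1 - wM * (Real.exp (-Real.pi * R * s * (t + 1/t)) : ℂ)) / (t:ℂ)))
      (Set.Ioc (0:ℝ) 1) := by
    intro t ht
    have ht0 : ((t:ℝ):ℂ) ≠ 0 := by exact_mod_cast ne_of_gt ht.1
    have htw := hshift_ne (-w) hwim' t
    simp only
    rw [hfactM t, hζbw]
    generalize (wM * (Real.exp (-Real.pi * R * s * (t + 1/t)) : ℂ) /
        (1 - wM * (Real.exp (-Real.pi * R * s * (t + 1/t)) : ℂ))) = F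
    field_simp
    ring
  have intQ1Ioc : IntegrableOn (fun t : ℝ => (1 / ((t:ℂ) * ((t:ℂ) * b + ζ))) *
      (wP * (Real.exp (-Real.pi * R * s * (t + 1/t)) : ℂ) /
        (1 - wP * (Real.exp (-Real.pi * R * s * (t + 1/t)) : ℂ)))) (Set.Ioc (0:ℝ) 1) :=
    (IntegrableOn.congr_fun ((intP1.const_mul (1/ζ)).sub (intP2.const_mul (1/ζ)))
      hEqP.symm measurableSet_Ioc)
  have intQ2Ioc : IntegrableOn (fun t : ℝ => (1 / ((t:ℂ) * ((t:ℂ) * b - ζ))) *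
      (wM * (Real.exp (-Real.pi * R * s * (t + 1/t)) : ℂ) /
        (1 - wM * (Real.exp (-Real.pi * R * s * (t + 1/t)) : ℂ)))) (Set.Ioc (0:ℝ) 1) :=
    (IntegrableOn.congr_fun ((intP4.const_mul (1/ζ)).sub (intP3.const_mul (1/ζ)))
      hEqM.symm measurableSet_Ioc)
  have hSplitP : (∫ t in Set.Ioi (0:ℝ), (1 / ((t:ℂ) * ((t:ℂ) * b + ζ))) *
      (wP * (Real.exp (-Real.pi * R * s * (t + 1/t)) : ℂ) /
        (1 - wP * (Real.exp (-Real.pi * R * s * (t + 1/t)) : ℂ))))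
      = (∫ t in Set.Ioc (0:ℝ) 1, (1 / ((t:ℂ) * ((t:ℂ) * b + ζ))) *
      (wP * (Real.exp (-Real.pi * R * s * (t + 1/t)) : ℂ) /
        (1 - wP * (Real.exp (-Real.pi * R * s * (t + 1/t)) : ℂ))))
      + ∫ t in Set.Ioi (1:ℝ), (1 / ((t:ℂ) * ((t:ℂ) * b + ζ))) *
      (wP * (Real.exp (-Real.pi * R * s * (t + 1/t)) : ℂ) /
        (1 - wP * (Real.exp (-Real.pi * R * s * (t + 1/t)) : ℂ))) := by
    rw [← Set.Ioc_union_Ioi_eq_Ioi (zero_le_one (α := ℝ))]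
    exact setIntegral_union (Set.Ioc_disjoint_Ioi le_rfl) measurableSet_Ioi intQ1Ioc intQ1
  have hSplitM : (∫ t in Set.Ioi (0:ℝ), (1 / ((t:ℂ) * ((t:ℂ) * b - ζ))) *
      (wM * (Real.exp (-Real.pi * R * s * (t + 1/t)) : ℂ) /
        (1 - wM * (Real.exp (-Real.pi * R * s * (t + 1/t)) : ℂ))))
      = (∫ t in Set.Ioc (0:ℝ) 1, (1 / ((t:ℂ) * ((t:ℂ) * b - ζ))) *
      (wM * (Real.exp (-Real.pi * R * s * (t + 1/t)) : ℂ) /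
        (1 - wM * (Real.exp (-Real.pi * R * s * (t + 1/t)) : ℂ))))
      + ∫ t in Set.Ioi (1:ℝ), (1 / ((t:ℂ) * ((t:ℂ) * b - ζ))) *
      (wM * (Real.exp (-Real.pi * R * s * (t + 1/t)) : ℂ) /
        (1 - wM * (Real.exp (-Real.pi * R * s * (t + 1/t)) : ℂ))) := by
    rw [← Set.Ioc_union_Ioi_eq_Ioi (zero_le_one (α := ℝ))]
    exact setIntegral_union (Set.Ioc_disjoint_Ioi le_rfl) measurableSet_Ioi intQ2Ioc intQ2
  have hIocP : (∫ t in Set.Ioc (0:ℝ) 1, (1 / ((t:ℂ) * ((t:ℂ) * b + ζ))) *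
      (wP * (Real.exp (-Real.pi * R * s * (t + 1/t)) : ℂ) /
        (1 - wP * (Real.exp (-Real.pi * R * s * (t + 1/t)) : ℂ))))
      = (1/ζ) * (∫ t in Set.Ioc (0:ℝ) 1,
          wP * (Real.exp (-Real.pi * R * s * (t + 1/t)) : ℂ) /
            (1 - wP * (Real.exp (-Real.pi * R * s * (t + 1/t)) : ℂ)) / (t:ℂ))
      - (1/ζ) * (∫ t in Set.Ioc (0:ℝ) 1,
          wP * (Real.exp (-Real.pi * R * s * (t + 1/t)) : ℂ) /
            (1 - wP * (Real.exp (-Real.pi * R * s * (t + 1/t)) : ℂ)) / ((t:ℂ) + w)) := by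
    rw [setIntegral_congr_fun measurableSet_Ioc hEqP,
      integral_sub (intP1.const_mul _) (intP2.const_mul _),
      integral_const_mul, integral_const_mul]
  have hIocM : (∫ t in Set.Ioc (0:ℝ) 1, (1 / ((t:ℂ) * ((t:ℂ) * b - ζ))) *
      (wM * (Real.exp (-Real.pi * R * s * (t + 1/t)) : ℂ) /
        (1 - wM * (Real.exp (-Real.pi * R * s * (t + 1/t)) : ℂ))))
      = (1/ζ) * (∫ t in Set.Ioc (0:ℝ) 1,
          wM * (Real.exp (-Real.pi * R * s * (t + 1/t)) : ℂ) /
            (1 - wM * (Real.exp (-Real.pi * R * s * (t + 1/t)) : ℂ)) / ((t:ℂ) + (-w)))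
      - (1/ζ) * (∫ t in Set.Ioc (0:ℝ) 1,
          wM * (Real.exp (-Real.pi * R * s * (t + 1/t)) : ℂ) /
            (1 - wM * (Real.exp (-Real.pi * R * s * (t + 1/t)) : ℂ)) / (t:ℂ)) := by
    rw [setIntegral_congr_fun measurableSet_Ioc hEqM,
      integral_sub (intP4.const_mul _) (intP3.const_mul _),
      integral_const_mul, integral_const_mul]
  have hsum : (∫ t in Set.Ioc (0:ℝ) 1,
          wP * (Real.exp (-Real.pi * R * s * (t + 1/t)) : ℂ) /
            (1 - wP * (Real.exp (-Real.pi * R * s * (t + 1/t)) : ℂ)) / (t:ℂ))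
      + (∫ t in Set.Ioc (0:ℝ) 1,
          wM * (Real.exp (-Real.pi * R * s * (t + 1/t)) : ℂ) /
            (1 - wM * (Real.exp (-Real.pi * R * s * (t + 1/t)) : ℂ)) / (t:ℂ))
      = -(((∫ t in Set.Ioc (0:ℝ) 1,
          ovRho θ (Real.exp (-Real.pi * R * s * (t + 1/t))) / t : ℝ)) : ℂ) := by
    rw [← integral_add intP1 intP3]
    have hEqS : Set.EqOn (fun t : ℝ =>
        wP * (Real.exp (-Real.pi * R * s * (t + 1/t)) : ℂ) /
            (1 - wP * (Real.exp (-Real.pi * R * s * (t + 1/t)) : ℂ)) / (t:ℂ)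
        + wM * (Real.exp (-Real.pi * R * s * (t + 1/t)) : ℂ) /
            (1 - wM * (Real.exp (-Real.pi * R * s * (t + 1/t)) : ℂ)) / (t:ℂ))
        (fun t : ℝ => ((-(ovRho θ (Real.exp (-Real.pi * R * s * (t + 1/t))) / t) : ℝ) : ℂ))
        (Set.Ioc (0:ℝ) 1) := by
      intro t ht
      have h0 := (ov_q_pos R s t).le
      have h1 := ov_q_le_one (R := R) (s := s) (t := t) hR hs0.le ht.1.le
      have hid := ov_sum_identity hθ h0 h1
      rw [← hwP, ← hwM] at hid
      simp only
      rw [← add_div, hid]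
      push_cast
      ring
    have hOf : (∫ t in Set.Ioc (0:ℝ) 1,
        ((-(ovRho θ (Real.exp (-Real.pi * R * s * (t + 1/t))) / t) : ℝ) : ℂ))
        = ((∫ t in Set.Ioc (0:ℝ) 1,
            -(ovRho θ (Real.exp (-Real.pi * R * s * (t + 1/t))) / t) : ℝ) : ℂ) :=
      integral_ofReal
    rw [setIntegral_congr_fun measurableSet_Ioc hEqS, hOf, integral_neg, Complex.ofReal_neg]
  have hlog : Complex.log ((s:ℂ) * b) = ((Real.log s : ℝ) : ℂ) + Complex.log b :=
    Complex.log_ofReal_mul hs0 hb0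
  rw [hlog, hSplitP, hSplitM, hIocP, hIocM, Complex.ofReal_add]
  linear_combination (1/ζ) * hsum
end

section
/- Let R > 0, θ ∈ (0, 2π), b ∈ ℂ with |b| = 1, and ζ ∈ ℂ \ {0} with ζ/b ∉ ℝ. Then lim_{s → 0⁺} ∫₀^∞ (1/(t(tb + ζ)))·( e^{−πRs/t}(1 − e^{−πRst}) / (1 − e^{iθ} e^{−πRs(t + 1/t)}) ) dt = 0. -/
open Complex Filter MeasureTheory

set_option maxHeartbeats 1600000 in
/-- For `R > 0`, `θ ∈ (0, 2π)`, `|b| = 1`, and `ζ ≠ 0` with `ζ/b ∉ ℝ`,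
`lim_{s → 0⁺} ∫₀^∞ (1/(t(tb+ζ)))·(e^{-πRs/t}(1 - e^{-πRst})/(1 - e^{iθ}e^{-πRs(t+1/t)})) dt
  = 0`. -/
theorem ov_dominated_convergence_reduction (R θ : ℝ) (b ζ : ℂ) (hR : 0 < R)
    (hθ : θ ∈ Set.Ioo 0 (2 * Real.pi)) (hb : ‖b‖ = 1) (hζ : ζ ≠ 0)
    (hζb : ¬ ∃ r : ℝ, (r : ℂ) = ζ / b) :
    Tendsto (fun s : ℝ =>
        ∫ t in Set.Ioi (0:ℝ), (1 / ((t : ℂ) * ((t : ℂ) * b + ζ))) *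
          ((Real.exp (-Real.pi * R * s / t) : ℂ) * (1 - (Real.exp (-Real.pi * R * s * t) : ℂ)) /
            (1 - Complex.exp ((θ : ℂ) * I) *
              (Real.exp (-Real.pi * R * s * (t + 1 / t)) : ℂ))))
      (nhdsWithin 0 (Set.Ioi 0)) (nhds 0) := by
  obtain ⟨hθ0, hθ2⟩ := hθ
  have hπ : (0:ℝ) < Real.pi := Real.pi_pos
  have hexp_le_one : ∀ x : ℝ, x ≤ 0 → Real.exp x ≤ 1 := fun x hx => by
    simpa using Real.exp_le_exp.mpr hx
  -- e^{iθ} ≠ 1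
  have hE1 : Complex.exp ((θ:ℂ) * I) ≠ 1 := by
    intro h
    rw [Complex.exp_eq_one_iff] at h
    obtain ⟨n, hn⟩ := h
    have h2 : (θ:ℂ) * I = ((n:ℂ) * (2*Real.pi)) * I := by rw [hn]; ring
    have h3 : (θ:ℂ) = (n:ℂ) * (2*Real.pi) := mul_right_cancel₀ Complex.I_ne_zero h2
    have h4 : θ = (n:ℝ) * (2*Real.pi) := by exact_mod_cast h3
    have hn0 : (0:ℝ) < (n:ℝ) := by nlinarith
    have hn1 : (1:ℝ) ≤ (n:ℝ) := by exact_mod_cast (by exact_mod_cast hn0 : (0:ℤ) < n)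
    nlinarith
  -- uniform lower bound for the denominator
  obtain ⟨c, hc, hcle⟩ : ∃ c, 0 < c ∧ ∀ x : ℝ, 0 ≤ x → x ≤ 1 →
      c ≤ ‖1 - Complex.exp ((θ:ℂ)*I) * (x:ℂ)‖ := by
    obtain ⟨x₀, hx₀, hmin⟩ := isCompact_Icc.exists_isMinOn (Set.nonempty_Icc.mpr zero_le_one)
      ((continuous_norm.comp (by fun_prop : Continuous fun x:ℝ =>
        1 - Complex.exp ((θ:ℂ)*I) * (x:ℂ))).continuousOn)
    refine ⟨_, ?_, fun x h0 h1 => hmin ⟨h0, h1⟩⟩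
    have hne : (1:ℂ) - Complex.exp ((θ:ℂ)*I) * (x₀:ℂ) ≠ 0 := by
      intro h
      have hy : Complex.exp ((θ:ℂ)*I) * (x₀:ℂ) = 1 := by linear_combination -h
      have habs : ‖Complex.exp ((θ:ℂ)*I) * (x₀:ℂ)‖ = 1 := by rw [hy]; simp
      rw [norm_mul, Complex.norm_exp] at habs
      simp [Complex.norm_real] at habs
      rw [_root_.abs_of_nonneg hx₀.1] at habs
      rw [habs] at hy
      simp at hy
      exact hE1 hy
    exact norm_pos_iff.mpr hne
  -- lower bound for |tb + ζ|
  have hb0 : b ≠ 0 := by intro h; simp [h] at hb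
  have himζb : (ζ/b).im ≠ 0 := by
    intro h
    exact hζb ⟨(ζ/b).re, by apply Complex.ext <;> simp [h]⟩
  set d : ℝ := |(ζ/b).im| with hd
  clear_value d
  have hd0 : 0 < d := hd ▸ abs_pos.2 himζb
  have hdle : ∀ t : ℝ, d ≤ ‖(t:ℂ)*b + ζ‖ := by
    intro t
    have hfac : (t:ℂ)*b + ζ = b * ((t:ℂ) + ζ/b) := by field_simp
    rw [hfac, norm_mul, hb, one_mul]
    calc d = |((t:ℂ) + ζ/b).im| := by simp [hd]
      _ ≤ ‖(t:ℂ) + ζ/b‖ := Complex.abs_im_le_norm _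
  set T : ℝ := max 1 (2 * ‖ζ‖) with hT
  clear_value T
  have hT1 : (1:ℝ) ≤ T := hT ▸ le_max_left _ _
  have hT0 : (0:ℝ) < T := lt_of_lt_of_le one_pos hT1
  have hTζ : 2 * ‖ζ‖ ≤ T := hT ▸ le_max_right _ _
  have hlarge : ∀ t : ℝ, T ≤ t → t / 2 ≤ ‖(t:ℂ)*b + ζ‖ := by
    intro t htT
    have ht0 : 0 < t := lt_of_lt_of_le hT0 htT
    have h1 : ‖(t:ℂ)*b‖ - ‖-ζ‖ ≤ ‖(t:ℂ)*b - -ζ‖ := norm_sub_norm_le _ _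
    have h2 : ‖(t:ℂ)*b‖ = t := by
      rw [norm_mul, Complex.norm_real, Real.norm_eq_abs, _root_.abs_of_pos ht0,
        hb, mul_one]
    rw [sub_neg_eq_add, norm_neg, h2] at h1
    have hζt : ‖ζ‖ ≤ t / 2 := by linarith
    linarith
  set C : ℝ := max (Real.pi * R * T^2 / (c*d)) (2/c) with hC
  clear_value C
  have hCpos : 0 < C := hC ▸ lt_max_of_lt_right (by positivity)
  have hC1 : Real.pi * R * T^2 / (c*d) ≤ C := hC ▸ le_max_left _ _
  have hC2 : 2/c ≤ C := hC ▸ le_max_right _ _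
  -- the dominating function
  set bound : ℝ → ℝ := fun t => C * min 1 (1/t^2) with hbound_def
  have hbound_int : IntegrableOn bound (Set.Ioi (0:ℝ)) := by
    have hmeas : Measurable fun t : ℝ => min 1 (1/t^2) := by
      exact Measurable.min measurable_const (measurable_const.div (measurable_id.pow_const 2))
    have h1 : IntegrableOn (fun t : ℝ => min 1 (1/t^2)) (Set.Ioc (0:ℝ) 1) := by
      apply Integrable.mono' (integrable_const (1:ℝ)) hmeas.aestronglyMeasurable
      filter_upwards with t
      rw [Real.norm_eq_abs, _root_.abs_of_nonneg (le_min zero_le_one (by positivity))]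
      exact min_le_left _ _
    have h2 : IntegrableOn (fun t : ℝ => min 1 (1/t^2)) (Set.Ioi (1:ℝ)) := by
      apply (integrableOn_Ioi_rpow_of_lt (by norm_num : (-2:ℝ) < -1) one_pos).congr_fun
        ?_ measurableSet_Ioi
      intro t ht
      show t ^ (-2:ℝ) = min 1 (1/t^2)
      have ht0 : (0:ℝ) < t := lt_trans one_pos ht
      have ht1 : (1:ℝ) ≤ t := ht.le
      rw [Real.rpow_neg ht0.le, show (2:ℝ) = ((2:ℕ):ℝ) by norm_num, Real.rpow_natCast]
      rw [min_eq_right (by rw [div_le_one (by positivity)]; nlinarith), one_div]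
    have : IntegrableOn (fun t : ℝ => min 1 (1/t^2)) (Set.Ioi (0:ℝ)) := by
      rw [show Set.Ioi (0:ℝ) = Set.Ioc 0 1 ∪ Set.Ioi 1 from
        (Set.Ioc_union_Ioi_eq_Ioi zero_le_one).symm]
      exact h1.union h2
    exact this.const_mul C
  -- measurability
  have hmeas : ∀ s : ℝ, AEStronglyMeasurable (fun t : ℝ =>
      (1 / ((t : ℂ) * ((t : ℂ) * b + ζ))) *
        ((Real.exp (-Real.pi * R * s / t) : ℂ) * (1 - (Real.exp (-Real.pi * R * s * t) : ℂ)) /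
          (1 - Complex.exp ((θ : ℂ) * I) *
            (Real.exp (-Real.pi * R * s * (t + 1 / t)) : ℂ))))
      (volume.restrict (Set.Ioi (0:ℝ))) := by
    intro s
    apply Measurable.aestronglyMeasurable
    have m1 : Measurable fun t : ℝ => (t : ℂ) := Complex.measurable_ofReal
    have me1 : Measurable fun t : ℝ => (Real.exp (-Real.pi * R * s / t) : ℂ) :=
      Complex.measurable_ofReal.comp (Real.measurable_exp.comp
        (measurable_const.div measurable_id))
    have me2 : Measurable fun t : ℝ => (Real.exp (-Real.pi * R * s * t) : ℂ) :=
      Complex.measurable_ofReal.comp (Real.measurable_exp.comp (measurable_id.const_mul _))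
    have me3 : Measurable fun t : ℝ => (Real.exp (-Real.pi * R * s * (t + 1 / t)) : ℂ) :=
      Complex.measurable_ofReal.comp (Real.measurable_exp.comp
        ((measurable_id.add (measurable_const.div measurable_id)).const_mul _))
    exact (Measurable.div measurable_const
        (m1.mul ((m1.mul measurable_const).add measurable_const))).mul
      ((me1.mul (measurable_const.sub me2)).div (measurable_const.sub (me3.const_mul _)))
  -- uniform bound
  have hbnd : ∀ᶠ s in nhdsWithin (0:ℝ) (Set.Ioi 0),
      ∀ᵐ (t : ℝ) ∂(volume.restrict (Set.Ioi (0:ℝ))), ‖(1 / ((t : ℂ) * ((t : ℂ) * b + ζ))) *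
        ((Real.exp (-Real.pi * R * s / t) : ℂ) * (1 - (Real.exp (-Real.pi * R * s * t) : ℂ)) /
          (1 - Complex.exp ((θ : ℂ) * I) *
            (Real.exp (-Real.pi * R * s * (t + 1 / t)) : ℂ)))‖ ≤ bound t := by
    filter_upwards [Ioo_mem_nhdsGT_of_mem (Set.mem_Ico.mpr ⟨le_refl (0:ℝ), one_pos⟩)]
      with s hs
    rw [ae_restrict_iff' measurableSet_Ioi]
    filter_upwards with t ht
    obtain ⟨hs0, hs1⟩ := hs
    have ht0 : (0:ℝ) < t := ht
    set A : ℝ := Real.exp (-Real.pi * R * s / t) with hA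
    set B : ℝ := Real.exp (-Real.pi * R * s * t) with hB
    set X : ℝ := Real.exp (-Real.pi * R * s * (t + 1 / t)) with hX
    have hA0 : 0 < A := Real.exp_pos _
    have hA1 : A ≤ 1 := hexp_le_one _ (by
      rw [show -Real.pi * R * s / t = -(Real.pi * R * s / t) by ring]
      exact neg_nonpos.mpr (by positivity))
    have hB1 : B ≤ 1 := hexp_le_one _ (by
      rw [show -Real.pi * R * s * t = -(Real.pi * R * s * t) by ring]
      exact neg_nonpos.mpr (by positivity))
    have h1B0 : 0 ≤ 1 - B := by linarith
    have h1B1 : 1 - B ≤ 1 := by linarith [Real.exp_pos (-Real.pi * R * s * t)]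
    have h1Ble : 1 - B ≤ Real.pi * R * s * t := by
      have := Real.add_one_le_exp (-Real.pi * R * s * t)
      rw [← hB] at this
      linarith
    have hX0 : (0:ℝ) ≤ X := (Real.exp_pos _).le
    have hX1 : X ≤ 1 := hexp_le_one _ (by
      rw [show -Real.pi * R * s * (t + 1/t) = -(Real.pi * R * s * (t + 1/t)) by ring]
      exact neg_nonpos.mpr (by positivity))
    have hden : c ≤ ‖1 - Complex.exp ((θ:ℂ)*I) * (X:ℂ)‖ := hcle X hX0 hX1
    set N1 : ℝ := ‖(t:ℂ)*b + ζ‖ with hN1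
    set N2 : ℝ := ‖1 - Complex.exp ((θ:ℂ)*I) * (X:ℂ)‖ with hN2
    clear_value N1 N2
    have hN1d : d ≤ N1 := hN1 ▸ hdle t
    have hN10 : 0 < N1 := lt_of_lt_of_le hd0 hN1d
    have hN20 : 0 < N2 := lt_of_lt_of_le hc (hN2 ▸ hden)
    have hcast : (1:ℂ) - (B:ℂ) = ((1 - B : ℝ):ℂ) := by push_cast; ring
    have hnorm : ‖(1 / ((t:ℂ) * ((t:ℂ)*b + ζ))) * ((A:ℂ) * (1 - (B:ℂ)) /
        (1 - Complex.exp ((θ:ℂ)*I) * (X:ℂ)))‖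
        = (A * (1 - B)) / (t * N1 * N2) := by
      rw [hcast]
      simp only [norm_mul, norm_div, norm_one, Complex.norm_real, Real.norm_eq_abs,
        ← hN1, ← hN2]
      rw [_root_.abs_of_pos ht0, _root_.abs_of_pos hA0, _root_.abs_of_nonneg h1B0]
      field_simp
    rw [hnorm, hbound_def]
    rcases le_or_gt t T with htT | htT
    · have hmin_ge : 1/T^2 ≤ min 1 (1/t^2) := by
        apply le_min
        · rw [div_le_one (by positivity)]; nlinarith
        · apply one_div_le_one_div_of_le (by positivity)
          nlinarith
      calc (A * (1 - B)) / (t * N1 * N2) ≤ (Real.pi * R * t) / (t * d * c) := by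
            apply div_le_div₀ (by positivity) ?_ (by positivity) ?_
            · calc A * (1 - B) ≤ 1 * (Real.pi * R * s * t) :=
                    mul_le_mul hA1 h1Ble h1B0 zero_le_one
                _ ≤ Real.pi * R * t := by nlinarith
            · gcongr
        _ = (Real.pi * R * T^2 / (c*d)) * (1/T^2) := by field_simp
        _ ≤ C * min 1 (1/t^2) :=
            mul_le_mul hC1 hmin_ge (by positivity) hCpos.le
    · have ht1 : (1:ℝ) ≤ t := le_trans hT1 htT.le
      have hmin_eq : min 1 (1/t^2) = 1/t^2 :=
        min_eq_right (by rw [div_le_one (by positivity)]; nlinarith)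
      have hN1t : t/2 ≤ N1 := hN1 ▸ hlarge t htT.le
      calc (A * (1 - B)) / (t * N1 * N2) ≤ 1 / (t * (t/2) * c) := by
            apply div_le_div₀ (by norm_num) ?_ (by positivity) ?_
            · nlinarith
            · gcongr
        _ = (2/c) * (1/t^2) := by field_simp
        _ ≤ C * min 1 (1/t^2) := by
            rw [hmin_eq]
            exact mul_le_mul_of_nonneg_right hC2 (by positivity)
  -- pointwise limit
  have hlim : ∀ᵐ (t : ℝ) ∂(volume.restrict (Set.Ioi (0:ℝ))),
      Tendsto (fun s : ℝ => (1 / ((t : ℂ) * ((t : ℂ) * b + ζ))) *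
        ((Real.exp (-Real.pi * R * s / t) : ℂ) * (1 - (Real.exp (-Real.pi * R * s * t) : ℂ)) /
          (1 - Complex.exp ((θ : ℂ) * I) *
            (Real.exp (-Real.pi * R * s * (t + 1 / t)) : ℂ))))
        (nhdsWithin (0:ℝ) (Set.Ioi 0)) (nhds 0) := by
    rw [ae_restrict_iff' measurableSet_Ioi]
    filter_upwards with t
    intro ht
    have ht0 : (0:ℝ) < t := ht
    have hnum : Tendsto (fun s : ℝ => (Real.exp (-Real.pi*R*s/t) : ℂ) *
        (1 - (Real.exp (-Real.pi*R*s*t) : ℂ))) (nhds 0) (nhds 0) := by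
      have hco : Continuous fun s : ℝ => (Real.exp (-Real.pi*R*s/t) : ℂ) *
          (1 - (Real.exp (-Real.pi*R*s*t) : ℂ)) := by fun_prop
      have := hco.tendsto 0
      simpa using this
    have hdenc : Tendsto (fun s : ℝ => 1 - Complex.exp ((θ:ℂ)*I) *
        (Real.exp (-Real.pi*R*s*(t+1/t)) : ℂ)) (nhds 0)
        (nhds (1 - Complex.exp ((θ:ℂ)*I))) := by
      have hco : Continuous fun s : ℝ => 1 - Complex.exp ((θ:ℂ)*I) *
          (Real.exp (-Real.pi*R*s*(t+1/t)) : ℂ) := by fun_prop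
      have := hco.tendsto 0
      simpa using this
    have hdne : (1:ℂ) - Complex.exp ((θ:ℂ)*I) ≠ 0 := sub_ne_zero.mpr (Ne.symm hE1)
    have := Filter.Tendsto.const_mul (1 / ((t:ℂ) * ((t:ℂ)*b + ζ))) (hnum.div hdenc hdne)
    simpa using this.mono_left nhdsWithin_le_nhds
  have := MeasureTheory.tendsto_integral_filter_of_dominated_convergence
    (μ := volume.restrict (Set.Ioi (0:ℝ))) (l := nhdsWithin (0:ℝ) (Set.Ioi 0))
    (f := fun _ : ℝ => (0:ℂ)) bound (Eventually.of_forall hmeas) hbnd hbound_int hlim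
  simpa using this
end
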